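/- arXiv:1905.12074 — 4 statements merged into one kernel-verified Lean document; each statement's English description precedes it below -/
import Mathlib

section
/- Let r ∈ ℕ, r ≥ 1, and let χ satisfy M_r(χ) < ∞ and the moment condition of order r with constant c. Then for every f ∈ C^r(ℝ²) and every w > 0, ‖G_w f − f‖_∞ ≤ (M_r(χ) / (r! · w^r)) · H, where H := Σ_{j=0}^{r} binom(r,j) · ‖∂^r f / ∂x^{r−j} ∂y^{j}‖_∞ is the sum of the sup-norms of all partial derivatives of f of total order r weighted by binomial coefficients. -/
open MeasureTheory Filter
open scoped ENNReal BigOperators Topology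

noncomputable def absMoment (χ : ℝ × ℝ → ℝ) (p₁ p₂ : ℕ) : ℝ≥0∞ :=
  ⨆ u : ℝ, ⨆ v : ℝ, ∑' k : ℤ, ∑' j : ℤ,
    ENNReal.ofReal (|χ (u - (k : ℝ), v - (j : ℝ))| * |u - (k : ℝ)| ^ p₁ * |v - (j : ℝ)| ^ p₂)

noncomputable def Mmoment (χ : ℝ × ℝ → ℝ) (η : ℕ) : ℝ≥0∞ :=
  ⨆ p : {p : ℕ × ℕ // p.1 + p.2 = η}, absMoment χ p.1.1 p.1.2

def PartitionOfUnity2 (χ : ℝ × ℝ → ℝ) : Prop :=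
  ∀ u v : ℝ, ∑' k : ℤ, ∑' j : ℤ, χ (u - (k : ℝ), v - (j : ℝ)) = 1

def MomentCondition (χ : ℝ × ℝ → ℝ) (r : ℕ) (c : ℝ) : Prop :=
  (∀ u v : ℝ, ∀ p₁ p₂ : ℕ, 1 ≤ p₁ + p₂ → p₁ + p₂ ≤ r - 1 →
    ∑' k : ℤ, ∑' j : ℤ, χ (u - (k : ℝ), v - (j : ℝ)) * (u - (k : ℝ)) ^ p₁ * (v - (j : ℝ)) ^ p₂ = 0) ∧
  (∀ u v : ℝ, ∀ p₁ p₂ : ℕ, p₁ + p₂ = r →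
    ∑' k : ℤ, ∑' j : ℤ, χ (u - (k : ℝ), v - (j : ℝ)) * (u - (k : ℝ)) ^ p₁ * (v - (j : ℝ)) ^ p₂ = c)

noncomputable def Gop (χ : ℝ × ℝ → ℝ) (w : ℝ) (f : ℝ × ℝ → ℝ) (x y : ℝ) : ℝ :=
  ∑' k : ℤ, ∑' j : ℤ, χ (w * x - (k : ℝ), w * y - (j : ℝ)) * f ((k : ℝ) / w, (j : ℝ) / w)

noncomputable def Sop (χ : ℝ × ℝ → ℝ) (w : ℝ) (f : ℝ × ℝ → ℝ) (x y : ℝ) : ℝ :=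
  ∑' k : ℤ, ∑' j : ℤ, χ (w * x - (k : ℝ), w * y - (j : ℝ)) *
    (w ^ 2 * ∫ u in ((k : ℝ) / w)..(((k : ℝ) + 1) / w),
      ∫ v in ((j : ℝ) / w)..(((j : ℝ) + 1) / w), f (u, v))

noncomputable def pX (f : ℝ × ℝ → ℝ) : ℝ × ℝ → ℝ := fun p => deriv (fun t => f (t, p.2)) p.1
noncomputable def pY (f : ℝ × ℝ → ℝ) : ℝ × ℝ → ℝ := fun p => deriv (fun t => f (p.1, t)) p.2
noncomputable def pd (f : ℝ × ℝ → ℝ) (i j : ℕ) : ℝ × ℝ → ℝ := pX^[i] (pY^[j] f)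

noncomputable def supNorm (g : ℝ × ℝ → ℝ) : ℝ := ⨆ p : ℝ × ℝ, |g p|

def mixedDiff (f : ℝ × ℝ → ℝ) (u v x y : ℝ) : ℝ := f (x, y) - f (x, v) - f (u, y) + f (u, v)

def BContinuous (f : ℝ × ℝ → ℝ) : Prop :=
  ∀ x₀ y₀ : ℝ, Tendsto (fun p : ℝ × ℝ => mixedDiff f x₀ y₀ p.1 p.2) (nhds (x₀, y₀)) (nhds 0)

noncomputable def omegaB (f : ℝ × ℝ → ℝ) (δ₁ δ₂ : ℝ) : ℝ :=
  sSup {t : ℝ | ∃ x y u v : ℝ, |x - u| < δ₁ ∧ |y - v| < δ₂ ∧ t = |mixedDiff f u v x y|}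

noncomputable def Kop (χ : ℝ × ℝ → ℝ) (w : ℝ) (f : ℝ × ℝ → ℝ) (x y : ℝ) : ℝ :=
  Sop χ w (fun p => f (p.1, y) + f (x, p.2) - f (p.1, p.2)) x y


lemma pX_eq_fderiv {g : ℝ × ℝ → ℝ} (hg : Differentiable ℝ g) :
    pX g = fun p => fderiv ℝ g p (1, 0) := by
  funext p
  have hline : HasDerivAt (fun t : ℝ => (t, p.2)) ((1 : ℝ), (0 : ℝ)) p.1 :=
    HasDerivAt.prodMk (hasDerivAt_id p.1) (hasDerivAt_const p.1 p.2)
  have : HasDerivAt (fun t : ℝ => g (t, p.2)) (fderiv ℝ g p (1, 0)) p.1 := by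
    have := ((hg p).hasFDerivAt.comp_hasDerivAt p.1 hline)
    exact this
  exact this.deriv

lemma pY_eq_fderiv {g : ℝ × ℝ → ℝ} (hg : Differentiable ℝ g) :
    pY g = fun p => fderiv ℝ g p (0, 1) := by
  funext p
  have hline : HasDerivAt (fun t : ℝ => (p.1, t)) ((0 : ℝ), (1 : ℝ)) p.2 :=
    HasDerivAt.prodMk (hasDerivAt_const p.2 p.1) (hasDerivAt_id p.2)
  have : HasDerivAt (fun t : ℝ => g (p.1, t)) (fderiv ℝ g p (0, 1)) p.2 := by
    have := ((hg p).hasFDerivAt.comp_hasDerivAt p.2 hline)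
    exact this
  exact this.deriv

lemma contDiff_pX {g : ℝ × ℝ → ℝ} {m : ℕ} (hg : ContDiff ℝ (m + 1 : ℕ) g) :
    ContDiff ℝ (m : ℕ) (pX g) := by
  rw [pX_eq_fderiv (hg.differentiable (by simp))]
  exact (hg.fderiv_right (by exact_mod_cast le_refl (m+1))).clm_apply contDiff_const

lemma contDiff_pY {g : ℝ × ℝ → ℝ} {m : ℕ} (hg : ContDiff ℝ (m + 1 : ℕ) g) :
    ContDiff ℝ (m : ℕ) (pY g) := by
  rw [pY_eq_fderiv (hg.differentiable (by simp))]
  exact (hg.fderiv_right (by exact_mod_cast le_refl (m+1))).clm_apply contDiff_const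

lemma contDiff_iter_pX {g : ℝ × ℝ → ℝ} {m : ℕ} :
    ∀ i : ℕ, ContDiff ℝ (i + m : ℕ) g → ContDiff ℝ (m : ℕ) (pX^[i] g) := by
  intro i
  induction i generalizing g with
  | zero => intro hg; simpa using hg
  | succ i ih =>
    intro hg
    rw [Function.iterate_succ_apply]
    exact ih (contDiff_pX (by exact_mod_cast hg.of_le (by exact_mod_cast Nat.le_of_eq (by ring))))

lemma contDiff_iter_pY {g : ℝ × ℝ → ℝ} {m : ℕ} :
    ∀ j : ℕ, ContDiff ℝ (j + m : ℕ) g → ContDiff ℝ (m : ℕ) (pY^[j] g) := by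
  intro j
  induction j generalizing g with
  | zero => intro hg; simpa using hg
  | succ j ih =>
    intro hg
    rw [Function.iterate_succ_apply]
    exact ih (contDiff_pY (by exact_mod_cast hg.of_le (by exact_mod_cast Nat.le_of_eq (by ring))))

lemma contDiff_pd {f : ℝ × ℝ → ℝ} {r : ℕ} (hf : ContDiff ℝ (r : ℕ) f)
    {i j m : ℕ} (h : i + j + m ≤ r) : ContDiff ℝ (m : ℕ) (pd f i j) := by
  apply contDiff_iter_pX i
  apply contDiff_iter_pY j
  exact hf.of_le (by exact_mod_cast (by omega : j + (i + m) ≤ r))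


lemma pYpX {g : ℝ × ℝ → ℝ} (hg : ContDiff ℝ (2 : ℕ) g) : pY (pX g) = pX (pY g) := by
  have hg1 : Differentiable ℝ g := hg.differentiable (by simp)
  have hfd : ContDiff ℝ (1 : ℕ) (fderiv ℝ g) :=
    hg.fderiv_right (le_of_eq (by norm_cast))
  have hfdd : Differentiable ℝ (fderiv ℝ g) := hfd.differentiable (by norm_cast)
  have hdapp : ∀ v : ℝ × ℝ, Differentiable ℝ (fun q => fderiv ℝ g q v) := by
    intro v
    exact (hfd.clm_apply contDiff_const).differentiable (by norm_cast)
  have key : ∀ p : ℝ × ℝ, ∀ v u : ℝ × ℝ,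
      fderiv ℝ (fun q => fderiv ℝ g q v) p u = fderiv ℝ (fderiv ℝ g) p u v := by
    intro p v u
    have h : HasFDerivAt (fun q => (ContinuousLinearMap.apply ℝ ℝ v) (fderiv ℝ g q))
        ((ContinuousLinearMap.apply ℝ ℝ v).comp (fderiv ℝ (fderiv ℝ g) p)) p :=
      ((ContinuousLinearMap.apply ℝ ℝ v).hasFDerivAt).comp p (hfdd p).hasFDerivAt
    have h2 := h.fderiv
    simp only [ContinuousLinearMap.apply_apply] at h2
    rw [h2]; rfl
  have hsym : ∀ p : ℝ × ℝ, ∀ u v : ℝ × ℝ,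
      fderiv ℝ (fderiv ℝ g) p u v = fderiv ℝ (fderiv ℝ g) p v u := fun p u v =>
    second_derivative_symmetric (fun y => (hg1 y).hasFDerivAt) (hfdd p).hasFDerivAt u v
  have e1 : pY (pX g) = fun p => fderiv ℝ (fun q => fderiv ℝ g q (1, 0)) p (0, 1) := by
    rw [pX_eq_fderiv hg1, pY_eq_fderiv (hdapp (1, 0))]
  have e2 : pX (pY g) = fun p => fderiv ℝ (fun q => fderiv ℝ g q (0, 1)) p (1, 0) := by
    rw [pY_eq_fderiv hg1, pX_eq_fderiv (hdapp (0, 1))]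
  funext p
  have := congrFun e1 p
  rw [this, congrFun e2 p, key, key, hsym]


lemma pY_iter_pX {i : ℕ} : ∀ {g : ℝ × ℝ → ℝ}, ContDiff ℝ (i + 1 : ℕ) g →
    pY (pX^[i] g) = pX^[i] (pY g) := by
  induction i with
  | zero => intro g _; simp
  | succ i ih =>
    intro g hg
    have h1 : ContDiff ℝ (i + 1 : ℕ) (pX g) := contDiff_pX hg
    calc pY (pX^[i+1] g) = pY (pX^[i] (pX g)) := by rw [Function.iterate_succ_apply]
      _ = pX^[i] (pY (pX g)) := ih h1
      _ = pX^[i] (pX (pY g)) := by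
          rw [pYpX (hg.of_le (by exact_mod_cast (by omega : 2 ≤ i + 1 + 1)))]
      _ = pX^[i+1] (pY g) := by rw [Function.iterate_succ_apply]

lemma pX_pd {f : ℝ × ℝ → ℝ} (i j : ℕ) : pX (pd f i j) = pd f (i + 1) j := by
  simp [pd, Function.iterate_succ_apply']

lemma pY_pd {f : ℝ × ℝ → ℝ} {r : ℕ} (hf : ContDiff ℝ (r : ℕ) f) {i j : ℕ}
    (h : i + j + 1 ≤ r) : pY (pd f i j) = pd f i (j + 1) := by
  have hYj : ContDiff ℝ (i + 1 : ℕ) (pY^[j] f) :=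
    contDiff_iter_pY j (hf.of_le (by exact_mod_cast (by omega : j + (i + 1) ≤ r)))
  calc pY (pd f i j) = pX^[i] (pY (pY^[j] f)) := pY_iter_pX hYj
    _ = pd f i (j + 1) := by rw [pd, Function.iterate_succ_apply' pY j f]

lemma hasDerivAt_line {f : ℝ × ℝ → ℝ} {r : ℕ} (hf : ContDiff ℝ (r : ℕ) f)
    {i j : ℕ} (h : i + j + 1 ≤ r) (a b x y t : ℝ) :
    HasDerivAt (fun t => pd f i j (x + t * a, y + t * b))
      (a * pd f (i + 1) j (x + t * a, y + t * b) +
        b * pd f i (j + 1) (x + t * a, y + t * b)) t := by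
  have hg : ContDiff ℝ (1 : ℕ) (pd f i j) := contDiff_pd hf (by omega)
  have hgd : Differentiable ℝ (pd f i j) := hg.differentiable (by norm_cast)
  have hline : HasDerivAt (fun t : ℝ => (x + t * a, y + t * b)) ((a, b) : ℝ × ℝ) t := by
    have h1 : HasDerivAt (fun t : ℝ => x + t * a) a t := by
      simpa using ((hasDerivAt_id t).mul_const a).const_add x
    have h2 : HasDerivAt (fun t : ℝ => y + t * b) b t := by
      simpa using ((hasDerivAt_id t).mul_const b).const_add y
    exact HasDerivAt.prodMk h1 h2
  have hc := (hgd _).hasFDerivAt.comp_hasDerivAt t hline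
  have hv : fderiv ℝ (pd f i j) (x + t * a, y + t * b) ((a, b) : ℝ × ℝ) =
      a * pd f (i + 1) j (x + t * a, y + t * b) + b * pd f i (j + 1) (x + t * a, y + t * b) := by
    have hab : ((a, b) : ℝ × ℝ) = a • ((1 : ℝ), (0 : ℝ)) + b • ((0 : ℝ), (1 : ℝ)) := by
      simp [Prod.ext_iff]
    rw [hab, map_add, _root_.map_smul, _root_.map_smul]
    rw [← pX_pd i j, ← pY_pd hf h, pX_eq_fderiv hgd, pY_eq_fderiv hgd]
    simp only [smul_eq_mul]
    try ring
  rw [← hv]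
  exact hc


lemma pd_zero_zero (f : ℝ × ℝ → ℝ) : pd f 0 0 = f := rfl

lemma iteratedDeriv_line {f : ℝ × ℝ → ℝ} {r : ℕ} (hf : ContDiff ℝ (r : ℕ) f)
    (a b x y : ℝ) {n : ℕ} (hn : n ≤ r) :
    iteratedDeriv n (fun t => f (x + t * a, y + t * b)) = fun t =>
      ∑ i ∈ Finset.range (n + 1), (n.choose i : ℝ) * a ^ (n - i) * b ^ i *
        pd f (n - i) i (x + t * a, y + t * b) := by
  induction n with
  | zero => simp [pd_zero_zero]
  | succ n ih =>
    rw [iteratedDeriv_succ, ih (by omega)]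
    funext t
    have hder : HasDerivAt (fun t => ∑ i ∈ Finset.range (n + 1),
        (n.choose i : ℝ) * a ^ (n - i) * b ^ i * pd f (n - i) i (x + t * a, y + t * b))
        (∑ i ∈ Finset.range (n + 1), (n.choose i : ℝ) * a ^ (n - i) * b ^ i *
          (a * pd f (n - i + 1) i (x + t * a, y + t * b) +
           b * pd f (n - i) (i + 1) (x + t * a, y + t * b))) t := by
      apply HasDerivAt.fun_sum
      intro i hi
      have hi' : i ≤ n := by simpa [Nat.lt_succ_iff] using hi
      have := (hasDerivAt_line hf (by omega : (n - i) + i + 1 ≤ r) a b x y t).const_mul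
        ((n.choose i : ℝ) * a ^ (n - i) * b ^ i)
      simpa [mul_assoc] using this
    rw [hder.deriv]
    -- Pascal recombination
    set P : ℝ × ℝ := (x + t * a, y + t * b) with hP
    have key : ∀ i, i ≤ n → (n.choose i : ℝ) * a ^ (n - i) * b ^ i *
        (a * pd f (n - i + 1) i P + b * pd f (n - i) (i + 1) P) =
        (n.choose i : ℝ) * (a ^ (n + 1 - i) * b ^ i * pd f (n + 1 - i) i P) +
        (n.choose i : ℝ) * (a ^ (n + 1 - (i+1)) * b ^ (i+1) * pd f (n + 1 - (i+1)) (i+1) P) := by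
      intro i hi
      have e1 : n + 1 - i = n - i + 1 := by omega
      have e2 : n + 1 - (i + 1) = n - i := by omega
      rw [e1, e2, pow_succ]
      ring
    set T : ℕ → ℝ := fun i => a ^ (n + 1 - i) * b ^ i * pd f (n + 1 - i) i P with hT
    calc (∑ i ∈ Finset.range (n + 1), (n.choose i : ℝ) * a ^ (n - i) * b ^ i *
          (a * pd f (n - i + 1) i P + b * pd f (n - i) (i + 1) P))
        = ∑ i ∈ Finset.range (n + 1), ((n.choose i : ℝ) * T i + (n.choose i : ℝ) * T (i + 1)) := by
          apply Finset.sum_congr rfl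
          intro i hi
          exact key i (by simpa [Nat.lt_succ_iff] using hi)
      _ = ∑ i ∈ Finset.range (n + 2), ((n + 1).choose i : ℝ) * T i := by
          rw [Finset.sum_add_distrib]
          rw [Finset.sum_range_succ' (fun i => ((n + 1).choose i : ℝ) * T i) (n + 1)]
          have h1 : ∀ i ∈ Finset.range (n + 1), ((n + 1).choose (i + 1) : ℝ) * T (i + 1) =
              (n.choose i : ℝ) * T (i + 1) + (n.choose (i + 1) : ℝ) * T (i + 1) := by
            intro i _
            rw [Nat.choose_succ_succ]
            push_cast
            ring
          rw [Finset.sum_congr rfl h1, Finset.sum_add_distrib]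
          have h2 : ∑ i ∈ Finset.range (n + 1), (n.choose (i + 1) : ℝ) * T (i + 1) =
              ∑ i ∈ Finset.range n, (n.choose (i + 1) : ℝ) * T (i + 1) := by
            rw [Finset.sum_range_succ]
            simp [Nat.choose_succ_self]
          rw [h2]
          have h3 : ∑ i ∈ Finset.range (n + 1), (n.choose i : ℝ) * T i =
              ∑ i ∈ Finset.range n, (n.choose (i + 1) : ℝ) * T (i + 1) + (n.choose 0 : ℝ) * T 0 :=
            Finset.sum_range_succ' (fun i => (n.choose i : ℝ) * T i) n
          rw [h3]
          simp only [Nat.choose_zero_right, Nat.cast_one, one_mul]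
          ring
      _ = ∑ i ∈ Finset.range (n + 1 + 1), ((n + 1).choose i : ℝ) * a ^ (n + 1 - i) * b ^ i *
            pd f (n + 1 - i) i P := by
          apply Finset.sum_congr rfl
          intro i _
          rw [hT]
          ring


section TaylorSec
open Set

lemma iDW_eq {φ : ℝ → ℝ} {r n : ℕ} (hφ : ContDiff ℝ (r : ℕ) φ) (hn : n ≤ r)
    {s : Set ℝ} (hs : UniqueDiffOn ℝ s) {x : ℝ} (hx : x ∈ s) :
    iteratedDerivWithin n φ s x = iteratedDeriv n φ x := by
  rw [iteratedDerivWithin_eq_iteratedFDerivWithin, iteratedDeriv_eq_iteratedFDeriv]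
  congr 1
  have h : HasFTaylorSeriesUpTo ((r : ℕ∞) : WithTop ℕ∞) φ (ftaylorSeries ℝ φ) :=
    contDiff_iff_ftaylorSeries.mp (by exact_mod_cast hφ)
  exact ((h.hasFTaylorSeriesUpToOn s).eq_iteratedFDerivWithin_of_uniqueDiffOn
    (by exact_mod_cast hn) hs hx).symm

lemma taylor_bound {φ : ℝ → ℝ} {r : ℕ} (hr : 1 ≤ r) (hφ : ContDiff ℝ (r : ℕ) φ)
    {K : ℝ} (hK : ∀ t ∈ Set.Icc (0 : ℝ) 1, |iteratedDeriv r φ t| ≤ K) :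
    |φ 1 - ∑ n ∈ Finset.range r, iteratedDeriv n φ 0 / n.factorial| ≤ K / r.factorial := by
  obtain ⟨n, rfl⟩ : ∃ n, r = n + 1 := ⟨r - 1, by omega⟩
  have hs : UniqueDiffOn ℝ (Icc (0 : ℝ) 1) := uniqueDiffOn_Icc one_pos
  have hφn : ContDiffOn ℝ (n : ℕ) φ (Icc (0 : ℝ) 1) :=
    (hφ.of_le (by exact_mod_cast Nat.le_succ n)).contDiffOn
  have hdiff : Differentiable ℝ (iteratedDeriv n φ) :=
    hφ.differentiable_iteratedDeriv n (by exact_mod_cast Nat.lt_succ_self n)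
  have hf' : DifferentiableOn ℝ (iteratedDerivWithin n φ (Icc (0 : ℝ) 1)) (Ioo (0 : ℝ) 1) := by
    apply (hdiff.differentiableOn (s := Ioo (0:ℝ) 1)).congr
    intro t ht
    exact iDW_eq hφ (Nat.le_succ n) hs (Ioo_subset_Icc_self ht)
  have hu1 : uIcc (0:ℝ) 1 = Icc 0 1 := uIcc_of_le zero_le_one
  have hu2 : uIoo (0:ℝ) 1 = Ioo 0 1 := uIoo_of_le zero_le_one
  obtain ⟨x', hx', heq⟩ := taylor_mean_remainder_lagrange (f := φ) (n := n) (x₀ := 0) (x := 1)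
    (by norm_num) (hu1 ▸ hφn) (by rw [hu1, hu2]; exact hf')
  rw [hu1] at heq
  rw [hu2] at hx'
  have htay : taylorWithinEval φ n (Icc (0 : ℝ) 1) 0 1 =
      ∑ k ∈ Finset.range (n + 1), iteratedDeriv k φ 0 / k.factorial := by
    rw [taylor_within_apply]
    apply Finset.sum_congr rfl
    intro k hk
    rw [iDW_eq hφ (by simpa [Nat.lt_succ_iff] using Nat.le_of_lt_succ (Finset.mem_range.mp hk) |>.trans (Nat.le_succ n)) hs
      (by constructor <;> norm_num : (0:ℝ) ∈ Icc (0:ℝ) 1)]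
    rw [smul_eq_mul]
    ring
  rw [← htay, heq]
  have hx'' : x' ∈ Icc (0 : ℝ) 1 := Ioo_subset_Icc_self hx'
  rw [iDW_eq hφ le_rfl hs hx'']
  rw [abs_div]
  simp only [sub_zero, one_pow, mul_one]
  rw [Nat.abs_cast]
  gcongr
  exact hK x' hx''


end TaylorSec

section Summab
open scoped NNReal
variable {χ : ℝ × ℝ → ℝ} {r : ℕ} (u v : ℝ)

lemma momA (hMr : Mmoment χ r < ⊤) {p q : ℕ} (hpq : p + q = r) :
    Summable (fun kj : ℤ × ℤ =>
      |χ (u - (kj.1 : ℝ), v - (kj.2 : ℝ))| * |u - (kj.1 : ℝ)| ^ p * |v - (kj.2 : ℝ)| ^ q) ∧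
    (∑' kj : ℤ × ℤ,
      |χ (u - (kj.1 : ℝ), v - (kj.2 : ℝ))| * |u - (kj.1 : ℝ)| ^ p * |v - (kj.2 : ℝ)| ^ q) ≤
      (Mmoment χ r).toReal := by
  set g : ℤ × ℤ → ℝ := fun kj =>
    |χ (u - (kj.1 : ℝ), v - (kj.2 : ℝ))| * |u - (kj.1 : ℝ)| ^ p * |v - (kj.2 : ℝ)| ^ q with hg
  have hg0 : ∀ kj, 0 ≤ g kj := fun kj => by positivity
  have hF : ∑' kj : ℤ × ℤ, ENNReal.ofReal (g kj) ≤ Mmoment χ r := by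
    rw [ENNReal.tsum_prod']
    have h2 : (∑' k : ℤ, ∑' j : ℤ, ENNReal.ofReal (g (k, j))) ≤ absMoment χ p q := by
      apply le_iSup_of_le u
      apply le_iSup_of_le v
      rfl
    refine h2.trans ?_
    exact le_iSup (fun s : {s : ℕ × ℕ // s.1 + s.2 = r} => absMoment χ s.1.1 s.1.2) ⟨(p, q), hpq⟩
  have hne : ∑' kj : ℤ × ℤ, ENNReal.ofReal (g kj) ≠ ⊤ := (hF.trans_lt hMr).ne
  have hsum : Summable g := by
    have h3 : Summable (fun kj => Real.toNNReal (g kj)) :=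
      ENNReal.tsum_coe_ne_top_iff_summable.mp (by simpa [ENNReal.ofReal] using hne)
    have h4 : Summable (fun kj => ((Real.toNNReal (g kj) : ℝ≥0) : ℝ)) :=
      NNReal.summable_coe.mpr h3
    refine h4.congr fun kj => ?_
    exact Real.coe_toNNReal _ (hg0 kj)
  refine ⟨hsum, ?_⟩
  have h5 : ENNReal.ofReal (∑' kj, g kj) ≤ Mmoment χ r := by
    rw [ENNReal.ofReal_tsum_of_nonneg hg0 hsum]
    exact hF
  have h6 := ENNReal.toReal_mono hMr.ne h5
  rwa [ENNReal.toReal_ofReal (tsum_nonneg hg0)] at h6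

lemma momB (hMr : Mmoment χ r < ⊤) {C : ℝ} (hχb : ∀ p, |χ p| ≤ C) :
    Summable (fun kj : ℤ × ℤ => |χ (u - (kj.1 : ℝ), v - (kj.2 : ℝ))|) := by
  have hA := (momA u v hMr (p := r) (q := 0) (by omega)).1
  have hB := (momA u v hMr (p := 0) (q := r) (by omega)).1
  set F : Set (ℤ × ℤ) := {kj | |u - (kj.1 : ℝ)| < 1 ∧ |v - (kj.2 : ℝ)| < 1} with hFdef
  have hFfin : F.Finite := by
    apply Set.Finite.subset (Set.finite_Icc (⌈u - 1⌉, ⌈v - 1⌉) (⌊u + 1⌋, ⌊v + 1⌋))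
    rintro ⟨k, j⟩ ⟨h1, h2⟩
    rw [abs_lt] at h1 h2
    constructor <;> constructor <;> simp only [] <;>
      [skip; skip; skip; skip] <;>
      first
        | (apply Int.ceil_le.mpr; push_cast; linarith)
        | (apply Int.le_floor.mpr; push_cast; linarith)
  have hmaj : Summable (fun kj : ℤ × ℤ =>
      |χ (u - (kj.1 : ℝ), v - (kj.2 : ℝ))| * |u - (kj.1 : ℝ)| ^ r +
      |χ (u - (kj.1 : ℝ), v - (kj.2 : ℝ))| * |v - (kj.2 : ℝ)| ^ r +
      F.indicator (fun _ => C) kj) := by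
    apply Summable.add
    apply Summable.add
    · simpa using hA
    · simpa using hB
    · apply summable_of_ne_finset_zero (s := hFfin.toFinset)
      intro kj hkj
      exact Set.indicator_of_notMem (by simpa using hkj) _
  apply Summable.of_nonneg_of_le (fun kj => abs_nonneg _) ?_ hmaj
  rintro ⟨k, j⟩
  by_cases hF : ((k, j) : ℤ × ℤ) ∈ F
  · have h1 : F.indicator (fun _ => C) (k, j) = C := Set.indicator_of_mem hF _
    rw [h1]
    have := hχb (u - (k : ℝ), v - (j : ℝ))
    have h2 : (0:ℝ) ≤ |χ (u - (k : ℝ), v - (j : ℝ))| * |u - (k : ℝ)| ^ r := by positivity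
    have h3 : (0:ℝ) ≤ |χ (u - (k : ℝ), v - (j : ℝ))| * |v - (j : ℝ)| ^ r := by positivity
    simp only []
    linarith
  · have h1 : F.indicator (fun _ => C) (k, j) = 0 := Set.indicator_of_notMem hF _
    have h2 : (1:ℝ) ≤ |u - (k : ℝ)| ∨ (1:ℝ) ≤ |v - (j : ℝ)| := by
      rw [hFdef] at hF
      simp only [Set.mem_setOf_eq, not_and_or, not_lt] at hF
      exact hF
    rw [h1]
    rcases h2 with h2 | h2
    · have h3 : (1:ℝ) ≤ |u - (k : ℝ)| ^ r := one_le_pow₀ h2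
      have h4 : (0:ℝ) ≤ |χ (u - (k : ℝ), v - (j : ℝ))| * |v - (j : ℝ)| ^ r := by positivity
      simp only []
      nlinarith [abs_nonneg (χ (u - (k : ℝ), v - (j : ℝ)))]
    · have h3 : (1:ℝ) ≤ |v - (j : ℝ)| ^ r := one_le_pow₀ h2
      have h4 : (0:ℝ) ≤ |χ (u - (k : ℝ), v - (j : ℝ))| * |u - (k : ℝ)| ^ r := by positivity
      simp only []
      nlinarith [abs_nonneg (χ (u - (k : ℝ), v - (j : ℝ)))]

lemma pow_prod_le {t s : ℝ} (ht : 0 ≤ t) (hs : 0 ≤ s) {p q r : ℕ} (h : p + q ≤ r) :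
    t ^ p * s ^ q ≤ 1 + t ^ r + s ^ r := by
  set M := max 1 (max t s) with hM
  have hM1 : (1:ℝ) ≤ M := le_max_left _ _
  have hMt : t ≤ M := (le_max_left t s).trans (le_max_right 1 _)
  have hMs : s ≤ M := (le_max_right t s).trans (le_max_right 1 _)
  have h1 : t ^ p * s ^ q ≤ M ^ p * M ^ q :=
    mul_le_mul (pow_le_pow_left₀ ht hMt p) (pow_le_pow_left₀ hs hMs q) (by positivity)
      (by positivity)
  rw [← pow_add] at h1
  have h2 : M ^ (p + q) ≤ M ^ r := pow_le_pow_right₀ hM1 h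
  have h3 : M ^ r ≤ 1 + t ^ r + s ^ r := by
    have ht' : (0:ℝ) ≤ t ^ r := by positivity
    have hs' : (0:ℝ) ≤ s ^ r := by positivity
    rcases max_choice 1 (max t s) with hc | hc
    · rw [← hM] at hc; rw [hc, one_pow]; linarith
    · rw [← hM] at hc
      rcases max_choice t s with hc2 | hc2
      · rw [hc, hc2]; nlinarith [one_le_pow₀ (le_refl (1:ℝ)) (n := r)]
      · rw [hc, hc2]; nlinarith [one_le_pow₀ (le_refl (1:ℝ)) (n := r)]
  linarith

lemma momC (hMr : Mmoment χ r < ⊤) {C : ℝ} (hχb : ∀ p, |χ p| ≤ C) {p q : ℕ} (hpq : p + q ≤ r) :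
    Summable (fun kj : ℤ × ℤ =>
      |χ (u - (kj.1 : ℝ), v - (kj.2 : ℝ))| * |u - (kj.1 : ℝ)| ^ p * |v - (kj.2 : ℝ)| ^ q) := by
  have hA := (momA u v hMr (p := r) (q := 0) (by omega)).1
  have hB := (momA u v hMr (p := 0) (q := r) (by omega)).1
  have hX := momB u v hMr hχb
  have hmaj : Summable (fun kj : ℤ × ℤ =>
      |χ (u - (kj.1 : ℝ), v - (kj.2 : ℝ))| * 1 +
      (|χ (u - (kj.1 : ℝ), v - (kj.2 : ℝ))| * |u - (kj.1 : ℝ)| ^ r +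
      |χ (u - (kj.1 : ℝ), v - (kj.2 : ℝ))| * |v - (kj.2 : ℝ)| ^ r)) := by
    apply Summable.add (by simpa using hX)
    apply Summable.add (by simpa using hA) (by simpa using hB)
  apply Summable.of_nonneg_of_le (fun kj => by positivity) ?_ hmaj
  rintro ⟨k, j⟩
  simp only []
  have key := pow_prod_le (abs_nonneg (u - (k:ℝ))) (abs_nonneg (v - (j:ℝ))) hpq
  have h0 := abs_nonneg (χ (u - (k : ℝ), v - (j : ℝ)))
  nlinarith [key, h0, abs_nonneg (u - (k:ℝ)), abs_nonneg (v - (j:ℝ))]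
end Summab


set_option maxHeartbeats 1000000 in
/-- quantitative approximation by the bivariate generalized sampling series
for f ∈ C^r(ℝ²). -/
theorem statement0 (χ : ℝ × ℝ → ℝ) (hχc : Continuous χ) (hχb : ∃ C : ℝ, ∀ p, |χ p| ≤ C)
    (hpart : PartitionOfUnity2 χ)
    (r : ℕ) (hr : 1 ≤ r) (c : ℝ)
    (hMr : Mmoment χ r < ⊤)
    (hmom : MomentCondition χ r c)
    (f : ℝ × ℝ → ℝ) (hf : ContDiff ℝ r f)
    (hbd : ∀ i j : ℕ, i + j ≤ r → ∃ C : ℝ, ∀ z, |pd f i j z| ≤ C)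
    (w : ℝ) (hw : 0 < w) (x y : ℝ) :
    |Gop χ w f x y - f (x, y)| ≤
      ((Mmoment χ r).toReal / ((r.factorial : ℝ) * w ^ r)) *
        (∑ j ∈ Finset.range (r + 1), (r.choose j : ℝ) * supNorm (pd f (r - j) j)) := by
  classical
  obtain ⟨C, hC⟩ := hχb
  have hw' : w ≠ 0 := ne_of_gt hw
  unfold Gop
  set u : ℝ := w * x with hu
  set v : ℝ := w * y with hv
  set χk : ℤ × ℤ → ℝ := fun kj => χ (u - (kj.1 : ℝ), v - (kj.2 : ℝ)) with hχk
  set A : ℤ × ℤ → ℝ := fun kj => (kj.1 : ℝ) / w - x with hA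
  set B : ℤ × ℤ → ℝ := fun kj => (kj.2 : ℝ) / w - y with hB
  set S : ℕ → ℝ := fun i => supNorm (pd f (r - i) i) with hSdef
  -- sup-norm facts
  have hpd_le : ∀ i j : ℕ, i + j ≤ r → ∀ z, |pd f i j z| ≤ supNorm (pd f i j) := by
    intro i j hij z
    obtain ⟨Ci, hCi⟩ := hbd i j hij
    exact le_ciSup ⟨Ci, by rintro t ⟨z', rfl⟩; exact hCi z'⟩ z
  have hS0 : ∀ i j : ℕ, i + j ≤ r → 0 ≤ supNorm (pd f i j) := fun i j hij =>
    (abs_nonneg _).trans (hpd_le i j hij (0, 0))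
  -- algebraic identities
  have hAk : ∀ kj : ℤ × ℤ, A kj = -(u - (kj.1 : ℝ)) / w := by
    intro kj
    simp only [hA, hu]
    rw [neg_sub, sub_div, mul_comm w x, mul_div_assoc, div_self hw', mul_one]
  have hBk : ∀ kj : ℤ × ℤ, B kj = -(v - (kj.2 : ℝ)) / w := by
    intro kj
    simp only [hB, hv]
    rw [neg_sub, sub_div, mul_comm w y, mul_div_assoc, div_self hw', mul_one]
  have habsA : ∀ kj : ℤ × ℤ, |A kj| = |u - (kj.1 : ℝ)| / w := by
    intro kj; rw [hAk kj, abs_div, abs_neg, abs_of_pos hw]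
  have habsB : ∀ kj : ℤ × ℤ, |B kj| = |v - (kj.2 : ℝ)| / w := by
    intro kj; rw [hBk kj, abs_div, abs_neg, abs_of_pos hw]
  -- summability facts
  have habsχ : Summable (fun kj : ℤ × ℤ => |χk kj|) := momB u v hMr hC
  have hχsum : Summable χk := habsχ.of_abs
  have habs_poly : ∀ p q : ℕ, p + q ≤ r →
      Summable (fun kj : ℤ × ℤ => |χk kj| * |A kj| ^ p * |B kj| ^ q) := by
    intro p q hpq
    apply ((momC u v hMr hC hpq).mul_left ((1 / w) ^ (p + q))).congr
    intro kj
    rw [habsA kj, habsB kj]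
    ring
  have hpoly : ∀ p q : ℕ, p + q ≤ r →
      Summable (fun kj : ℤ × ℤ => χk kj * A kj ^ p * B kj ^ q) := by
    intro p q hpq
    apply Summable.of_abs
    apply (habs_poly p q hpq).congr
    intro kj
    rw [abs_mul, abs_mul, abs_pow, abs_pow]
  have htsum_poly : ∀ p q : ℕ, p + q = r →
      (∑' kj : ℤ × ℤ, |χk kj| * |A kj| ^ p * |B kj| ^ q) ≤
        (Mmoment χ r).toReal / w ^ r := by
    intro p q hpq
    obtain ⟨hsum, hle⟩ := momA u v hMr hpq
    have hEq : ∀ kj : ℤ × ℤ, |χk kj| * |A kj| ^ p * |B kj| ^ q =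
        (1 / w ^ r) * (|χk kj| * |u - (kj.1 : ℝ)| ^ p * |v - (kj.2 : ℝ)| ^ q) := by
      intro kj
      have hw2 : ((1 : ℝ) / w) ^ (p + q) = 1 / w ^ r := by
        rw [div_pow, one_pow, hpq]
      rw [habsA kj, habsB kj, ← hw2]
      ring
    rw [tsum_congr hEq, tsum_mul_left]
    have hrw : (1 / w ^ r) * (Mmoment χ r).toReal = (Mmoment χ r).toReal / w ^ r := by
      rw [one_div, inv_mul_eq_div]
    rw [← hrw]
    exact mul_le_mul_of_nonneg_left hle (by positivity)
  -- vanishing moments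
  have hvanish : ∀ p q : ℕ, 1 ≤ p + q → p + q ≤ r - 1 →
      (∑' kj : ℤ × ℤ, χk kj * A kj ^ p * B kj ^ q) = 0 := by
    intro p q h1 h2
    have hs : Summable (fun kj : ℤ × ℤ =>
        χk kj * (u - (kj.1 : ℝ)) ^ p * (v - (kj.2 : ℝ)) ^ q) := by
      apply Summable.of_abs
      apply (momC u v hMr hC (p := p) (q := q) (by omega)).congr
      intro kj
      simp only [hχk, abs_mul, abs_pow]
    have h0 : (∑' kj : ℤ × ℤ, χk kj * (u - (kj.1 : ℝ)) ^ p * (v - (kj.2 : ℝ)) ^ q) = 0 := by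
      rw [Summable.tsum_prod hs]
      exact hmom.1 u v p q h1 h2
    set c1 : ℝ := -1 / w with hc1
    have hEq : ∀ kj : ℤ × ℤ, χk kj * A kj ^ p * B kj ^ q =
        (c1 ^ p * c1 ^ q) * (χk kj * (u - (kj.1 : ℝ)) ^ p * (v - (kj.2 : ℝ)) ^ q) := by
      intro kj
      have hA2 : A kj ^ p = c1 ^ p * (u - (kj.1 : ℝ)) ^ p := by
        rw [hAk kj, ← mul_pow, hc1]
        congr 1
        ring
      have hB2 : B kj ^ q = c1 ^ q * (v - (kj.2 : ℝ)) ^ q := by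
        rw [hBk kj, ← mul_pow, hc1]
        congr 1
        ring
      rw [hA2, hB2]
      ring
    rw [tsum_congr hEq, tsum_mul_left, h0, mul_zero]
  -- partition of unity over the product
  have hχone : (∑' kj : ℤ × ℤ, χk kj) = 1 := by
    rw [Summable.tsum_prod hχsum]
    simpa only [hχk] using hpart u v
  -- Taylor setup
  have hline : ∀ kj : ℤ × ℤ, ContDiff ℝ (r : ℕ)
      (fun t : ℝ => f (x + t * A kj, y + t * B kj)) := by
    intro kj
    apply hf.comp
    exact ContDiff.prodMk (contDiff_const.add (contDiff_id.mul contDiff_const))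
      (contDiff_const.add (contDiff_id.mul contDiff_const))
  set K : ℤ × ℤ → ℝ := fun kj => ∑ i ∈ Finset.range (r + 1),
      (r.choose i : ℝ) * |A kj| ^ (r - i) * |B kj| ^ i * S i with hKdef
  have hKb : ∀ kj : ℤ × ℤ, ∀ t ∈ Set.Icc (0 : ℝ) 1,
      |iteratedDeriv r (fun t : ℝ => f (x + t * A kj, y + t * B kj)) t| ≤ K kj := by
    intro kj t _
    rw [congrFun (iteratedDeriv_line hf (A kj) (B kj) x y le_rfl) t, hKdef]
    refine (Finset.abs_sum_le_sum_abs _ _).trans ?_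
    apply Finset.sum_le_sum
    intro i hi
    have hi' : i ≤ r := Nat.lt_succ_iff.mp (Finset.mem_range.mp hi)
    rw [abs_mul, abs_mul, abs_mul, abs_pow, abs_pow, Nat.abs_cast]
    have hd := hpd_le (r - i) i (by omega) (x + t * A kj, y + t * B kj)
    have hnn : (0:ℝ) ≤ (r.choose i : ℝ) * |A kj| ^ (r - i) * |B kj| ^ i := by positivity
    calc (r.choose i : ℝ) * |A kj| ^ (r - i) * |B kj| ^ i * |pd f (r - i) i (x + t * A kj, y + t * B kj)|
        ≤ (r.choose i : ℝ) * |A kj| ^ (r - i) * |B kj| ^ i * supNorm (pd f (r - i) i) :=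
          mul_le_mul_of_nonneg_left hd hnn
      _ = (r.choose i : ℝ) * |A kj| ^ (r - i) * |B kj| ^ i * S i := by rw [hSdef]
  -- the Taylor polynomial part
  set E : ℤ × ℤ → ℝ := fun kj => ∑ n ∈ Finset.range r, ∑ i ∈ Finset.range (n + 1),
      ((n.choose i : ℝ) * pd f (n - i) i (x, y) / (n.factorial : ℝ)) *
        (A kj ^ (n - i) * B kj ^ i) with hEdef
  set Rem : ℤ × ℤ → ℝ := fun kj => f ((kj.1 : ℝ) / w, (kj.2 : ℝ) / w) - E kj with hRemdef
  have hRb : ∀ kj : ℤ × ℤ, |Rem kj| ≤ K kj / (r.factorial : ℝ) := by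
    intro kj
    have hb := taylor_bound hr (hline kj) (hKb kj)
    have e1 : x + 1 * A kj = (kj.1 : ℝ) / w := by simp only [hA]; ring
    have e2 : y + 1 * B kj = (kj.2 : ℝ) / w := by simp only [hB]; ring
    have h1 : f (x + 1 * A kj, y + 1 * B kj) = f ((kj.1 : ℝ) / w, (kj.2 : ℝ) / w) := by
      rw [e1, e2]
    have h0 : ∀ n ∈ Finset.range r,
        iteratedDeriv n (fun t : ℝ => f (x + t * A kj, y + t * B kj)) 0 / (n.factorial : ℝ) =
        ∑ i ∈ Finset.range (n + 1),
          ((n.choose i : ℝ) * pd f (n - i) i (x, y) / (n.factorial : ℝ)) *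
            (A kj ^ (n - i) * B kj ^ i) := by
      intro n hn
      rw [congrFun (iteratedDeriv_line hf (A kj) (B kj) x y
        (le_of_lt (Finset.mem_range.mp hn))) 0]
      rw [Finset.sum_div]
      apply Finset.sum_congr rfl
      intro i _
      have e1 : x + 0 * A kj = x := by ring
      have e2 : y + 0 * B kj = y := by ring
      rw [e1, e2]
      ring
    rw [h1, Finset.sum_congr rfl h0] at hb
    rw [hRemdef, hEdef]
    exact hb
  -- summability of the pieces
  have hfb : ∀ z, |f z| ≤ supNorm (pd f 0 0) := hpd_le 0 0 (by omega)
  have hsum_f : Summable (fun kj : ℤ × ℤ => χk kj * f ((kj.1 : ℝ) / w, (kj.2 : ℝ) / w)) := by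
    apply Summable.of_abs
    apply Summable.of_nonneg_of_le (fun kj => abs_nonneg _) ?_
      (habsχ.mul_right (supNorm (pd f 0 0)))
    intro kj
    rw [abs_mul]
    exact mul_le_mul_of_nonneg_left (hfb _) (abs_nonneg _)
  have hsum_E : Summable (fun kj : ℤ × ℤ => χk kj * E kj) := by
    have hEq : ∀ kj : ℤ × ℤ, χk kj * E kj = ∑ n ∈ Finset.range r, ∑ i ∈ Finset.range (n + 1),
        ((n.choose i : ℝ) * pd f (n - i) i (x, y) / (n.factorial : ℝ)) *
          (χk kj * A kj ^ (n - i) * B kj ^ i) := by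
      intro kj
      rw [hEdef, Finset.mul_sum]
      apply Finset.sum_congr rfl
      intro n _
      rw [Finset.mul_sum]
      apply Finset.sum_congr rfl
      intro i _
      ring
    apply Summable.congr _ (fun kj => (hEq kj).symm)
    apply summable_sum
    intro n hn
    apply summable_sum
    intro i hi
    apply Summable.mul_left
    exact hpoly (n - i) i (by
      have h1 := Finset.mem_range.mp hn
      have h2 := Nat.lt_succ_iff.mp (Finset.mem_range.mp hi)
      omega)
  have hsum_R : Summable (fun kj : ℤ × ℤ => χk kj * Rem kj) := by
    apply Summable.congr (hsum_f.sub hsum_E)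
    intro kj
    rw [hRemdef]
    ring
  -- the Taylor polynomial contributes exactly f (x, y)
  have htsum_E : (∑' kj : ℤ × ℤ, χk kj * E kj) = f (x, y) := by
    have hEq : ∀ kj : ℤ × ℤ, χk kj * E kj = ∑ n ∈ Finset.range r, ∑ i ∈ Finset.range (n + 1),
        ((n.choose i : ℝ) * pd f (n - i) i (x, y) / (n.factorial : ℝ)) *
          (χk kj * A kj ^ (n - i) * B kj ^ i) := by
      intro kj
      rw [hEdef, Finset.mul_sum]
      apply Finset.sum_congr rfl
      intro n _
      rw [Finset.mul_sum]
      apply Finset.sum_congr rfl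
      intro i _
      ring
    rw [tsum_congr hEq]
    rw [Summable.tsum_finsetSum (fun n hn => summable_sum (fun i hi => Summable.mul_left _
      (hpoly (n - i) i (by
        have h1 := Finset.mem_range.mp hn
        have h2 := Nat.lt_succ_iff.mp (Finset.mem_range.mp hi)
        omega))))]
    have hinner : ∀ n ∈ Finset.range r,
        (∑' kj : ℤ × ℤ, ∑ i ∈ Finset.range (n + 1),
          ((n.choose i : ℝ) * pd f (n - i) i (x, y) / (n.factorial : ℝ)) *
            (χk kj * A kj ^ (n - i) * B kj ^ i)) =
        if n = 0 then f (x, y) else 0 := by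
      intro n hn
      have h1 := Finset.mem_range.mp hn
      rw [Summable.tsum_finsetSum (fun i hi => Summable.mul_left _
        (hpoly (n - i) i (by
          have h2 := Nat.lt_succ_iff.mp (Finset.mem_range.mp hi)
          omega)))]
      by_cases hn0 : n = 0
      · subst hn0
        rw [if_pos rfl]
        rw [Finset.sum_range_one]
        rw [tsum_mul_left]
        have hpow : ∀ kj : ℤ × ℤ, χk kj * A kj ^ (0 - 0) * B kj ^ 0 = χk kj := fun kj => by
          simp
        rw [tsum_congr hpow, hχone, mul_one]
        have hpd00 : pd f (0 - 0) 0 (x, y) = f (x, y) := by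
          rw [show (0 - 0 : ℕ) = 0 from rfl, pd_zero_zero]
        rw [hpd00]
        norm_num
      · rw [if_neg hn0]
        apply Finset.sum_eq_zero
        intro i hi
        have h2 := Nat.lt_succ_iff.mp (Finset.mem_range.mp hi)
        rw [tsum_mul_left, hvanish (n - i) i (by omega) (by omega), mul_zero]
    rw [Finset.sum_congr rfl hinner]
    rw [Finset.sum_ite_eq' (Finset.range r) 0 (fun _ => f (x, y))]
    rw [if_pos (Finset.mem_range.mpr (by omega : 0 < r))]
  -- main identity
  have hGop : (∑' k : ℤ, ∑' j : ℤ, χ (u - (k : ℝ), v - (j : ℝ)) * f ((k : ℝ) / w, (j : ℝ) / w))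
      = ∑' kj : ℤ × ℤ, χk kj * f ((kj.1 : ℝ) / w, (kj.2 : ℝ) / w) :=
    (Summable.tsum_prod hsum_f).symm
  rw [hGop]
  have hsplit : (∑' kj : ℤ × ℤ, χk kj * f ((kj.1 : ℝ) / w, (kj.2 : ℝ) / w)) - f (x, y) =
      ∑' kj : ℤ × ℤ, χk kj * Rem kj := by
    have h1 : (∑' kj : ℤ × ℤ, χk kj * f ((kj.1 : ℝ) / w, (kj.2 : ℝ) / w)) =
        (∑' kj : ℤ × ℤ, χk kj * E kj) + ∑' kj : ℤ × ℤ, χk kj * Rem kj := by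
      rw [← Summable.tsum_add hsum_E hsum_R]
      apply tsum_congr
      intro kj
      rw [hRemdef]
      ring
    rw [h1, htsum_E]
    ring
  rw [hsplit]
  -- final estimate
  have hmaj : Summable (fun kj : ℤ × ℤ => |χk kj| * (K kj / (r.factorial : ℝ))) := by
    have hEq : ∀ kj : ℤ × ℤ, |χk kj| * (K kj / (r.factorial : ℝ)) =
        ∑ i ∈ Finset.range (r + 1),
          ((r.choose i : ℝ) * S i / (r.factorial : ℝ)) *
            (|χk kj| * |A kj| ^ (r - i) * |B kj| ^ i) := by
      intro kj
      rw [hKdef, Finset.sum_div, Finset.mul_sum]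
      apply Finset.sum_congr rfl
      intro i _
      ring
    apply Summable.congr _ (fun kj => (hEq kj).symm)
    apply summable_sum
    intro i hi
    apply Summable.mul_left
    exact habs_poly (r - i) i (by
      have := Nat.lt_succ_iff.mp (Finset.mem_range.mp hi); omega)
  have habsR : Summable (fun kj : ℤ × ℤ => |χk kj * Rem kj|) := by
    apply Summable.of_nonneg_of_le (fun kj => abs_nonneg _) ?_ hmaj
    intro kj
    rw [abs_mul]
    exact mul_le_mul_of_nonneg_left (hRb kj) (abs_nonneg _)
  have h2 : |∑' kj : ℤ × ℤ, χk kj * Rem kj| ≤ ∑' kj : ℤ × ℤ, |χk kj * Rem kj| := by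
    have hn : Summable (fun kj : ℤ × ℤ => ‖χk kj * Rem kj‖) := by
      simpa only [Real.norm_eq_abs] using habsR
    have hb := norm_tsum_le_tsum_norm hn
    simpa only [Real.norm_eq_abs] using hb
  refine h2.trans ?_
  have h3 : (∑' kj : ℤ × ℤ, |χk kj * Rem kj|) ≤
      ∑' kj : ℤ × ℤ, |χk kj| * (K kj / (r.factorial : ℝ)) := by
    apply Summable.tsum_le_tsum _ habsR hmaj
    intro kj
    rw [abs_mul]
    exact mul_le_mul_of_nonneg_left (hRb kj) (abs_nonneg _)
  refine h3.trans ?_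
  have hEq2 : ∀ kj : ℤ × ℤ, |χk kj| * (K kj / (r.factorial : ℝ)) =
      ∑ i ∈ Finset.range (r + 1),
        ((r.choose i : ℝ) * S i / (r.factorial : ℝ)) *
          (|χk kj| * |A kj| ^ (r - i) * |B kj| ^ i) := by
    intro kj
    rw [hKdef, Finset.sum_div, Finset.mul_sum]
    apply Finset.sum_congr rfl
    intro i _
    ring
  rw [tsum_congr hEq2]
  rw [Summable.tsum_finsetSum (fun i hi => Summable.mul_left _
    (habs_poly (r - i) i (by
      have := Nat.lt_succ_iff.mp (Finset.mem_range.mp hi); omega)))]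
  have h4 : ∀ i ∈ Finset.range (r + 1),
      (∑' kj : ℤ × ℤ, ((r.choose i : ℝ) * S i / (r.factorial : ℝ)) *
        (|χk kj| * |A kj| ^ (r - i) * |B kj| ^ i)) ≤
      ((r.choose i : ℝ) * S i / (r.factorial : ℝ)) * ((Mmoment χ r).toReal / w ^ r) := by
    intro i hi
    have hir := Nat.lt_succ_iff.mp (Finset.mem_range.mp hi)
    rw [tsum_mul_left]
    apply mul_le_mul_of_nonneg_left (htsum_poly (r - i) i (by omega))
    have := hS0 (r - i) i (by omega)
    rw [hSdef]
    positivity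
  refine (Finset.sum_le_sum h4).trans ?_
  apply le_of_eq
  rw [Finset.mul_sum]
  apply Finset.sum_congr rfl
  intro i _
  have hfac : (r.factorial : ℝ) ≠ 0 := by positivity
  have hwr : w ^ r ≠ 0 := pow_ne_zero _ hw'
  rw [hSdef]
  simp only []
  field_simp
end

section
/- Let r ∈ ℕ, r ≥ 1, and let χ satisfy M_{r−1}(χ) < ∞ and the moment condition of order r with constant c. Then for every homogeneous polynomial P of degree r−1 in two real variables and every w > 0, (G_w P)(x,y) = P(x,y) for all (x,y) ∈ ℝ²; in particular G_w maps homogeneous polynomials of degree r−1 to homogeneous polynomials of the same degree. -/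
open MeasureTheory Filter
open scoped ENNReal BigOperators Topology

lemma sumF_top (χ : ℝ × ℝ → ℝ) (n : ℕ) (hM : Mmoment χ n < ⊤) (u v : ℝ)
    (q₁ q₂ : ℕ) (hq : q₁ + q₂ = n) :
    Summable (fun kj : ℤ × ℤ =>
      |χ (u - (kj.1 : ℝ), v - (kj.2 : ℝ))| * |u - (kj.1 : ℝ)| ^ q₁ * |v - (kj.2 : ℝ)| ^ q₂) := by
  have h1 : absMoment χ q₁ q₂ < ⊤ := by
    refine lt_of_le_of_lt ?_ hM
    exact le_iSup (fun p : {p : ℕ × ℕ // p.1 + p.2 = n} => absMoment χ p.1.1 p.1.2) ⟨(q₁, q₂), hq⟩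
  have h2 : (∑' kj : ℤ × ℤ, ENNReal.ofReal
      (|χ (u - (kj.1 : ℝ), v - (kj.2 : ℝ))| * |u - (kj.1 : ℝ)| ^ q₁ * |v - (kj.2 : ℝ)| ^ q₂)) ≠ ⊤ := by
    have hp : (∑' kj : ℤ × ℤ, ENNReal.ofReal
        (|χ (u - (kj.1 : ℝ), v - (kj.2 : ℝ))| * |u - (kj.1 : ℝ)| ^ q₁ * |v - (kj.2 : ℝ)| ^ q₂))
        = ∑' k : ℤ, ∑' j : ℤ, ENNReal.ofReal
        (|χ (u - (k : ℝ), v - (j : ℝ))| * |u - (k : ℝ)| ^ q₁ * |v - (j : ℝ)| ^ q₂) :=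
      ENNReal.tsum_prod (f := fun (k j : ℤ) => ENNReal.ofReal
        (|χ (u - (k : ℝ), v - (j : ℝ))| * |u - (k : ℝ)| ^ q₁ * |v - (j : ℝ)| ^ q₂))
    rw [hp]
    refine ne_of_lt (lt_of_le_of_lt ?_ h1)
    unfold absMoment
    exact le_iSup₂ (f := fun (u v : ℝ) => ∑' k : ℤ, ∑' j : ℤ,
      ENNReal.ofReal (|χ (u - (k : ℝ), v - (j : ℝ))| * |u - (k : ℝ)| ^ q₁ * |v - (j : ℝ)| ^ q₂)) u v
  have h3 := ENNReal.summable_toReal h2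
  refine h3.congr fun kj => ?_
  rw [ENNReal.toReal_ofReal (by positivity)]

lemma sumF (χ : ℝ × ℝ → ℝ) (C : ℝ) (hC : ∀ p, |χ p| ≤ C) (n : ℕ)
    (hM : Mmoment χ n < ⊤) (u v : ℝ) (p₁ p₂ : ℕ) (hd : p₁ + p₂ ≤ n) :
    Summable (fun kj : ℤ × ℤ =>
      |χ (u - (kj.1 : ℝ), v - (kj.2 : ℝ))| * |u - (kj.1 : ℝ)| ^ p₁ * |v - (kj.2 : ℝ)| ^ p₂) := by
  set h : ℤ × ℤ → ℝ := fun kj =>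
    if |u - (kj.1 : ℝ)| ≤ 1 ∧ |v - (kj.2 : ℝ)| ≤ 1 then max C 0 else 0 with hh
  have hsumh : Summable h := by
    refine summable_of_ne_finset_zero
      (s := (Finset.Icc ⌈u - 1⌉ ⌊u + 1⌋) ×ˢ (Finset.Icc ⌈v - 1⌉ ⌊v + 1⌋)) fun kj hkj => ?_
    show (if |u - (kj.1 : ℝ)| ≤ 1 ∧ |v - (kj.2 : ℝ)| ≤ 1 then max C 0 else 0) = 0
    rw [if_neg]
    intro ⟨h1, h2⟩
    apply hkj
    rw [Finset.mem_product, Finset.mem_Icc, Finset.mem_Icc]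
    rw [abs_le] at h1 h2
    constructor
    · exact ⟨Int.ceil_le.mpr (by linarith), Int.le_floor.mpr (by linarith)⟩
    · exact ⟨Int.ceil_le.mpr (by linarith), Int.le_floor.mpr (by linarith)⟩
  have hsumG : Summable (fun kj : ℤ × ℤ => h kj + ∑ q ∈ Finset.HasAntidiagonal.antidiagonal n,
      |χ (u - (kj.1 : ℝ), v - (kj.2 : ℝ))| * |u - (kj.1 : ℝ)| ^ q.1 * |v - (kj.2 : ℝ)| ^ q.2) := by
    refine hsumh.add (summable_sum fun q hq => ?_)
    exact sumF_top χ n hM u v q.1 q.2 (Finset.HasAntidiagonal.mem_antidiagonal.mp hq)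
  refine Summable.of_nonneg_of_le (fun kj => by positivity) (fun kj => ?_) hsumG
  obtain ⟨k, j⟩ := kj
  simp only [hh]
  by_cases hbox : |u - (k : ℝ)| ≤ 1 ∧ |v - (j : ℝ)| ≤ 1
  · rw [if_pos hbox]
    have h1 : |χ (u - (k : ℝ), v - (j : ℝ))| * |u - (k : ℝ)| ^ p₁ * |v - (j : ℝ)| ^ p₂ ≤ max C 0 := by
      calc |χ (u - (k : ℝ), v - (j : ℝ))| * |u - (k : ℝ)| ^ p₁ * |v - (j : ℝ)| ^ p₂
          ≤ max C 0 * 1 * 1 := by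
            gcongr
            · exact le_max_of_le_left (hC _)
            · exact pow_le_one₀ (abs_nonneg _) hbox.1
            · exact pow_le_one₀ (abs_nonneg _) hbox.2
        _ = max C 0 := by ring
    have h2 : (0:ℝ) ≤ ∑ q ∈ Finset.HasAntidiagonal.antidiagonal n,
        |χ (u - (k : ℝ), v - (j : ℝ))| * |u - (k : ℝ)| ^ q.1 * |v - (j : ℝ)| ^ q.2 :=
      Finset.sum_nonneg fun q _ => by positivity
    linarith
  · rw [if_neg hbox]
    have hq : ∃ q : ℕ × ℕ, q.1 + q.2 = n ∧
        |χ (u - (k : ℝ), v - (j : ℝ))| * |u - (k : ℝ)| ^ p₁ * |v - (j : ℝ)| ^ p₂ ≤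
        |χ (u - (k : ℝ), v - (j : ℝ))| * |u - (k : ℝ)| ^ q.1 * |v - (j : ℝ)| ^ q.2 := by
      rcases not_and_or.mp hbox with hs | hs
      · push_neg at hs
        refine ⟨(p₁ + (n - (p₁ + p₂)), p₂), by omega, ?_⟩
        dsimp only
        have h4 : |u - (k : ℝ)| ^ p₁ ≤ |u - (k : ℝ)| ^ (p₁ + (n - (p₁ + p₂))) :=
          pow_le_pow_right₀ hs.le (Nat.le_add_right _ _)
        have hb0 : (0:ℝ) ≤ |χ (u - (k : ℝ), v - (j : ℝ))| := abs_nonneg _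
        have hb1 : (0:ℝ) ≤ |v - (j : ℝ)| ^ p₂ := by positivity
        exact mul_le_mul_of_nonneg_right (mul_le_mul_of_nonneg_left h4 hb0) hb1
      · push_neg at hs
        refine ⟨(p₁, p₂ + (n - (p₁ + p₂))), by omega, ?_⟩
        dsimp only
        have h4 : |v - (j : ℝ)| ^ p₂ ≤ |v - (j : ℝ)| ^ (p₂ + (n - (p₁ + p₂))) :=
          pow_le_pow_right₀ hs.le (Nat.le_add_right _ _)
        have hb0 : (0:ℝ) ≤ |χ (u - (k : ℝ), v - (j : ℝ))| * |u - (k : ℝ)| ^ p₁ := by positivity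
        exact mul_le_mul_of_nonneg_left h4 hb0
    obtain ⟨q, hqn, hqle⟩ := hq
    refine le_trans hqle ?_
    have := Finset.single_le_sum (f := fun q : ℕ × ℕ =>
        |χ (u - (k : ℝ), v - (j : ℝ))| * |u - (k : ℝ)| ^ q.1 * |v - (j : ℝ)| ^ q.2)
      (fun q _ => by positivity) (Finset.HasAntidiagonal.mem_antidiagonal.mpr hqn)
    linarith

lemma sumf (χ : ℝ × ℝ → ℝ) (C : ℝ) (hC : ∀ p, |χ p| ≤ C) (n : ℕ)
    (hM : Mmoment χ n < ⊤) (u v : ℝ) (p₁ p₂ : ℕ) (hd : p₁ + p₂ ≤ n) :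
    Summable (fun kj : ℤ × ℤ =>
      χ (u - (kj.1 : ℝ), v - (kj.2 : ℝ)) * (u - (kj.1 : ℝ)) ^ p₁ * (v - (kj.2 : ℝ)) ^ p₂) := by
  refine Summable.of_norm ?_
  refine (sumF χ C hC n hM u v p₁ p₂ hd).congr fun kj => ?_
  rw [Real.norm_eq_abs, abs_mul, abs_mul, abs_pow, abs_pow]

lemma momentVal (χ : ℝ × ℝ → ℝ) (C : ℝ) (hC : ∀ p, |χ p| ≤ C)
    (hpart : PartitionOfUnity2 χ) (r : ℕ) (hr : 1 ≤ r) (c : ℝ)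
    (hM : Mmoment χ (r - 1) < ⊤) (hmom : MomentCondition χ r c)
    (u v : ℝ) (p₁ p₂ : ℕ) (hd : p₁ + p₂ ≤ r - 1) :
    (∑' kj : ℤ × ℤ, χ (u - (kj.1 : ℝ), v - (kj.2 : ℝ)) * (u - (kj.1 : ℝ)) ^ p₁ *
      (v - (kj.2 : ℝ)) ^ p₂) = if p₁ = 0 ∧ p₂ = 0 then 1 else 0 := by
  have hS := sumf χ C hC (r - 1) hM u v p₁ p₂ hd
  rw [Summable.tsum_prod' hS (fun k => hS.prod_factor k)]
  by_cases h0 : p₁ = 0 ∧ p₂ = 0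
  · rw [if_pos h0]
    obtain ⟨h1, h2⟩ := h0
    subst h1; subst h2
    simpa [pow_zero, mul_one] using hpart u v
  · rw [if_neg h0]
    exact hmom.1 u v p₁ p₂ (by omega) hd

/-- G_w reproduces homogeneous polynomials of degree r − 1. -/
theorem statement1 (χ : ℝ × ℝ → ℝ) (hχc : Continuous χ) (hχb : ∃ C : ℝ, ∀ p, |χ p| ≤ C)
    (hpart : PartitionOfUnity2 χ)
    (r : ℕ) (hr : 1 ≤ r) (c : ℝ)
    (hMr1 : Mmoment χ (r - 1) < ⊤)
    (hmom : MomentCondition χ r c)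
    (P : MvPolynomial (Fin 2) ℝ) (hP : P.IsHomogeneous (r - 1))
    (w : ℝ) (hw : 0 < w) (x y : ℝ) :
    Gop χ w (fun p => MvPolynomial.eval ![p.1, p.2] P) x y =
      MvPolynomial.eval ![x, y] P := by
  obtain ⟨C, hC⟩ := hχb
  have hwne : w ≠ 0 := ne_of_gt hw
  set n := r - 1 with hn
  -- evaluation of P as a finite sum over its support
  have hEval : ∀ a b : ℝ, MvPolynomial.eval ![a, b] P =
      ∑ m ∈ P.support, MvPolynomial.coeff m P * a ^ (m 0) * b ^ (m 1) := by
    intro a b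
    conv_lhs => rw [← MvPolynomial.support_sum_monomial_coeff P]
    rw [map_sum]
    refine Finset.sum_congr rfl fun m hm => ?_
    rw [MvPolynomial.eval_monomial, Finsupp.prod_fintype _ _ (fun i => pow_zero _),
      Fin.prod_univ_two]
    simp [mul_assoc]
  have hDeg : ∀ m ∈ P.support, m 0 + m 1 = n := by
    intro m hm
    have := hP (MvPolynomial.mem_support_iff.mp hm)
    simpa [Finsupp.weight, Finsupp.linearCombination, Finsupp.sum_fintype,
      Fin.sum_univ_two] using this
  -- rewriting sample points
  have hxk : ∀ k : ℤ, ((k : ℝ)) / w = x + (-(1 / w)) * (w * x - (k : ℝ)) := by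
    intro k; field_simp; ring
  have hyk : ∀ j : ℤ, ((j : ℝ)) / w = y + (-(1 / w)) * (w * y - (j : ℝ)) := by
    intro j; field_simp; ring
  -- the pointwise expansion
  have key : ∀ (k j : ℤ),
      χ (w * x - (k : ℝ), w * y - (j : ℝ)) *
        MvPolynomial.eval ![(k : ℝ) / w, (j : ℝ) / w] P
      = ∑ m ∈ P.support, ∑ i ∈ Finset.range (m 0 + 1), ∑ i' ∈ Finset.range (m 1 + 1),
          (MvPolynomial.coeff m P * (x ^ i * (-(1 / w)) ^ (m 0 - i) * ((m 0).choose i : ℝ)) *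
            (y ^ i' * (-(1 / w)) ^ (m 1 - i') * ((m 1).choose i' : ℝ))) *
          (χ (w * x - (k : ℝ), w * y - (j : ℝ)) * (w * x - (k : ℝ)) ^ (m 0 - i) *
            (w * y - (j : ℝ)) ^ (m 1 - i')) := by
    intro k j
    rw [hEval, Finset.mul_sum]
    refine Finset.sum_congr rfl fun m hm => ?_
    rw [hxk k, hyk j, add_pow, add_pow]
    simp only [Finset.mul_sum, Finset.sum_mul]
    rw [Finset.sum_comm]
    refine Finset.sum_congr rfl fun i hi => ?_
    refine Finset.sum_congr rfl fun i' hi' => ?_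
    rw [mul_pow (-(1 / w)) (w * x - (k : ℝ)), mul_pow (-(1 / w)) (w * y - (j : ℝ))]
    ring
  -- summability of each piece
  have Sgen : ∀ p₁ p₂ : ℕ, p₁ + p₂ ≤ n → Summable (fun kj : ℤ × ℤ =>
      χ (w * x - (kj.1 : ℝ), w * y - (kj.2 : ℝ)) * (w * x - (kj.1 : ℝ)) ^ p₁ *
        (w * y - (kj.2 : ℝ)) ^ p₂) :=
    fun p₁ p₂ hd => sumf χ C hC n hMr1 (w * x) (w * y) p₁ p₂ hd
  have hsum_main : Summable (fun kj : ℤ × ℤ =>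
      χ (w * x - (kj.1 : ℝ), w * y - (kj.2 : ℝ)) *
        MvPolynomial.eval ![(kj.1 : ℝ) / w, (kj.2 : ℝ) / w] P) := by
    refine Summable.congr ?_ (fun kj => (key kj.1 kj.2).symm)
    refine summable_sum fun m hm => summable_sum fun i hi => summable_sum fun i' hi' => ?_
    exact Summable.mul_left _ (Sgen _ _ (by have := hDeg m hm; omega))
  -- Gop as a sum over ℤ × ℤ
  have hGop : Gop χ w (fun p => MvPolynomial.eval ![p.1, p.2] P) x y
      = ∑' kj : ℤ × ℤ, χ (w * x - (kj.1 : ℝ), w * y - (kj.2 : ℝ)) *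
          MvPolynomial.eval ![(kj.1 : ℝ) / w, (kj.2 : ℝ) / w] P := by
    unfold Gop
    exact (Summable.tsum_prod' hsum_main (fun k => hsum_main.prod_factor k)).symm
  rw [hGop]
  have step1 : (∑' kj : ℤ × ℤ, χ (w * x - (kj.1 : ℝ), w * y - (kj.2 : ℝ)) *
      MvPolynomial.eval ![(kj.1 : ℝ) / w, (kj.2 : ℝ) / w] P)
      = ∑ m ∈ P.support, ∑ i ∈ Finset.range (m 0 + 1), ∑ i' ∈ Finset.range (m 1 + 1),
          (MvPolynomial.coeff m P * (x ^ i * (-(1 / w)) ^ (m 0 - i) * ((m 0).choose i : ℝ)) *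
            (y ^ i' * (-(1 / w)) ^ (m 1 - i') * ((m 1).choose i' : ℝ))) *
          (∑' kj : ℤ × ℤ, χ (w * x - (kj.1 : ℝ), w * y - (kj.2 : ℝ)) *
            (w * x - (kj.1 : ℝ)) ^ (m 0 - i) * (w * y - (kj.2 : ℝ)) ^ (m 1 - i')) := by
    refine (tsum_congr fun kj : ℤ × ℤ => key kj.1 kj.2).trans ?_
    rw [Summable.tsum_finsetSum (fun m hm => summable_sum fun i hi => summable_sum fun i' hi' =>
      Summable.mul_left _ (Sgen _ _ (by have := hDeg m hm; omega)))]
    refine Finset.sum_congr rfl fun m hm => ?_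
    rw [Summable.tsum_finsetSum (fun i hi => summable_sum fun i' hi' =>
      Summable.mul_left _ (Sgen _ _ (by have := hDeg m hm; omega)))]
    refine Finset.sum_congr rfl fun i hi => ?_
    rw [Summable.tsum_finsetSum (fun i' hi' => Summable.mul_left _ (Sgen _ _ (by have := hDeg m hm; omega)))]
    refine Finset.sum_congr rfl fun i' hi' => ?_
    exact tsum_mul_left
  rw [step1]
  have step2 : ∀ m ∈ P.support,
      (∑ i ∈ Finset.range (m 0 + 1), ∑ i' ∈ Finset.range (m 1 + 1),
          (MvPolynomial.coeff m P * (x ^ i * (-(1 / w)) ^ (m 0 - i) * ((m 0).choose i : ℝ)) *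
            (y ^ i' * (-(1 / w)) ^ (m 1 - i') * ((m 1).choose i' : ℝ))) *
          (∑' kj : ℤ × ℤ, χ (w * x - (kj.1 : ℝ), w * y - (kj.2 : ℝ)) *
            (w * x - (kj.1 : ℝ)) ^ (m 0 - i) * (w * y - (kj.2 : ℝ)) ^ (m 1 - i')))
      = MvPolynomial.coeff m P * x ^ (m 0) * y ^ (m 1) := by
    intro m hm
    have hdm := hDeg m hm
    have hTval : ∀ i i' : ℕ, i ∈ Finset.range (m 0 + 1) → i' ∈ Finset.range (m 1 + 1) →
        (∑' kj : ℤ × ℤ, χ (w * x - (kj.1 : ℝ), w * y - (kj.2 : ℝ)) *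
          (w * x - (kj.1 : ℝ)) ^ (m 0 - i) * (w * y - (kj.2 : ℝ)) ^ (m 1 - i'))
        = if m 0 - i = 0 ∧ m 1 - i' = 0 then 1 else 0 := by
      intro i i' hi hi'
      exact momentVal χ C hC hpart r hr c hMr1 hmom (w * x) (w * y) _ _ (by omega)
    rw [Finset.sum_congr rfl fun i hi => Finset.sum_congr rfl fun i' hi' => by
      rw [hTval i i' hi hi']]
    rw [Finset.sum_eq_single (m 0)]
    · rw [Finset.sum_eq_single (m 1)]
      · rw [if_pos ⟨Nat.sub_self _, Nat.sub_self _⟩]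
        simp [Nat.sub_self]
      · intro i' hi' hne
        rw [if_neg (by simp only [Finset.mem_range] at hi'; omega), mul_zero]
      · intro h; exact absurd (Finset.self_mem_range_succ _) h
    · intro i hi hne
      refine Finset.sum_eq_zero fun i' hi' => ?_
      rw [if_neg (by simp only [Finset.mem_range] at hi; omega), mul_zero]
    · intro h; exact absurd (Finset.self_mem_range_succ _) h
  rw [Finset.sum_congr rfl step2]
  exact (hEval x y).symm
end

section
/- Let χ satisfy M₂(χ) < ∞ and let f ∈ C²(ℝ²) with ‖∂²f/∂x²‖_∞ ≤ M₁, ‖∂²f/∂x∂y‖_∞ ≤ M₂, ‖∂²f/∂y²‖_∞ ≤ M₃, and set M := max{M₁, M₂, M₃}. Define the remainder R₂^w(x,y) := (S_w f)(x,y) − (G_w f)(x,y) − (1/(2w)) (G_w (∂f/∂x))(x,y) − (1/(2w)) (G_w (∂f/∂y))(x,y). Then for every w > 0 and every (x,y) ∈ ℝ², all the series involved converge absolutely and |R₂^w(x,y)| ≤ (7M / (12 w²)) · M_{(0,0)}(χ); in particular S_w f = G_w f + (1/(2w)) G_w(∂f/∂x) + (1/(2w)) G_w(∂f/∂y) + R₂^w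 with w·R₂^w(x,y) → 0 uniformly as w → ∞. -/
open MeasureTheory Filter
open scoped ENNReal BigOperators Topology

lemma pd_two_zero (f : ℝ × ℝ → ℝ) : pd f 2 0 = pX (pX f) := rfl
lemma pd_one_one (f : ℝ × ℝ → ℝ) : pd f 1 1 = pX (pY f) := rfl
lemma pd_zero_two (f : ℝ × ℝ → ℝ) : pd f 0 2 = pY (pY f) := rfl
lemma pd_one_zero (f : ℝ × ℝ → ℝ) : pd f 1 0 = pX f := rfl
lemma pd_zero_one (f : ℝ × ℝ → ℝ) : pd f 0 1 = pY f := rfl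

lemma hasDerivAt_sliceX {f : ℝ × ℝ → ℝ} {t b : ℝ} (hf : DifferentiableAt ℝ f (t, b)) :
    HasDerivAt (fun s => f (s, b)) (fderiv ℝ f (t, b) (1, 0)) t := by
  have h1 : HasDerivAt (fun s : ℝ => (s, b)) ((1 : ℝ), (0 : ℝ)) t :=
    (hasDerivAt_id t).prodMk (hasDerivAt_const t b)
  exact hf.hasFDerivAt.comp_hasDerivAt t h1

lemma hasDerivAt_sliceY {f : ℝ × ℝ → ℝ} {a t : ℝ} (hf : DifferentiableAt ℝ f (a, t)) :
    HasDerivAt (fun s => f (a, s)) (fderiv ℝ f (a, t) (0, 1)) t := by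
  have h1 : HasDerivAt (fun s : ℝ => (a, s)) ((0 : ℝ), (1 : ℝ)) t :=
    (hasDerivAt_const t a).prodMk (hasDerivAt_id t)
  exact hf.hasFDerivAt.comp_hasDerivAt t h1

lemma pX_eq {f : ℝ × ℝ → ℝ} (hf : Differentiable ℝ f) :
    pX f = fun p => fderiv ℝ f p (1, 0) := by
  funext p
  exact (hasDerivAt_sliceX (hf (p.1, p.2))).deriv

lemma pY_eq {f : ℝ × ℝ → ℝ} (hf : Differentiable ℝ f) :
    pY f = fun p => fderiv ℝ f p (0, 1) := by
  funext p
  exact (hasDerivAt_sliceY (hf (p.1, p.2))).deriv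

lemma contDiff_pX_s2 {f : ℝ × ℝ → ℝ} (hf : ContDiff ℝ 2 f) : ContDiff ℝ 1 (pX f) := by
  rw [pX_eq (hf.differentiable two_ne_zero)]
  exact (hf.fderiv_right (le_refl _)).clm_apply contDiff_const

lemma contDiff_pY_s2 {f : ℝ × ℝ → ℝ} (hf : ContDiff ℝ 2 f) : ContDiff ℝ 1 (pY f) := by
  rw [pY_eq (hf.differentiable two_ne_zero)]
  exact (hf.fderiv_right (le_refl _)).clm_apply contDiff_const

lemma diff_sliceX {g : ℝ × ℝ → ℝ} (hg : Differentiable ℝ g) (b : ℝ) :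
    Differentiable ℝ (fun t => g (t, b)) :=
  hg.comp (differentiable_id.prodMk (differentiable_const b))

lemma diff_sliceY {g : ℝ × ℝ → ℝ} (hg : Differentiable ℝ g) (a : ℝ) :
    Differentiable ℝ (fun t => g (a, t)) :=
  hg.comp ((differentiable_const a).prodMk differentiable_id)

/-- Symmetry of mixed partial derivatives. -/
lemma pYpX_eq_pXpY {f : ℝ × ℝ → ℝ} (hf : ContDiff ℝ 2 f) : pY (pX f) = pX (pY f) := by
  have hfd : Differentiable ℝ f := hf.differentiable two_ne_zero
  set F := fderiv ℝ f with hF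
  have hFc : ContDiff ℝ 1 F := hf.fderiv_right (le_refl _)
  have hFd : Differentiable ℝ F := hFc.differentiable one_ne_zero
  have key : ∀ (e₁ e₂ : ℝ × ℝ) (p : ℝ × ℝ), Differentiable ℝ (fun q => F q e₁) ∧
      fderiv ℝ (fun q => F q e₁) p e₂ = fderiv ℝ F p e₂ e₁ := by
    intro e₁ e₂ p
    constructor
    · exact fun q => (hFd q).clm_apply (differentiableAt_const _)
    · have h := (hFd p).hasFDerivAt.clm_apply (hasFDerivAt_const e₁ p)
      rw [h.fderiv]
      simp
  have symm : ∀ p : ℝ × ℝ, fderiv ℝ F p (0,1) (1,0) = fderiv ℝ F p (1,0) (0,1) := fun p =>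
    second_derivative_symmetric (fun y => (hfd y).hasFDerivAt) (hFd p).hasFDerivAt _ _
  have h1 : pX f = fun p => F p (1, 0) := pX_eq hfd
  have h2 : pY f = fun p => F p (0, 1) := pY_eq hfd
  funext p
  have e1 : pY (pX f) p = fderiv ℝ F p (0,1) (1,0) := by
    rw [h1]
    have hd : Differentiable ℝ (fun q => F q ((1:ℝ),(0:ℝ))) := (key (1,0) (0,1) p).1
    have := pY_eq hd
    rw [this]
    exact (key (1,0) (0,1) p).2
  have e2 : pX (pY f) p = fderiv ℝ F p (1,0) (0,1) := by
    rw [h2]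
    have hd : Differentiable ℝ (fun q => F q ((0:ℝ),(1:ℝ))) := (key (0,1) (1,0) p).1
    have := pX_eq hd
    rw [this]
    exact (key (0,1) (1,0) p).2
  rw [e1, e2, symm]

lemma mvt_abs {φ : ℝ → ℝ} {K : ℝ} (hφ : Differentiable ℝ φ)
    (hK : ∀ t, |deriv φ t| ≤ K) (s t₀ : ℝ) : |φ s - φ t₀| ≤ K * |s - t₀| := by
  have := Convex.norm_image_sub_le_of_norm_deriv_le (f := φ) (s := Set.univ)
    (fun x _ => hφ x) (fun x _ => hK x) convex_univ trivial trivial (x := t₀) (y := s)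
  simpa [Real.norm_eq_abs] using this

lemma taylor_one {φ : ℝ → ℝ} {K s t₀ : ℝ} (hφ : Differentiable ℝ φ)
    (hφ' : Differentiable ℝ (deriv φ)) (hK : ∀ t, |deriv (deriv φ) t| ≤ K) (h : t₀ ≤ s) :
    |φ s - φ t₀ - deriv φ t₀ * (s - t₀)| ≤ K / 2 * (s - t₀) ^ 2 := by
  have hKpos : 0 ≤ K := le_trans (abs_nonneg _) (hK 0)
  have hd1 : ∀ t, |deriv φ t - deriv φ t₀| ≤ K * |t - t₀| := fun t =>
    mvt_abs hφ' hK t t₀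
  have hci : IntervalIntegrable (deriv φ) volume t₀ s :=
    (hφ'.continuous).intervalIntegrable t₀ s
  have key : φ s - φ t₀ - deriv φ t₀ * (s - t₀)
      = ∫ t in t₀..s, (deriv φ t - deriv φ t₀) := by
    rw [intervalIntegral.integral_sub hci intervalIntegrable_const,
      intervalIntegral.integral_deriv_eq_sub (fun x _ => hφ x) hci,
      intervalIntegral.integral_const]
    simp [smul_eq_mul]; ring
  rw [key]
  calc |∫ t in t₀..s, (deriv φ t - deriv φ t₀)|
      ≤ ∫ t in t₀..s, |deriv φ t - deriv φ t₀| := by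
        simpa [Real.norm_eq_abs] using intervalIntegral.norm_integral_le_integral_norm (f := fun t => deriv φ t - deriv φ t₀) h
    _ ≤ ∫ t in t₀..s, K * (t - t₀) := by
        apply intervalIntegral.integral_mono_on h
        · exact ((hφ'.continuous.sub continuous_const).abs).intervalIntegrable t₀ s
        · exact (Continuous.intervalIntegrable (by continuity) t₀ s)
        · intro t ht
          have := hd1 t
          rwa [abs_of_nonneg (sub_nonneg.mpr ht.1)] at this
    _ = K / 2 * (s - t₀) ^ 2 := by
        rw [intervalIntegral.integral_const_mul]
        have : (∫ t in t₀..s, (t - t₀)) = ∫ t in (t₀ - t₀)..(s - t₀), t := by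
          rw [← intervalIntegral.integral_comp_sub_right (fun x => x) t₀]
        rw [this, sub_self, integral_id]
        ring

section F2

variable {f : ℝ × ℝ → ℝ} {M₁ M₂ M₃ : ℝ}

lemma taylorX (hf : ContDiff ℝ 2 f) (hb1 : ∀ z, |pd f 2 0 z| ≤ M₁) {a u : ℝ} (b : ℝ)
    (hau : a ≤ u) :
    |f (u, b) - f (a, b) - pd f 1 0 (a, b) * (u - a)| ≤ M₁ / 2 * (u - a) ^ 2 := by
  have hfd := hf.differentiable two_ne_zero
  have hpx := (contDiff_pX_s2 hf).differentiable one_ne_zero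
  have h1 : Differentiable ℝ (fun t => f (t, b)) := diff_sliceX hfd b
  have h2 : Differentiable ℝ (deriv (fun t => f (t, b))) := by
    show Differentiable ℝ (fun t => pX f (t, b))
    exact diff_sliceX hpx b
  have h3 : ∀ t, |deriv (deriv (fun s => f (s, b))) t| ≤ M₁ := fun t => hb1 (t, b)
  exact taylor_one h1 h2 h3 hau

lemma taylorY (hf : ContDiff ℝ 2 f) (hb3 : ∀ z, |pd f 0 2 z| ≤ M₃) (a : ℝ) {b v : ℝ}
    (hbv : b ≤ v) :
    |f (a, v) - f (a, b) - pd f 0 1 (a, b) * (v - b)| ≤ M₃ / 2 * (v - b) ^ 2 := by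
  have hfd := hf.differentiable two_ne_zero
  have hpy := (contDiff_pY_s2 hf).differentiable one_ne_zero
  have h1 : Differentiable ℝ (fun t => f (a, t)) := diff_sliceY hfd a
  have h2 : Differentiable ℝ (deriv (fun t => f (a, t))) := by
    show Differentiable ℝ (fun t => pY f (a, t))
    exact diff_sliceY hpy a
  have h3 : ∀ t, |deriv (deriv (fun s => f (a, s))) t| ≤ M₃ := fun t => hb3 (a, t)
  exact taylor_one h1 h2 h3 hbv

lemma mvt_pd01_x (hf : ContDiff ℝ 2 f) (hb2 : ∀ z, |pd f 1 1 z| ≤ M₂) (u a b : ℝ) :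
    |pd f 0 1 (u, b) - pd f 0 1 (a, b)| ≤ M₂ * |u - a| := by
  have hpy := (contDiff_pY_s2 hf).differentiable one_ne_zero
  have h1 : Differentiable ℝ (fun t => pY f (t, b)) := diff_sliceX hpy b
  have h2 : ∀ t, |deriv (fun s => pY f (s, b)) t| ≤ M₂ := fun t => hb2 (t, b)
  exact mvt_abs h1 h2 u a

lemma mvt_pd01_y (hf : ContDiff ℝ 2 f) (hb3 : ∀ z, |pd f 0 2 z| ≤ M₃) (a v y : ℝ) :
    |pd f 0 1 (a, v) - pd f 0 1 (a, y)| ≤ M₃ * |v - y| := by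
  have hpy := (contDiff_pY_s2 hf).differentiable one_ne_zero
  have h1 : Differentiable ℝ (fun t => pY f (a, t)) := diff_sliceY hpy a
  have h2 : ∀ t, |deriv (fun s => pY f (a, s)) t| ≤ M₃ := fun t => hb3 (a, t)
  exact mvt_abs h1 h2 v y

lemma mvt_pd10_x (hf : ContDiff ℝ 2 f) (hb1 : ∀ z, |pd f 2 0 z| ≤ M₁) (u x v : ℝ) :
    |pd f 1 0 (u, v) - pd f 1 0 (x, v)| ≤ M₁ * |u - x| := by
  have hpx := (contDiff_pX_s2 hf).differentiable one_ne_zero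
  have h1 : Differentiable ℝ (fun t => pX f (t, v)) := diff_sliceX hpx v
  have h2 : ∀ t, |deriv (fun s => pX f (s, v)) t| ≤ M₁ := fun t => hb1 (t, v)
  exact mvt_abs h1 h2 u x

lemma mvt_pd10_y (hf : ContDiff ℝ 2 f) (hb2 : ∀ z, |pd f 1 1 z| ≤ M₂) (x v y : ℝ) :
    |pd f 1 0 (x, v) - pd f 1 0 (x, y)| ≤ M₂ * |v - y| := by
  have hpx := (contDiff_pX_s2 hf).differentiable one_ne_zero
  have h1 : Differentiable ℝ (fun t => pX f (x, t)) := diff_sliceY hpx x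
  have h2 : ∀ t, |deriv (fun s => pX f (x, s)) t| ≤ M₂ := by
    intro t
    show |pY (pX f) (x, t)| ≤ M₂
    rw [pYpX_eq_pXpY hf]
    exact hb2 (x, t)
  exact mvt_abs h1 h2 v y

lemma pd01_growth (hf : ContDiff ℝ 2 f) (hb2 : ∀ z, |pd f 1 1 z| ≤ M₂)
    (hb3 : ∀ z, |pd f 0 2 z| ≤ M₃) (x y u v : ℝ) :
    |pd f 0 1 (u, v)| ≤ |pd f 0 1 (x, y)| + M₂ * |u - x| + M₃ * |v - y| := by
  have h1 := mvt_pd01_x hf hb2 u x v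
  have h2 := mvt_pd01_y hf hb3 x v y
  have : |pd f 0 1 (u, v)| ≤ |pd f 0 1 (u, v) - pd f 0 1 (x, v)| +
      |pd f 0 1 (x, v) - pd f 0 1 (x, y)| + |pd f 0 1 (x, y)| := by
    have := abs_sub_abs_le_abs_sub (pd f 0 1 (u, v)) (pd f 0 1 (x, y))
    calc |pd f 0 1 (u, v)| = |(pd f 0 1 (u, v) - pd f 0 1 (x, v)) +
        (pd f 0 1 (x, v) - pd f 0 1 (x, y)) + pd f 0 1 (x, y)| := by ring_nf
      _ ≤ _ := by
        refine (abs_add_le _ _).trans ?_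
        gcongr
        exact abs_add_le _ _
  linarith

lemma pd10_growth (hf : ContDiff ℝ 2 f) (hb1 : ∀ z, |pd f 2 0 z| ≤ M₁)
    (hb2 : ∀ z, |pd f 1 1 z| ≤ M₂) (x y u v : ℝ) :
    |pd f 1 0 (u, v)| ≤ |pd f 1 0 (x, y)| + M₁ * |u - x| + M₂ * |v - y| := by
  have h1 := mvt_pd10_x hf hb1 u x v
  have h2 := mvt_pd10_y hf hb2 x v y
  have : |pd f 1 0 (u, v)| ≤ |pd f 1 0 (u, v) - pd f 1 0 (x, v)| +
      |pd f 1 0 (x, v) - pd f 1 0 (x, y)| + |pd f 1 0 (x, y)| := by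
    calc |pd f 1 0 (u, v)| = |(pd f 1 0 (u, v) - pd f 1 0 (x, v)) +
        (pd f 1 0 (x, v) - pd f 1 0 (x, y)) + pd f 1 0 (x, y)| := by ring_nf
      _ ≤ _ := by
        refine (abs_add_le _ _).trans ?_
        gcongr
        exact abs_add_le _ _
  linarith

set_option maxHeartbeats 1000000 in
lemma f_growth (hf : ContDiff ℝ 2 f) (hb1 : ∀ z, |pd f 2 0 z| ≤ M₁)
    (hb2 : ∀ z, |pd f 1 1 z| ≤ M₂) (hb3 : ∀ z, |pd f 0 2 z| ≤ M₃) (x y u v : ℝ) :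
    |f (u, v)| ≤ (|f (x, y)| + |pd f 1 0 (x, y)| + |pd f 0 1 (x, y)| + M₁ + M₂ + M₃) *
      (1 + |u - x| + |v - y|) ^ 2 := by
  have hM1 : 0 ≤ M₁ := le_trans (abs_nonneg _) (hb1 (0, 0))
  have hM2 : 0 ≤ M₂ := le_trans (abs_nonneg _) (hb2 (0, 0))
  have hM3 : 0 ≤ M₃ := le_trans (abs_nonneg _) (hb3 (0, 0))
  set a := |u - x| with ha
  set b := |v - y| with hbb
  have hfd := hf.differentiable two_ne_zero
  -- step 1 : |f (u,v) - f (u,y)| ≤ (B01 + M₂ a + M₃ b) * b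
  have step1 : |f (u, v) - f (u, y)| ≤ (|pd f 0 1 (x, y)| + M₂ * a + M₃ * b) * b := by
    have hd : ∀ t ∈ Set.uIcc y v, DifferentiableAt ℝ (fun s => f (u, s)) t :=
      fun t _ => (diff_sliceY hfd u) t
    have hbound : ∀ t ∈ Set.uIcc y v, ‖deriv (fun s => f (u, s)) t‖ ≤
        |pd f 0 1 (x, y)| + M₂ * a + M₃ * b := by
      intro t ht
      have h1 : |pd f 0 1 (u, t)| ≤ |pd f 0 1 (x, y)| + M₂ * |u - x| + M₃ * |t - y| :=
        pd01_growth hf hb2 hb3 x y u t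
      have h2 : |t - y| ≤ |v - y| := Set.abs_sub_left_of_mem_uIcc ht
      have : |pd f 0 1 (u, t)| ≤ |pd f 0 1 (x, y)| + M₂ * a + M₃ * b := by
        rw [ha, hbb]; nlinarith
      rw [Real.norm_eq_abs]; exact this
    have := Convex.norm_image_sub_le_of_norm_deriv_le hd hbound (convex_uIcc y v)
      Set.left_mem_uIcc Set.right_mem_uIcc
    simpa [Real.norm_eq_abs, hbb] using this
  -- step 2 : |f (u,y) - f (x,y)| ≤ (B10 + M₁ a) * a
  have step2 : |f (u, y) - f (x, y)| ≤ (|pd f 1 0 (x, y)| + M₁ * a) * a := by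
    have hd : ∀ t ∈ Set.uIcc x u, DifferentiableAt ℝ (fun s => f (s, y)) t :=
      fun t _ => (diff_sliceX hfd y) t
    have hbound : ∀ t ∈ Set.uIcc x u, ‖deriv (fun s => f (s, y)) t‖ ≤
        |pd f 1 0 (x, y)| + M₁ * a := by
      intro t ht
      have h1 : |pd f 1 0 (t, y)| ≤ |pd f 1 0 (x, y)| + M₁ * |t - x| + M₂ * |y - y| :=
        pd10_growth hf hb1 hb2 x y t y
      have h2 : |t - x| ≤ |u - x| := Set.abs_sub_left_of_mem_uIcc ht
      have : |pd f 1 0 (t, y)| ≤ |pd f 1 0 (x, y)| + M₁ * a := by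
        rw [ha]; simp at h1; nlinarith
      rw [Real.norm_eq_abs]; exact this
    have := Convex.norm_image_sub_le_of_norm_deriv_le hd hbound (convex_uIcc x u)
      Set.left_mem_uIcc Set.right_mem_uIcc
    simpa [Real.norm_eq_abs, ha] using this
  have tri : |f (u, v)| ≤ |f (u, v) - f (u, y)| + |f (u, y) - f (x, y)| + |f (x, y)| := by
    calc |f (u, v)| = |(f (u, v) - f (u, y)) + (f (u, y) - f (x, y)) + f (x, y)| := by ring_nf
      _ ≤ _ := by
        refine (abs_add_le _ _).trans ?_
        gcongr
        exact abs_add_le _ _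
  have hA : 0 ≤ |f (x, y)| := abs_nonneg _
  have hB10 : 0 ≤ |pd f 1 0 (x, y)| := abs_nonneg _
  have hB01 : 0 ≤ |pd f 0 1 (x, y)| := abs_nonneg _
  have han : 0 ≤ a := abs_nonneg _
  have hbn : 0 ≤ b := abs_nonneg _
  have hq : (0:ℝ) ≤ a + b := by linarith
  have e1 : (1:ℝ) ≤ (1 + a + b) ^ 2 := by nlinarith
  have e2 : b ≤ (1 + a + b) ^ 2 := by nlinarith
  have e3 : a ≤ (1 + a + b) ^ 2 := by nlinarith
  have e4 : a * b ≤ (1 + a + b) ^ 2 := by nlinarith [mul_nonneg han hbn]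
  have e5 : a ^ 2 ≤ (1 + a + b) ^ 2 := by nlinarith [mul_nonneg han hbn]
  have e6 : b ^ 2 ≤ (1 + a + b) ^ 2 := by nlinarith [mul_nonneg han hbn]
  have c1 := mul_le_mul_of_nonneg_left e1 hA
  have c2 := mul_le_mul_of_nonneg_left e2 hB01
  have c3 := mul_le_mul_of_nonneg_left e3 hB10
  have c4 := mul_le_mul_of_nonneg_left e4 hM2
  have c5 := mul_le_mul_of_nonneg_left e5 hM1
  have c6 := mul_le_mul_of_nonneg_left e6 hM3
  nlinarith [c1, c2, c3, c4, c5, c6]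

end F2

lemma int_lin (b h c : ℝ) : (∫ v in b..(b + h), c * (v - b)) = c * (h ^ 2 / 2) := by
  rw [intervalIntegral.integral_const_mul]
  have : (∫ v in b..(b + h), (v - b)) = ∫ v in (b - b)..(b + h - b), v := by
    rw [← intervalIntegral.integral_comp_sub_right (fun x => x) b]
  rw [this, sub_self, add_sub_cancel_left, integral_id]
  ring

lemma int_sq (b h c : ℝ) : (∫ v in b..(b + h), c * (v - b) ^ 2) = c * (h ^ 3 / 3) := by
  rw [intervalIntegral.integral_const_mul]
  have : (∫ v in b..(b + h), (v - b) ^ 2) = ∫ v in (b - b)..(b + h - b), v ^ 2 := by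
    rw [← intervalIntegral.integral_comp_sub_right (fun x => x ^ 2) b]
  rw [this, sub_self, add_sub_cancel_left, integral_pow]
  push_cast
  ring

section Cell

variable {f : ℝ × ℝ → ℝ} {M₁ M₂ M₃ : ℝ}

set_option maxHeartbeats 1000000 in
/-- The key per-cell estimate. -/
lemma cell_est (hf : ContDiff ℝ 2 f) (hb1 : ∀ z, |pd f 2 0 z| ≤ M₁)
    (hb2 : ∀ z, |pd f 1 1 z| ≤ M₂) (hb3 : ∀ z, |pd f 0 2 z| ≤ M₃)
    (a b h : ℝ) (hh : 0 < h) :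
    |(∫ u in a..(a + h), ∫ v in b..(b + h), f (u, v)) - h ^ 2 * f (a, b)
      - h ^ 3 / 2 * pd f 1 0 (a, b) - h ^ 3 / 2 * pd f 0 1 (a, b)|
      ≤ (M₁ / 6 + M₂ / 4 + M₃ / 6) * h ^ 4 := by
  have hM1 : 0 ≤ M₁ := le_trans (abs_nonneg _) (hb1 (0, 0))
  have hM2 : 0 ≤ M₂ := le_trans (abs_nonneg _) (hb2 (0, 0))
  have hM3 : 0 ≤ M₃ := le_trans (abs_nonneg _) (hb3 (0, 0))
  have hfc : Continuous f := hf.continuous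
  set c₀ := f (a, b)
  set c₁ := pd f 1 0 (a, b)
  set c₂ := pd f 0 1 (a, b)
  set g : ℝ × ℝ → ℝ := fun p => f p - c₀ - c₁ * (p.1 - a) - c₂ * (p.2 - b) with hg
  have hgc : Continuous g := by
    apply hfc.sub (continuous_const) |>.sub ?_ |>.sub ?_ <;> fun_prop
  -- pointwise bound on g
  have hgb : ∀ u ∈ Set.Icc a (a + h), ∀ v ∈ Set.Icc b (b + h),
      |g (u, v)| ≤ M₁ / 2 * (u - a) ^ 2 + M₂ * (u - a) * (v - b) + M₃ / 2 * (v - b) ^ 2 := by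
    intro u hu v hv
    have hau : a ≤ u := hu.1
    have hbv : b ≤ v := hv.1
    have t1 := taylorY hf hb3 u hbv
    have t2 := taylorX hf hb1 b hau
    have t3 := mvt_pd01_x hf hb2 u a b
    have hdecomp : g (u, v) = (f (u, v) - f (u, b) - pd f 0 1 (u, b) * (v - b))
        + (f (u, b) - f (a, b) - c₁ * (u - a))
        + (pd f 0 1 (u, b) - pd f 0 1 (a, b)) * (v - b) := by
      simp only [hg]; ring
    have h3 : |(pd f 0 1 (u, b) - pd f 0 1 (a, b)) * (v - b)| ≤ M₂ * (u - a) * (v - b) := by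
      rw [abs_mul, abs_of_nonneg (sub_nonneg.mpr hbv)]
      have : |pd f 0 1 (u, b) - pd f 0 1 (a, b)| ≤ M₂ * (u - a) := by
        rwa [abs_of_nonneg (sub_nonneg.mpr hau)] at t3
      exact mul_le_mul_of_nonneg_right this (sub_nonneg.mpr hbv)
    calc |g (u, v)| ≤ |f (u, v) - f (u, b) - pd f 0 1 (u, b) * (v - b)|
        + |f (u, b) - f (a, b) - c₁ * (u - a)|
        + |(pd f 0 1 (u, b) - pd f 0 1 (a, b)) * (v - b)| := by
          rw [hdecomp]
          refine (abs_add_le _ _).trans ?_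
          gcongr
          exact abs_add_le _ _
      _ ≤ _ := by dsimp only [c₁]; linarith
  -- inner decomposition
  have hint_g : ∀ u : ℝ, IntervalIntegrable (fun v => g (u, v)) volume b (b + h) :=
    fun u => ((hgc.comp ((continuous_const (y := u)).prodMk continuous_id)).intervalIntegrable _ _)
  have inner : ∀ u : ℝ, (∫ v in b..(b + h), f (u, v))
      = (∫ v in b..(b + h), g (u, v)) + ((c₀ + c₁ * (u - a)) * h + c₂ * (h ^ 2 / 2)) := by
    intro u
    have e1 : (fun v => f (u, v)) = fun v => g (u, v) + ((c₀ + c₁ * (u - a)) + c₂ * (v - b)) := by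
      funext v; simp only [hg]; ring
    rw [e1, intervalIntegral.integral_add (hint_g u) (Continuous.intervalIntegrable (by fun_prop) _ _),
      intervalIntegral.integral_add (intervalIntegrable_const) (Continuous.intervalIntegrable (by fun_prop) _ _),
      intervalIntegral.integral_const, int_lin]
    simp [smul_eq_mul]
    ring
  -- outer decomposition
  set J : ℝ → ℝ := fun u => ∫ v in b..(b + h), g (u, v) with hJ
  have hJc : Continuous J := by
    apply intervalIntegral.continuous_parametric_intervalIntegral_of_continuous'
    exact hgc.comp (continuous_fst.prodMk continuous_snd)
  have outer : (∫ u in a..(a + h), ∫ v in b..(b + h), f (u, v))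
      = (∫ u in a..(a + h), J u) + (c₀ * h ^ 2 + c₁ * (h ^ 3 / 2) + c₂ * (h ^ 3 / 2)) := by
    have e1 : (fun u => ∫ v in b..(b + h), f (u, v))
        = fun u => J u + ((c₀ * h + c₂ * (h ^ 2 / 2)) + (c₁ * h) * (u - a)) := by
      funext u; rw [inner u]; ring
    rw [e1, intervalIntegral.integral_add (hJc.intervalIntegrable _ _) (Continuous.intervalIntegrable (by fun_prop) _ _),
      intervalIntegral.integral_add (intervalIntegrable_const) (Continuous.intervalIntegrable (by fun_prop) _ _),
      intervalIntegral.integral_const, int_lin]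
    simp [smul_eq_mul]
    ring
  -- bound on ∫ J
  have hJb : ∀ u ∈ Set.Icc a (a + h),
      |J u| ≤ M₁ / 2 * (u - a) ^ 2 * h + M₂ * (u - a) * (h ^ 2 / 2) + M₃ / 2 * (h ^ 3 / 3) := by
    intro u hu
    have step : |J u| ≤ ∫ v in b..(b + h), (M₁ / 2 * (u - a) ^ 2
        + M₂ * (u - a) * (v - b) + M₃ / 2 * (v - b) ^ 2) := by
      have h1 : |J u| ≤ ∫ v in b..(b + h), |g (u, v)| := by
        simpa [Real.norm_eq_abs] using intervalIntegral.norm_integral_le_integral_norm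
          (f := fun v => g (u, v)) (by linarith : b ≤ b + h)
      refine h1.trans ?_
      apply intervalIntegral.integral_mono_on (by linarith)
      · exact ((hgc.comp ((continuous_const (y := u)).prodMk continuous_id)).abs).intervalIntegrable _ _
      · exact Continuous.intervalIntegrable (by fun_prop) _ _
      · exact fun v hv => hgb u hu v hv
    refine step.trans_eq ?_
    rw [intervalIntegral.integral_add (Continuous.intervalIntegrable (by fun_prop) _ _) (Continuous.intervalIntegrable (by fun_prop) _ _),
      intervalIntegral.integral_add (Continuous.intervalIntegrable (by fun_prop) _ _) (Continuous.intervalIntegrable (by fun_prop) _ _),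
      intervalIntegral.integral_const, int_lin, int_sq]
    simp [smul_eq_mul]
    ring
  have hJint : |∫ u in a..(a + h), J u|
      ≤ M₁ / 6 * h ^ 4 + M₂ / 4 * h ^ 4 + M₃ / 6 * h ^ 4 := by
    have h1 : |∫ u in a..(a + h), J u| ≤ ∫ u in a..(a + h), |J u| := by
      simpa [Real.norm_eq_abs] using intervalIntegral.norm_integral_le_integral_norm
        (f := J) (by linarith : a ≤ a + h)
    have h2 : (∫ u in a..(a + h), |J u|) ≤ ∫ u in a..(a + h),
        (M₁ / 2 * (u - a) ^ 2 * h + M₂ * (u - a) * (h ^ 2 / 2) + M₃ / 2 * (h ^ 3 / 3)) := by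
      apply intervalIntegral.integral_mono_on (by linarith)
      · exact (hJc.abs).intervalIntegrable _ _
      · exact Continuous.intervalIntegrable (by fun_prop) _ _
      · exact hJb
    have h3 : (∫ u in a..(a + h),
        (M₁ / 2 * (u - a) ^ 2 * h + M₂ * (u - a) * (h ^ 2 / 2) + M₃ / 2 * (h ^ 3 / 3)))
        = M₁ / 6 * h ^ 4 + M₂ / 4 * h ^ 4 + M₃ / 6 * h ^ 4 := by
      have e1 : (fun u => M₁ / 2 * (u - a) ^ 2 * h + M₂ * (u - a) * (h ^ 2 / 2)
          + M₃ / 2 * (h ^ 3 / 3))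
          = fun u => ((M₁ / 2 * h) * (u - a) ^ 2 + ((M₂ * (h ^ 2 / 2)) * (u - a)
          + M₃ / 2 * (h ^ 3 / 3))) := by
        funext u; ring
      rw [e1, intervalIntegral.integral_add (Continuous.intervalIntegrable (by fun_prop) _ _) (Continuous.intervalIntegrable (by fun_prop) _ _),
        intervalIntegral.integral_add (Continuous.intervalIntegrable (by fun_prop) _ _) (Continuous.intervalIntegrable (by fun_prop) _ _),
        intervalIntegral.integral_const, int_lin, int_sq]
      simp [smul_eq_mul]
      ring
    linarith
  have final : (∫ u in a..(a + h), ∫ v in b..(b + h), f (u, v)) - h ^ 2 * c₀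
      - h ^ 3 / 2 * c₁ - h ^ 3 / 2 * c₂ = ∫ u in a..(a + h), J u := by
    rw [outer]; ring
  rw [final]
  linarith

end Cell

section Summ

variable {χ : ℝ × ℝ → ℝ} {p₁ p₂ : ℕ}

lemma summable_moment (hfin : absMoment χ p₁ p₂ < ⊤) (u₀ v₀ : ℝ) :
    Summable (fun kj : ℤ × ℤ =>
      |χ (u₀ - (kj.1 : ℝ), v₀ - (kj.2 : ℝ))| * |u₀ - (kj.1 : ℝ)| ^ p₁ * |v₀ - (kj.2 : ℝ)| ^ p₂) ∧
    ∑' kj : ℤ × ℤ,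
      |χ (u₀ - (kj.1 : ℝ), v₀ - (kj.2 : ℝ))| * |u₀ - (kj.1 : ℝ)| ^ p₁ * |v₀ - (kj.2 : ℝ)| ^ p₂
      ≤ (absMoment χ p₁ p₂).toReal := by
  set g : ℤ × ℤ → ℝ := fun kj =>
    |χ (u₀ - (kj.1 : ℝ), v₀ - (kj.2 : ℝ))| * |u₀ - (kj.1 : ℝ)| ^ p₁ * |v₀ - (kj.2 : ℝ)| ^ p₂
    with hgdef
  have hgnn : ∀ kj, 0 ≤ g kj := by
    intro kj
    simp only [hgdef]
    positivity
  set F : ℤ × ℤ → ℝ≥0∞ := fun kj => ENNReal.ofReal (g kj) with hFdef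
  have hb : ∑' kj : ℤ × ℤ, F kj ≤ absMoment χ p₁ p₂ := by
    rw [ENNReal.tsum_prod']
    calc (∑' (k : ℤ) (j : ℤ), F (k, j))
        ≤ ⨆ v : ℝ, ∑' (k : ℤ) (j : ℤ),
          ENNReal.ofReal (|χ (u₀ - (k : ℝ), v - (j : ℝ))| * |u₀ - (k : ℝ)| ^ p₁
            * |v - (j : ℝ)| ^ p₂) := by
          exact le_iSup (fun v : ℝ => ∑' (k : ℤ) (j : ℤ),
            ENNReal.ofReal (|χ (u₀ - (k : ℝ), v - (j : ℝ))| * |u₀ - (k : ℝ)| ^ p₁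
              * |v - (j : ℝ)| ^ p₂)) v₀
      _ ≤ absMoment χ p₁ p₂ := by
          exact le_iSup (fun u : ℝ => ⨆ v : ℝ, ∑' (k : ℤ) (j : ℤ),
            ENNReal.ofReal (|χ (u - (k : ℝ), v - (j : ℝ))| * |u - (k : ℝ)| ^ p₁
              * |v - (j : ℝ)| ^ p₂)) u₀
  have hne : ∑' kj : ℤ × ℤ, F kj ≠ ⊤ := (hb.trans_lt hfin).ne
  have hsum : Summable g := by
    have h1 := ENNReal.summable_toReal hne
    refine h1.congr fun kj => ?_
    simp only [hFdef, ENNReal.toReal_ofReal (hgnn kj)]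
  refine ⟨hsum, ?_⟩
  have h2 : ∑' kj : ℤ × ℤ, g kj = (∑' kj : ℤ × ℤ, F kj).toReal := by
    rw [ENNReal.tsum_toReal_eq fun kj => ENNReal.ofReal_ne_top]
    exact tsum_congr fun kj => (ENNReal.toReal_ofReal (hgnn kj)).symm
  rw [h2]
  exact ENNReal.toReal_mono hfin.ne hb

end Summ

lemma lin_to_quad {B M M' u v : ℝ} (hB : 0 ≤ B) (hM : 0 ≤ M) (hM' : 0 ≤ M')
    (hu : 0 ≤ u) (hv : 0 ≤ v) :
    B + M * u + M' * v ≤ (B + M + M') * (1 + u + v) ^ 2 := by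
  nlinarith [mul_nonneg hM hu, mul_nonneg hM' hv, mul_nonneg hB (mul_nonneg hu hv),
    sq_nonneg (u + v), mul_nonneg (mul_nonneg hM hu) hu, mul_nonneg (mul_nonneg hM' hv) hv,
    mul_nonneg (mul_nonneg hM hu) hv, mul_nonneg (mul_nonneg hM' hu) hv,
    mul_nonneg hB hu, mul_nonneg hB hv, mul_nonneg hM hv, mul_nonneg hM' hu,
    mul_nonneg (mul_nonneg hB hu) hv, sq_nonneg u, sq_nonneg v]

lemma quad_dom27 {A s t a b w : ℝ} (hA : 0 ≤ A) (hw : 0 < w) (ha : 0 ≤ a) (hb : 0 ≤ b)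
    (hs : |s| ≤ (a + 1) / w) (ht : |t| ≤ (b + 1) / w) :
    A * (1 + |s| + |t|) ^ 2 ≤ 27 * A * (max 1 w⁻¹) ^ 2 * (1 + a ^ 2 + b ^ 2) := by
  set r := max 1 w⁻¹ with hr
  have hr1 : (1 : ℝ) ≤ r := le_max_left _ _
  have hrw : w⁻¹ ≤ r := le_max_right _ _
  have hrpos : 0 < r := lt_of_lt_of_le one_pos hr1
  have hsr : |s| ≤ (a + 1) * r := by
    calc |s| ≤ (a + 1) / w := hs
      _ = (a + 1) * w⁻¹ := by rw [div_eq_mul_inv]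
      _ ≤ (a + 1) * r := by
        apply mul_le_mul_of_nonneg_left hrw; linarith
  have htr : |t| ≤ (b + 1) * r := by
    calc |t| ≤ (b + 1) / w := ht
      _ = (b + 1) * w⁻¹ := by rw [div_eq_mul_inv]
      _ ≤ (b + 1) * r := by
        apply mul_le_mul_of_nonneg_left hrw; linarith
  have h1 : 1 + |s| + |t| ≤ 3 * r * (1 + a + b) := by nlinarith [mul_nonneg ha hrpos.le, mul_nonneg hb hrpos.le]
  have h1n : (0:ℝ) ≤ 1 + |s| + |t| := by positivity
  have h2 : (1 + |s| + |t|) ^ 2 ≤ (3 * r * (1 + a + b)) ^ 2 := by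
    apply pow_le_pow_left₀ h1n h1
  have h3 : (3 * r * (1 + a + b)) ^ 2 ≤ 27 * r ^ 2 * (1 + a ^ 2 + b ^ 2) := by
    have key : (1 + a + b) ^ 2 ≤ 3 * (1 + a ^ 2 + b ^ 2) := by
      nlinarith [sq_nonneg (a - b), sq_nonneg (a - 1), sq_nonneg (b - 1)]
    have : (3 * r * (1 + a + b)) ^ 2 = 9 * r ^ 2 * (1 + a + b) ^ 2 := by ring
    rw [this]
    nlinarith [sq_nonneg r, mul_le_mul_of_nonneg_left key (by positivity : (0:ℝ) ≤ 9 * r ^ 2)]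
  calc A * (1 + |s| + |t|) ^ 2 ≤ A * (27 * r ^ 2 * (1 + a ^ 2 + b ^ 2)) := by
        apply mul_le_mul_of_nonneg_left (h2.trans h3) hA
    _ = 27 * A * r ^ 2 * (1 + a ^ 2 + b ^ 2) := by ring

lemma double_int_bound {F : ℝ × ℝ → ℝ} {p q h D : ℝ} (hh : 0 < h) (hD : 0 ≤ D)
    (hb : ∀ s ∈ Set.Icc p (p + h), ∀ t ∈ Set.Icc q (q + h), |F (s, t)| ≤ D) :
    |∫ u in p..(p + h), ∫ v in q..(q + h), F (u, v)| ≤ D * h ^ 2 := by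
  have houter : ∀ s ∈ Set.uIoc p (p + h), ‖∫ v in q..(q + h), F (s, v)‖ ≤ D * h := by
    intro s hs
    have hs' : s ∈ Set.Icc p (p + h) := by
      rw [Set.uIoc_of_le (by linarith : p ≤ p + h)] at hs
      exact ⟨le_of_lt hs.1, hs.2⟩
    have hinner : ∀ t ∈ Set.uIoc q (q + h), ‖F (s, t)‖ ≤ D := by
      intro t ht
      rw [Set.uIoc_of_le (by linarith : q ≤ q + h)] at ht
      simpa [Real.norm_eq_abs] using hb s hs' t ⟨le_of_lt ht.1, ht.2⟩
    have := intervalIntegral.norm_integral_le_of_norm_le_const hinner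
    simpa [abs_of_pos hh] using this
  have := intervalIntegral.norm_integral_le_of_norm_le_const houter
  have heq : D * h * |p + h - p| = D * h ^ 2 := by
    rw [add_sub_cancel_left, abs_of_pos hh]; ring
  rw [heq] at this
  simpa [Real.norm_eq_abs] using this

set_option maxHeartbeats 2000000 in
/-- representation formula relating the Kantorovich sampling series with the
generalized sampling series, absolute convergence of the series involved, the bound on the
remainder, and the uniform vanishing of w·R₂^w as w → ∞. -/
theorem statement2 (χ : ℝ × ℝ → ℝ) (hχc : Continuous χ) (hχb : ∃ C : ℝ, ∀ p, |χ p| ≤ C)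
    (hpart : PartitionOfUnity2 χ)
    (hM2 : Mmoment χ 2 < ⊤) (hM0 : absMoment χ 0 0 < ⊤)
    (f : ℝ × ℝ → ℝ) (hf : ContDiff ℝ 2 f)
    (M₁ M₂ M₃ M : ℝ)
    (hb1 : ∀ z, |pd f 2 0 z| ≤ M₁) (hb2 : ∀ z, |pd f 1 1 z| ≤ M₂)
    (hb3 : ∀ z, |pd f 0 2 z| ≤ M₃)
    (hM : M = max M₁ (max M₂ M₃)) :
    (∀ w : ℝ, 0 < w → ∀ x y : ℝ,
      (Summable (fun kj : ℤ × ℤ =>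
        |χ (w * x - (kj.1 : ℝ), w * y - (kj.2 : ℝ)) *
          (w ^ 2 * ∫ u in ((kj.1 : ℝ) / w)..(((kj.1 : ℝ) + 1) / w),
            ∫ v in ((kj.2 : ℝ) / w)..(((kj.2 : ℝ) + 1) / w), f (u, v))|)) ∧
      (Summable (fun kj : ℤ × ℤ =>
        |χ (w * x - (kj.1 : ℝ), w * y - (kj.2 : ℝ)) * f ((kj.1 : ℝ) / w, (kj.2 : ℝ) / w)|)) ∧
      (Summable (fun kj : ℤ × ℤ =>
        |χ (w * x - (kj.1 : ℝ), w * y - (kj.2 : ℝ)) * pd f 1 0 ((kj.1 : ℝ) / w, (kj.2 : ℝ) / w)|)) ∧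
      (Summable (fun kj : ℤ × ℤ =>
        |χ (w * x - (kj.1 : ℝ), w * y - (kj.2 : ℝ)) * pd f 0 1 ((kj.1 : ℝ) / w, (kj.2 : ℝ) / w)|)) ∧
      |Sop χ w f x y - Gop χ w f x y - (1 / (2 * w)) * Gop χ w (pd f 1 0) x y -
          (1 / (2 * w)) * Gop χ w (pd f 0 1) x y| ≤
        (7 * M / (12 * w ^ 2)) * (absMoment χ 0 0).toReal) ∧
    Tendsto (fun w : ℝ => ⨆ p : ℝ × ℝ,
      |w * (Sop χ w f p.1 p.2 - Gop χ w f p.1 p.2 - (1 / (2 * w)) * Gop χ w (pd f 1 0) p.1 p.2 -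
        (1 / (2 * w)) * Gop χ w (pd f 0 1) p.1 p.2)|) atTop (nhds 0) := by
  have hM20fin : absMoment χ 2 0 < ⊤ :=
    lt_of_le_of_lt (le_iSup (fun p : {p : ℕ × ℕ // p.1 + p.2 = 2} =>
      absMoment χ p.1.1 p.1.2) ⟨(2, 0), rfl⟩) hM2
  have hM02fin : absMoment χ 0 2 < ⊤ :=
    lt_of_le_of_lt (le_iSup (fun p : {p : ℕ × ℕ // p.1 + p.2 = 2} =>
      absMoment χ p.1.1 p.1.2) ⟨(0, 2), rfl⟩) hM2
  have hM1n : 0 ≤ M₁ := le_trans (abs_nonneg _) (hb1 (0, 0))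
  have hM2n : 0 ≤ M₂ := le_trans (abs_nonneg _) (hb2 (0, 0))
  have hM3n : 0 ≤ M₃ := le_trans (abs_nonneg _) (hb3 (0, 0))
  have hM1M : M₁ ≤ M := hM ▸ le_max_left _ _
  have hM2M : M₂ ≤ M := hM ▸ le_trans (le_max_left _ _) (le_max_right _ _)
  have hM3M : M₃ ≤ M := hM ▸ le_trans (le_max_right _ _) (le_max_right _ _)
  have hMn : 0 ≤ M := le_trans hM1n hM1M
  have hm00nn : (0:ℝ) ≤ (absMoment χ 0 0).toReal := ENNReal.toReal_nonneg
  have main : ∀ w : ℝ, 0 < w → ∀ x y : ℝ,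
      (Summable (fun kj : ℤ × ℤ =>
        |χ (w * x - (kj.1 : ℝ), w * y - (kj.2 : ℝ)) *
          (w ^ 2 * ∫ u in ((kj.1 : ℝ) / w)..(((kj.1 : ℝ) + 1) / w),
            ∫ v in ((kj.2 : ℝ) / w)..(((kj.2 : ℝ) + 1) / w), f (u, v))|)) ∧
      (Summable (fun kj : ℤ × ℤ =>
        |χ (w * x - (kj.1 : ℝ), w * y - (kj.2 : ℝ)) * f ((kj.1 : ℝ) / w, (kj.2 : ℝ) / w)|)) ∧
      (Summable (fun kj : ℤ × ℤ =>
        |χ (w * x - (kj.1 : ℝ), w * y - (kj.2 : ℝ)) * pd f 1 0 ((kj.1 : ℝ) / w, (kj.2 : ℝ) / w)|)) ∧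
      (Summable (fun kj : ℤ × ℤ =>
        |χ (w * x - (kj.1 : ℝ), w * y - (kj.2 : ℝ)) * pd f 0 1 ((kj.1 : ℝ) / w, (kj.2 : ℝ) / w)|)) ∧
      |Sop χ w f x y - Gop χ w f x y - (1 / (2 * w)) * Gop χ w (pd f 1 0) x y -
          (1 / (2 * w)) * Gop χ w (pd f 0 1) x y| ≤
        (7 * M / (12 * w ^ 2)) * (absMoment χ 0 0).toReal := by
    intro w hw x y
    have hwne : w ≠ 0 := ne_of_gt hw
    obtain ⟨s00, t00⟩ := summable_moment (p₁ := 0) (p₂ := 0) hM0 (w * x) (w * y)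
    obtain ⟨s20, -⟩ := summable_moment (p₁ := 2) (p₂ := 0) hM20fin (w * x) (w * y)
    obtain ⟨s02, -⟩ := summable_moment (p₁ := 0) (p₂ := 2) hM02fin (w * x) (w * y)
    have sc : Summable (fun kj : ℤ × ℤ => |χ (w * x - (kj.1 : ℝ), w * y - (kj.2 : ℝ))|) :=
      s00.congr fun kj => by simp
    have tc : ∑' kj : ℤ × ℤ, |χ (w * x - (kj.1 : ℝ), w * y - (kj.2 : ℝ))|
        ≤ (absMoment χ 0 0).toReal := by
      refine le_trans (le_of_eq (tsum_congr fun kj => ?_)) t00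
      simp
    have s20' : Summable (fun kj : ℤ × ℤ =>
        |χ (w * x - (kj.1 : ℝ), w * y - (kj.2 : ℝ))| * |w * x - (kj.1 : ℝ)| ^ 2) :=
      s20.congr fun kj => by simp
    have s02' : Summable (fun kj : ℤ × ℤ =>
        |χ (w * x - (kj.1 : ℝ), w * y - (kj.2 : ℝ))| * |w * y - (kj.2 : ℝ)| ^ 2) :=
      s02.congr fun kj => by simp [mul_assoc]
    have sΦ : Summable (fun kj : ℤ × ℤ =>
        |χ (w * x - (kj.1 : ℝ), w * y - (kj.2 : ℝ))| *
          (1 + |w * x - (kj.1 : ℝ)| ^ 2 + |w * y - (kj.2 : ℝ)| ^ 2)) :=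
      ((sc.add s20').add s02').congr fun kj => by ring
    set Cf : ℝ := |f (x, y)| + |pd f 1 0 (x, y)| + |pd f 0 1 (x, y)| + M₁ + M₂ + M₃ with hCf
    set C10 : ℝ := |pd f 1 0 (x, y)| + M₁ + M₂ with hC10
    set C01 : ℝ := |pd f 0 1 (x, y)| + M₂ + M₃ with hC01
    have hCfn : 0 ≤ Cf := by
      have := abs_nonneg (f (x, y)); have := abs_nonneg (pd f 1 0 (x, y))
      have := abs_nonneg (pd f 0 1 (x, y)); rw [hCf]; linarith
    have hC10n : 0 ≤ C10 := by
      have := abs_nonneg (pd f 1 0 (x, y)); rw [hC10]; linarith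
    have hC01n : 0 ≤ C01 := by
      have := abs_nonneg (pd f 0 1 (x, y)); rw [hC01]; linarith
    have hcoordX : ∀ k : ℤ, |(k : ℝ) / w - x| ≤ (|w * x - (k : ℝ)| + 1) / w := by
      intro k
      have he : (k : ℝ) / w - x = -((w * x - k) / w) := by field_simp; ring
      rw [he, abs_neg, abs_div, abs_of_pos hw]
      gcongr
      linarith
    have hcoordY : ∀ j : ℤ, |(j : ℝ) / w - y| ≤ (|w * y - (j : ℝ)| + 1) / w := by
      intro j
      have he : (j : ℝ) / w - y = -((w * y - j) / w) := by field_simp; ring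
      rw [he, abs_neg, abs_div, abs_of_pos hw]
      gcongr
      linarith
    have hGf : ∀ kj : ℤ × ℤ, |f ((kj.1 : ℝ) / w, (kj.2 : ℝ) / w)| ≤
        27 * Cf * (max 1 w⁻¹) ^ 2 * (1 + |w * x - (kj.1 : ℝ)| ^ 2 + |w * y - (kj.2 : ℝ)| ^ 2) := by
      intro kj
      refine (f_growth hf hb1 hb2 hb3 x y _ _).trans ?_
      exact quad_dom27 hCfn hw (abs_nonneg _) (abs_nonneg _) (hcoordX kj.1) (hcoordY kj.2)
    have hG10 : ∀ kj : ℤ × ℤ, |pd f 1 0 ((kj.1 : ℝ) / w, (kj.2 : ℝ) / w)| ≤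
        27 * C10 * (max 1 w⁻¹) ^ 2 *
          (1 + |w * x - (kj.1 : ℝ)| ^ 2 + |w * y - (kj.2 : ℝ)| ^ 2) := by
      intro kj
      refine ((pd10_growth hf hb1 hb2 x y _ _).trans
        (lin_to_quad (abs_nonneg _) hM1n hM2n (abs_nonneg _) (abs_nonneg _))).trans ?_
      exact quad_dom27 hC10n hw (abs_nonneg _) (abs_nonneg _) (hcoordX kj.1) (hcoordY kj.2)
    have hG01 : ∀ kj : ℤ × ℤ, |pd f 0 1 ((kj.1 : ℝ) / w, (kj.2 : ℝ) / w)| ≤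
        27 * C01 * (max 1 w⁻¹) ^ 2 *
          (1 + |w * x - (kj.1 : ℝ)| ^ 2 + |w * y - (kj.2 : ℝ)| ^ 2) := by
      intro kj
      refine ((pd01_growth hf hb2 hb3 x y _ _).trans
        (lin_to_quad (abs_nonneg _) hM2n hM3n (abs_nonneg _) (abs_nonneg _))).trans ?_
      exact quad_dom27 hC01n hw (abs_nonneg _) (abs_nonneg _) (hcoordX kj.1) (hcoordY kj.2)
    have hGS : ∀ kj : ℤ × ℤ,
        |w ^ 2 * ∫ u in ((kj.1 : ℝ) / w)..(((kj.1 : ℝ) + 1) / w),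
          ∫ v in ((kj.2 : ℝ) / w)..(((kj.2 : ℝ) + 1) / w), f (u, v)| ≤
        27 * Cf * (max 1 w⁻¹) ^ 2 *
          (1 + |w * x - (kj.1 : ℝ)| ^ 2 + |w * y - (kj.2 : ℝ)| ^ 2) := by
      intro kj
      have hh : (0:ℝ) < 1 / w := by positivity
      have e1 : ((kj.1 : ℝ) + 1) / w = (kj.1 : ℝ) / w + 1 / w := by ring
      have e2 : ((kj.2 : ℝ) + 1) / w = (kj.2 : ℝ) / w + 1 / w := by ring
      rw [e1, e2]
      set D : ℝ := 27 * Cf * (max 1 w⁻¹) ^ 2 *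
        (1 + |w * x - (kj.1 : ℝ)| ^ 2 + |w * y - (kj.2 : ℝ)| ^ 2) with hD
      have hDnn : 0 ≤ D := by
        rw [hD]; positivity
      have hptw : ∀ s ∈ Set.Icc ((kj.1 : ℝ) / w) ((kj.1 : ℝ) / w + 1 / w),
          ∀ t ∈ Set.Icc ((kj.2 : ℝ) / w) ((kj.2 : ℝ) / w + 1 / w), |f (s, t)| ≤ D := by
        intro s hs t ht
        refine (f_growth hf hb1 hb2 hb3 x y s t).trans ?_
        rw [hD]
        apply quad_dom27 hCfn hw (abs_nonneg _) (abs_nonneg _)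
        · have h1 : |s - (kj.1 : ℝ) / w| ≤ 1 / w := by
            rw [abs_le]; constructor
            · linarith [hs.1]
            · linarith [hs.2]
          have h2 : |(kj.1 : ℝ) / w - x| = |w * x - (kj.1 : ℝ)| / w := by
            have he : (kj.1 : ℝ) / w - x = -((w * x - kj.1) / w) := by field_simp; ring
            rw [he, abs_neg, abs_div, abs_of_pos hw]
          calc |s - x| ≤ |s - (kj.1 : ℝ) / w| + |(kj.1 : ℝ) / w - x| := abs_sub_le _ _ _
            _ ≤ 1 / w + |w * x - (kj.1 : ℝ)| / w := add_le_add h1 (le_of_eq h2)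
            _ = (|w * x - (kj.1 : ℝ)| + 1) / w := by ring
        · have h1 : |t - (kj.2 : ℝ) / w| ≤ 1 / w := by
            rw [abs_le]; constructor
            · linarith [ht.1]
            · linarith [ht.2]
          have h2 : |(kj.2 : ℝ) / w - y| = |w * y - (kj.2 : ℝ)| / w := by
            have he : (kj.2 : ℝ) / w - y = -((w * y - kj.2) / w) := by field_simp; ring
            rw [he, abs_neg, abs_div, abs_of_pos hw]
          calc |t - y| ≤ |t - (kj.2 : ℝ) / w| + |(kj.2 : ℝ) / w - y| := abs_sub_le _ _ _
            _ ≤ 1 / w + |w * y - (kj.2 : ℝ)| / w := add_le_add h1 (le_of_eq h2)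
            _ = (|w * y - (kj.2 : ℝ)| + 1) / w := by ring
      have hib := double_int_bound hh hDnn hptw
      have hw2 : (0:ℝ) < w ^ 2 := by positivity
      calc |w ^ 2 * ∫ u in ((kj.1 : ℝ) / w)..((kj.1 : ℝ) / w + 1 / w),
            ∫ v in ((kj.2 : ℝ) / w)..((kj.2 : ℝ) / w + 1 / w), f (u, v)|
          = w ^ 2 * |∫ u in ((kj.1 : ℝ) / w)..((kj.1 : ℝ) / w + 1 / w),
            ∫ v in ((kj.2 : ℝ) / w)..((kj.2 : ℝ) / w + 1 / w), f (u, v)| := by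
            rw [abs_mul, abs_of_pos hw2]
        _ ≤ w ^ 2 * (D * (1 / w) ^ 2) := mul_le_mul_of_nonneg_left hib hw2.le
        _ = D := by field_simp
    -- summability of the four series
    have sum1 : Summable (fun kj : ℤ × ℤ =>
        |χ (w * x - (kj.1 : ℝ), w * y - (kj.2 : ℝ)) *
          (w ^ 2 * ∫ u in ((kj.1 : ℝ) / w)..(((kj.1 : ℝ) + 1) / w),
            ∫ v in ((kj.2 : ℝ) / w)..(((kj.2 : ℝ) + 1) / w), f (u, v))|) := by
      apply Summable.of_nonneg_of_le (fun kj => abs_nonneg _) ?_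
        (sΦ.mul_left (27 * Cf * (max 1 w⁻¹) ^ 2))
      intro kj
      rw [abs_mul]
      calc |χ (w * x - (kj.1 : ℝ), w * y - (kj.2 : ℝ))| *
            |w ^ 2 * ∫ u in ((kj.1 : ℝ) / w)..(((kj.1 : ℝ) + 1) / w),
              ∫ v in ((kj.2 : ℝ) / w)..(((kj.2 : ℝ) + 1) / w), f (u, v)|
          ≤ |χ (w * x - (kj.1 : ℝ), w * y - (kj.2 : ℝ))| *
            (27 * Cf * (max 1 w⁻¹) ^ 2 *
              (1 + |w * x - (kj.1 : ℝ)| ^ 2 + |w * y - (kj.2 : ℝ)| ^ 2)) :=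
            mul_le_mul_of_nonneg_left (hGS kj) (abs_nonneg _)
        _ = 27 * Cf * (max 1 w⁻¹) ^ 2 * (|χ (w * x - (kj.1 : ℝ), w * y - (kj.2 : ℝ))| *
              (1 + |w * x - (kj.1 : ℝ)| ^ 2 + |w * y - (kj.2 : ℝ)| ^ 2)) := by ring
    have sum2 : Summable (fun kj : ℤ × ℤ =>
        |χ (w * x - (kj.1 : ℝ), w * y - (kj.2 : ℝ)) * f ((kj.1 : ℝ) / w, (kj.2 : ℝ) / w)|) := by
      apply Summable.of_nonneg_of_le (fun kj => abs_nonneg _) ?_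
        (sΦ.mul_left (27 * Cf * (max 1 w⁻¹) ^ 2))
      intro kj
      rw [abs_mul]
      calc |χ (w * x - (kj.1 : ℝ), w * y - (kj.2 : ℝ))| * |f ((kj.1 : ℝ) / w, (kj.2 : ℝ) / w)|
          ≤ |χ (w * x - (kj.1 : ℝ), w * y - (kj.2 : ℝ))| *
            (27 * Cf * (max 1 w⁻¹) ^ 2 *
              (1 + |w * x - (kj.1 : ℝ)| ^ 2 + |w * y - (kj.2 : ℝ)| ^ 2)) :=
            mul_le_mul_of_nonneg_left (hGf kj) (abs_nonneg _)
        _ = 27 * Cf * (max 1 w⁻¹) ^ 2 * (|χ (w * x - (kj.1 : ℝ), w * y - (kj.2 : ℝ))| *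
              (1 + |w * x - (kj.1 : ℝ)| ^ 2 + |w * y - (kj.2 : ℝ)| ^ 2)) := by ring
    have sum3 : Summable (fun kj : ℤ × ℤ =>
        |χ (w * x - (kj.1 : ℝ), w * y - (kj.2 : ℝ)) *
          pd f 1 0 ((kj.1 : ℝ) / w, (kj.2 : ℝ) / w)|) := by
      apply Summable.of_nonneg_of_le (fun kj => abs_nonneg _) ?_
        (sΦ.mul_left (27 * C10 * (max 1 w⁻¹) ^ 2))
      intro kj
      rw [abs_mul]
      calc |χ (w * x - (kj.1 : ℝ), w * y - (kj.2 : ℝ))| *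
            |pd f 1 0 ((kj.1 : ℝ) / w, (kj.2 : ℝ) / w)|
          ≤ |χ (w * x - (kj.1 : ℝ), w * y - (kj.2 : ℝ))| *
            (27 * C10 * (max 1 w⁻¹) ^ 2 *
              (1 + |w * x - (kj.1 : ℝ)| ^ 2 + |w * y - (kj.2 : ℝ)| ^ 2)) :=
            mul_le_mul_of_nonneg_left (hG10 kj) (abs_nonneg _)
        _ = 27 * C10 * (max 1 w⁻¹) ^ 2 * (|χ (w * x - (kj.1 : ℝ), w * y - (kj.2 : ℝ))| *
              (1 + |w * x - (kj.1 : ℝ)| ^ 2 + |w * y - (kj.2 : ℝ)| ^ 2)) := by ring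
    have sum4 : Summable (fun kj : ℤ × ℤ =>
        |χ (w * x - (kj.1 : ℝ), w * y - (kj.2 : ℝ)) *
          pd f 0 1 ((kj.1 : ℝ) / w, (kj.2 : ℝ) / w)|) := by
      apply Summable.of_nonneg_of_le (fun kj => abs_nonneg _) ?_
        (sΦ.mul_left (27 * C01 * (max 1 w⁻¹) ^ 2))
      intro kj
      rw [abs_mul]
      calc |χ (w * x - (kj.1 : ℝ), w * y - (kj.2 : ℝ))| *
            |pd f 0 1 ((kj.1 : ℝ) / w, (kj.2 : ℝ) / w)|
          ≤ |χ (w * x - (kj.1 : ℝ), w * y - (kj.2 : ℝ))| *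
            (27 * C01 * (max 1 w⁻¹) ^ 2 *
              (1 + |w * x - (kj.1 : ℝ)| ^ 2 + |w * y - (kj.2 : ℝ)| ^ 2)) :=
            mul_le_mul_of_nonneg_left (hG01 kj) (abs_nonneg _)
        _ = 27 * C01 * (max 1 w⁻¹) ^ 2 * (|χ (w * x - (kj.1 : ℝ), w * y - (kj.2 : ℝ))| *
              (1 + |w * x - (kj.1 : ℝ)| ^ 2 + |w * y - (kj.2 : ℝ)| ^ 2)) := by ring
    -- the per-cell estimate
    have hE : ∀ kj : ℤ × ℤ,
        |(w ^ 2 * ∫ u in ((kj.1 : ℝ) / w)..(((kj.1 : ℝ) + 1) / w),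
            ∫ v in ((kj.2 : ℝ) / w)..(((kj.2 : ℝ) + 1) / w), f (u, v))
          - f ((kj.1 : ℝ) / w, (kj.2 : ℝ) / w)
          - 1 / (2 * w) * pd f 1 0 ((kj.1 : ℝ) / w, (kj.2 : ℝ) / w)
          - 1 / (2 * w) * pd f 0 1 ((kj.1 : ℝ) / w, (kj.2 : ℝ) / w)|
          ≤ 7 * M / (12 * w ^ 2) := by
      intro kj
      have hh : (0:ℝ) < 1 / w := by positivity
      have e1 : ((kj.1 : ℝ) + 1) / w = (kj.1 : ℝ) / w + 1 / w := by ring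
      have e2 : ((kj.2 : ℝ) + 1) / w = (kj.2 : ℝ) / w + 1 / w := by ring
      rw [e1, e2]
      have hcell := cell_est hf hb1 hb2 hb3 ((kj.1 : ℝ) / w) ((kj.2 : ℝ) / w) (1 / w) hh
      set I : ℝ := ∫ u in ((kj.1 : ℝ) / w)..((kj.1 : ℝ) / w + 1 / w),
        ∫ v in ((kj.2 : ℝ) / w)..((kj.2 : ℝ) / w + 1 / w), f (u, v) with hI
      have heq : w ^ 2 * I - f ((kj.1 : ℝ) / w, (kj.2 : ℝ) / w)
          - 1 / (2 * w) * pd f 1 0 ((kj.1 : ℝ) / w, (kj.2 : ℝ) / w)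
          - 1 / (2 * w) * pd f 0 1 ((kj.1 : ℝ) / w, (kj.2 : ℝ) / w)
          = w ^ 2 * (I - (1 / w) ^ 2 * f ((kj.1 : ℝ) / w, (kj.2 : ℝ) / w)
            - (1 / w) ^ 3 / 2 * pd f 1 0 ((kj.1 : ℝ) / w, (kj.2 : ℝ) / w)
            - (1 / w) ^ 3 / 2 * pd f 0 1 ((kj.1 : ℝ) / w, (kj.2 : ℝ) / w)) := by
        field_simp
      have hw2 : (0:ℝ) < w ^ 2 := by positivity
      rw [heq, abs_mul, abs_of_pos hw2]
      calc w ^ 2 * |I - (1 / w) ^ 2 * f ((kj.1 : ℝ) / w, (kj.2 : ℝ) / w)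
            - (1 / w) ^ 3 / 2 * pd f 1 0 ((kj.1 : ℝ) / w, (kj.2 : ℝ) / w)
            - (1 / w) ^ 3 / 2 * pd f 0 1 ((kj.1 : ℝ) / w, (kj.2 : ℝ) / w)|
          ≤ w ^ 2 * ((M₁ / 6 + M₂ / 4 + M₃ / 6) * (1 / w) ^ 4) :=
            mul_le_mul_of_nonneg_left hcell hw2.le
        _ ≤ w ^ 2 * ((7 * M / 12) * (1 / w) ^ 4) := by
            have h7 : M₁ / 6 + M₂ / 4 + M₃ / 6 ≤ 7 * M / 12 := by linarith
            have h4 : (0:ℝ) ≤ (1 / w) ^ 4 := by positivity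
            exact mul_le_mul_of_nonneg_left (mul_le_mul_of_nonneg_right h7 h4) hw2.le
        _ = 7 * M / (12 * w ^ 2) := by field_simp
    refine ⟨sum1, sum2, sum3, sum4, ?_⟩
    have s1 := sum1.of_abs
    have s2 := sum2.of_abs
    have s3 := sum3.of_abs
    have s4 := sum4.of_abs
    have e1 : Sop χ w f x y = ∑' kj : ℤ × ℤ,
        (χ (w * x - (kj.1 : ℝ), w * y - (kj.2 : ℝ)) *
          (w ^ 2 * ∫ u in ((kj.1 : ℝ) / w)..(((kj.1 : ℝ) + 1) / w),
            ∫ v in ((kj.2 : ℝ) / w)..(((kj.2 : ℝ) + 1) / w), f (u, v))) :=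
      (Summable.tsum_prod' s1 s1.prod_factor).symm
    have e2 : Gop χ w f x y = ∑' kj : ℤ × ℤ,
        (χ (w * x - (kj.1 : ℝ), w * y - (kj.2 : ℝ)) * f ((kj.1 : ℝ) / w, (kj.2 : ℝ) / w)) :=
      (Summable.tsum_prod' s2 s2.prod_factor).symm
    have e3 : Gop χ w (pd f 1 0) x y = ∑' kj : ℤ × ℤ,
        (χ (w * x - (kj.1 : ℝ), w * y - (kj.2 : ℝ)) *
          pd f 1 0 ((kj.1 : ℝ) / w, (kj.2 : ℝ) / w)) :=
      (Summable.tsum_prod' s3 s3.prod_factor).symm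
    have e4 : Gop χ w (pd f 0 1) x y = ∑' kj : ℤ × ℤ,
        (χ (w * x - (kj.1 : ℝ), w * y - (kj.2 : ℝ)) *
          pd f 0 1 ((kj.1 : ℝ) / w, (kj.2 : ℝ) / w)) :=
      (Summable.tsum_prod' s4 s4.prod_factor).symm
    have hrep : Sop χ w f x y - Gop χ w f x y - 1 / (2 * w) * Gop χ w (pd f 1 0) x y -
        1 / (2 * w) * Gop χ w (pd f 0 1) x y
        = ∑' kj : ℤ × ℤ,
          ((χ (w * x - (kj.1 : ℝ), w * y - (kj.2 : ℝ)) *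
            (w ^ 2 * ∫ u in ((kj.1 : ℝ) / w)..(((kj.1 : ℝ) + 1) / w),
              ∫ v in ((kj.2 : ℝ) / w)..(((kj.2 : ℝ) + 1) / w), f (u, v))
           - χ (w * x - (kj.1 : ℝ), w * y - (kj.2 : ℝ)) * f ((kj.1 : ℝ) / w, (kj.2 : ℝ) / w)
           - 1 / (2 * w) * (χ (w * x - (kj.1 : ℝ), w * y - (kj.2 : ℝ)) *
              pd f 1 0 ((kj.1 : ℝ) / w, (kj.2 : ℝ) / w)))
           - 1 / (2 * w) * (χ (w * x - (kj.1 : ℝ), w * y - (kj.2 : ℝ)) *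
              pd f 0 1 ((kj.1 : ℝ) / w, (kj.2 : ℝ) / w))) := by
      rw [e1, e2, e3, e4, ← tsum_mul_left, ← tsum_mul_left,
        ← Summable.tsum_sub s1 s2, ← Summable.tsum_sub (s1.sub s2) (s3.mul_left (1 / (2 * w))),
        ← Summable.tsum_sub ((s1.sub s2).sub (s3.mul_left (1 / (2 * w)))) (s4.mul_left (1 / (2 * w)))]
    rw [hrep]
    have sD : Summable (fun kj : ℤ × ℤ =>
        ((χ (w * x - (kj.1 : ℝ), w * y - (kj.2 : ℝ)) *
            (w ^ 2 * ∫ u in ((kj.1 : ℝ) / w)..(((kj.1 : ℝ) + 1) / w),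
              ∫ v in ((kj.2 : ℝ) / w)..(((kj.2 : ℝ) + 1) / w), f (u, v))
           - χ (w * x - (kj.1 : ℝ), w * y - (kj.2 : ℝ)) * f ((kj.1 : ℝ) / w, (kj.2 : ℝ) / w)
           - 1 / (2 * w) * (χ (w * x - (kj.1 : ℝ), w * y - (kj.2 : ℝ)) *
              pd f 1 0 ((kj.1 : ℝ) / w, (kj.2 : ℝ) / w)))
           - 1 / (2 * w) * (χ (w * x - (kj.1 : ℝ), w * y - (kj.2 : ℝ)) *
              pd f 0 1 ((kj.1 : ℝ) / w, (kj.2 : ℝ) / w)))) :=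
      ((s1.sub s2).sub (s3.mul_left (1 / (2 * w)))).sub (s4.mul_left (1 / (2 * w)))
    have h7nn : (0:ℝ) ≤ 7 * M / (12 * w ^ 2) := by
      apply div_nonneg (by linarith) (by positivity)
    calc |∑' kj : ℤ × ℤ, _| ≤ ∑' kj : ℤ × ℤ,
          |((χ (w * x - (kj.1 : ℝ), w * y - (kj.2 : ℝ)) *
            (w ^ 2 * ∫ u in ((kj.1 : ℝ) / w)..(((kj.1 : ℝ) + 1) / w),
              ∫ v in ((kj.2 : ℝ) / w)..(((kj.2 : ℝ) + 1) / w), f (u, v))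
           - χ (w * x - (kj.1 : ℝ), w * y - (kj.2 : ℝ)) * f ((kj.1 : ℝ) / w, (kj.2 : ℝ) / w)
           - 1 / (2 * w) * (χ (w * x - (kj.1 : ℝ), w * y - (kj.2 : ℝ)) *
              pd f 1 0 ((kj.1 : ℝ) / w, (kj.2 : ℝ) / w)))
           - 1 / (2 * w) * (χ (w * x - (kj.1 : ℝ), w * y - (kj.2 : ℝ)) *
              pd f 0 1 ((kj.1 : ℝ) / w, (kj.2 : ℝ) / w)))| := by
          exact
            norm_tsum_le_tsum_norm (f := fun kj : ℤ × ℤ =>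
              ((χ (w * x - (kj.1 : ℝ), w * y - (kj.2 : ℝ)) *
                (w ^ 2 * ∫ u in ((kj.1 : ℝ) / w)..(((kj.1 : ℝ) + 1) / w),
                  ∫ v in ((kj.2 : ℝ) / w)..(((kj.2 : ℝ) + 1) / w), f (u, v))
               - χ (w * x - (kj.1 : ℝ), w * y - (kj.2 : ℝ)) * f ((kj.1 : ℝ) / w, (kj.2 : ℝ) / w)
               - 1 / (2 * w) * (χ (w * x - (kj.1 : ℝ), w * y - (kj.2 : ℝ)) *
                  pd f 1 0 ((kj.1 : ℝ) / w, (kj.2 : ℝ) / w)))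
               - 1 / (2 * w) * (χ (w * x - (kj.1 : ℝ), w * y - (kj.2 : ℝ)) *
                  pd f 0 1 ((kj.1 : ℝ) / w, (kj.2 : ℝ) / w))))
              sD.norm
      _ ≤ ∑' kj : ℤ × ℤ,
            (|χ (w * x - (kj.1 : ℝ), w * y - (kj.2 : ℝ))| * (7 * M / (12 * w ^ 2))) := by
          apply Summable.tsum_le_tsum ?_ sD.abs (sc.mul_right _)
          intro kj
          have hfact : (χ (w * x - (kj.1 : ℝ), w * y - (kj.2 : ℝ)) *
              (w ^ 2 * ∫ u in ((kj.1 : ℝ) / w)..(((kj.1 : ℝ) + 1) / w),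
                ∫ v in ((kj.2 : ℝ) / w)..(((kj.2 : ℝ) + 1) / w), f (u, v))
             - χ (w * x - (kj.1 : ℝ), w * y - (kj.2 : ℝ)) * f ((kj.1 : ℝ) / w, (kj.2 : ℝ) / w)
             - 1 / (2 * w) * (χ (w * x - (kj.1 : ℝ), w * y - (kj.2 : ℝ)) *
                pd f 1 0 ((kj.1 : ℝ) / w, (kj.2 : ℝ) / w)))
             - 1 / (2 * w) * (χ (w * x - (kj.1 : ℝ), w * y - (kj.2 : ℝ)) *
                pd f 0 1 ((kj.1 : ℝ) / w, (kj.2 : ℝ) / w))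
              = χ (w * x - (kj.1 : ℝ), w * y - (kj.2 : ℝ)) *
                ((w ^ 2 * ∫ u in ((kj.1 : ℝ) / w)..(((kj.1 : ℝ) + 1) / w),
                  ∫ v in ((kj.2 : ℝ) / w)..(((kj.2 : ℝ) + 1) / w), f (u, v))
                 - f ((kj.1 : ℝ) / w, (kj.2 : ℝ) / w)
                 - 1 / (2 * w) * pd f 1 0 ((kj.1 : ℝ) / w, (kj.2 : ℝ) / w)
                 - 1 / (2 * w) * pd f 0 1 ((kj.1 : ℝ) / w, (kj.2 : ℝ) / w)) := by ring
          rw [hfact, abs_mul]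
          exact mul_le_mul_of_nonneg_left (hE kj) (abs_nonneg _)
      _ = (∑' kj : ℤ × ℤ, |χ (w * x - (kj.1 : ℝ), w * y - (kj.2 : ℝ))|) *
            (7 * M / (12 * w ^ 2)) := tsum_mul_right
      _ ≤ (absMoment χ 0 0).toReal * (7 * M / (12 * w ^ 2)) :=
          mul_le_mul_of_nonneg_right tc h7nn
      _ = 7 * M / (12 * w ^ 2) * (absMoment χ 0 0).toReal := mul_comm _ _
  refine ⟨main, ?_⟩
  apply squeeze_zero_norm' (a := fun w : ℝ => (7 * M * (absMoment χ 0 0).toReal / 12) * w⁻¹)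
  · filter_upwards [eventually_ge_atTop (1:ℝ)] with w hw1
    have hw : 0 < w := lt_of_lt_of_le one_pos hw1
    have hub : ∀ p : ℝ × ℝ,
        |w * (Sop χ w f p.1 p.2 - Gop χ w f p.1 p.2 -
          (1 / (2 * w)) * Gop χ w (pd f 1 0) p.1 p.2 -
          (1 / (2 * w)) * Gop χ w (pd f 0 1) p.1 p.2)|
        ≤ (7 * M * (absMoment χ 0 0).toReal / 12) * w⁻¹ := by
      intro p
      have h1 := (main w hw p.1 p.2).2.2.2.2
      rw [abs_mul, abs_of_pos hw]
      calc w * |Sop χ w f p.1 p.2 - Gop χ w f p.1 p.2 -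
            (1 / (2 * w)) * Gop χ w (pd f 1 0) p.1 p.2 -
            (1 / (2 * w)) * Gop χ w (pd f 0 1) p.1 p.2|
          ≤ w * (7 * M / (12 * w ^ 2) * (absMoment χ 0 0).toReal) :=
            mul_le_mul_of_nonneg_left h1 hw.le
        _ = (7 * M * (absMoment χ 0 0).toReal / 12) * w⁻¹ := by
            field_simp
    have hnn : (0:ℝ) ≤ (7 * M * (absMoment χ 0 0).toReal / 12) * w⁻¹ := by
      apply mul_nonneg (div_nonneg (by nlinarith) (by norm_num)) (inv_nonneg.mpr hw.le)
    have hsle := Real.iSup_le hub hnn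
    have hsnn : (0:ℝ) ≤ ⨆ p : ℝ × ℝ,
        |w * (Sop χ w f p.1 p.2 - Gop χ w f p.1 p.2 -
          (1 / (2 * w)) * Gop χ w (pd f 1 0) p.1 p.2 -
          (1 / (2 * w)) * Gop χ w (pd f 0 1) p.1 p.2)| :=
      Real.iSup_nonneg fun p => abs_nonneg _
    rw [Real.norm_eq_abs, abs_of_nonneg hsnn]
    exact hsle
  · have h := (tendsto_inv_atTop_zero (𝕜 := ℝ)).const_mul (7 * M * (absMoment χ 0 0).toReal / 12)
    simpa using h
end

section
/- Let χ satisfy M₂(χ) < ∞ and the moment condition of order 2 with constant c. Let f ∈ C²(ℝ²) and suppose ‖S_w f − f‖_∞ = o(w^{−1}) as w → ∞, i.e. w·‖S_w f − f‖_∞ → 0. Then ∂f/∂x (x,y) + ∂f/∂y (x,y) = 0 for every (x,y) ∈ ℝ²; consequently f(x,y) = g(y−x) for all (x,y) ∈ ℝ², where g(t) := f(0,t). -/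
open MeasureTheory Filter
open scoped ENNReal BigOperators Topology

lemma moment_summable (χ : ℝ × ℝ → ℝ) (p₁ p₂ : ℕ) (h : absMoment χ p₁ p₂ < ⊤) (u v : ℝ) :
    Summable (fun p : ℤ × ℤ =>
      |χ (u - (p.1 : ℝ), v - (p.2 : ℝ))| * |u - (p.1 : ℝ)| ^ p₁ * |v - (p.2 : ℝ)| ^ p₂) ∧
    (∑' p : ℤ × ℤ,
      |χ (u - (p.1 : ℝ), v - (p.2 : ℝ))| * |u - (p.1 : ℝ)| ^ p₁ * |v - (p.2 : ℝ)| ^ p₂)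
      ≤ (absMoment χ p₁ p₂).toReal := by
  set g : ℤ × ℤ → ℝ := fun p =>
    |χ (u - (p.1 : ℝ), v - (p.2 : ℝ))| * |u - (p.1 : ℝ)| ^ p₁ * |v - (p.2 : ℝ)| ^ p₂ with hg
  have hg0 : ∀ p, 0 ≤ g p := fun p => by positivity
  have hE : (∑' p : ℤ × ℤ, ENNReal.ofReal (g p)) ≤ absMoment χ p₁ p₂ := by
    rw [ENNReal.tsum_prod']
    calc (∑' k : ℤ, ∑' j : ℤ, ENNReal.ofReal (g (k, j)))
        ≤ ⨆ v' : ℝ, ∑' k : ℤ, ∑' j : ℤ,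
            ENNReal.ofReal (|χ (u - (k : ℝ), v' - (j : ℝ))| * |u - (k : ℝ)| ^ p₁ * |v' - (j : ℝ)| ^ p₂) :=
          le_iSup (fun v' : ℝ => ∑' k : ℤ, ∑' j : ℤ,
            ENNReal.ofReal (|χ (u - (k : ℝ), v' - (j : ℝ))| * |u - (k : ℝ)| ^ p₁ * |v' - (j : ℝ)| ^ p₂)) v
      _ ≤ absMoment χ p₁ p₂ :=
          le_iSup (fun u' : ℝ => ⨆ v' : ℝ, ∑' k : ℤ, ∑' j : ℤ,
            ENNReal.ofReal (|χ (u' - (k : ℝ), v' - (j : ℝ))| * |u' - (k : ℝ)| ^ p₁ * |v' - (j : ℝ)| ^ p₂)) u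
  have hne : (∑' p : ℤ × ℤ, ENNReal.ofReal (g p)) ≠ ⊤ := (lt_of_le_of_lt hE h).ne
  have hsum : Summable g := by
    have := ENNReal.summable_toReal hne
    simpa [ENNReal.toReal_ofReal (hg0 _)] using this
  refine ⟨hsum, ?_⟩
  have : (∑' p : ℤ × ℤ, g p) = (∑' p : ℤ × ℤ, ENNReal.ofReal (g p)).toReal := by
    rw [ENNReal.tsum_toReal_eq (fun a => ENNReal.ofReal_ne_top)]
    exact tsum_congr fun p => (ENNReal.toReal_ofReal (hg0 p)).symm
  rw [this]
  exact ENNReal.toReal_mono h.ne hE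

lemma absMoment_le (χ : ℝ × ℝ → ℝ) (p₁ p₂ η : ℕ) (h : p₁ + p₂ = η) :
    absMoment χ p₁ p₂ ≤ Mmoment χ η :=
  le_iSup (fun p : {p : ℕ × ℕ // p.1 + p.2 = η} => absMoment χ p.1.1 p.1.2) ⟨(p₁, p₂), h⟩

lemma far_of_not_mem (u : ℝ) (k : ℤ) (hk : k ∉ Finset.Icc (⌊u⌋ - 1) (⌊u⌋ + 2)) :
    1 ≤ |u - (k:ℝ)| := by
  rw [Finset.mem_Icc, not_and_or] at hk
  have h1 := Int.floor_le u
  have h2 := Int.lt_floor_add_one u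
  rcases hk with hk | hk
  · push_neg at hk
    have : (k : ℝ) ≤ (⌊u⌋ : ℝ) - 2 := by exact_mod_cast (by omega : k ≤ ⌊u⌋ - 2)
    exact le_trans (by linarith) (le_abs_self _)
  · push_neg at hk
    have : ((⌊u⌋ : ℝ) + 3) ≤ (k : ℝ) := by exact_mod_cast (by omega : ⌊u⌋ + 3 ≤ k)
    exact le_trans (by linarith) (neg_le_abs _)

lemma psi_bound (χ : ℝ × ℝ → ℝ) (hχb : ∃ C : ℝ, ∀ p, |χ p| ≤ C) (hM2 : Mmoment χ 2 < ⊤) :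
    ∃ K : ℝ, 0 ≤ K ∧ ∀ u v : ℝ,
      Summable (fun p : ℤ × ℤ =>
        |χ (u - (p.1 : ℝ), v - (p.2 : ℝ))| * (1 + |u - (p.1 : ℝ)| + |v - (p.2 : ℝ)|) ^ 2) ∧
      (∑' p : ℤ × ℤ,
        |χ (u - (p.1 : ℝ), v - (p.2 : ℝ))| * (1 + |u - (p.1 : ℝ)| + |v - (p.2 : ℝ)|) ^ 2) ≤ K := by
  obtain ⟨C0, hC0⟩ := hχb
  set C : ℝ := max C0 0 with hCdef
  have hC : ∀ p, |χ p| ≤ C := fun p => le_max_of_le_left (hC0 p)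
  have hCpos : 0 ≤ C := le_max_right _ _
  have h20 : absMoment χ 2 0 < ⊤ := lt_of_le_of_lt (absMoment_le χ 2 0 2 rfl) hM2
  have h02 : absMoment χ 0 2 < ⊤ := lt_of_le_of_lt (absMoment_le χ 0 2 2 rfl) hM2
  set m20 : ℝ := (absMoment χ 2 0).toReal
  set m02 : ℝ := (absMoment χ 0 2).toReal
  refine ⟨6 * m20 + 6 * m02 + 48 * C, by positivity, fun u v => ?_⟩
  obtain ⟨s20, b20⟩ := moment_summable χ 2 0 h20 u v
  obtain ⟨s02, b02⟩ := moment_summable χ 0 2 h02 u v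
  have s20' : Summable (fun p : ℤ × ℤ => |χ (u - (p.1 : ℝ), v - (p.2 : ℝ))| * |u - (p.1 : ℝ)| ^ 2) := by
    simpa using s20
  have b20' : (∑' p : ℤ × ℤ, |χ (u - (p.1 : ℝ), v - (p.2 : ℝ))| * |u - (p.1 : ℝ)| ^ 2) ≤ m20 := by
    simpa using b20
  have s02' : Summable (fun p : ℤ × ℤ => |χ (u - (p.1 : ℝ), v - (p.2 : ℝ))| * |v - (p.2 : ℝ)| ^ 2) := by
    simpa [mul_assoc] using s02
  have b02' : (∑' p : ℤ × ℤ, |χ (u - (p.1 : ℝ), v - (p.2 : ℝ))| * |v - (p.2 : ℝ)| ^ 2) ≤ m02 := by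
    simpa [mul_assoc] using b02
  set S : Finset (ℤ × ℤ) :=
    (Finset.Icc (⌊u⌋ - 1) (⌊u⌋ + 2)) ×ˢ (Finset.Icc (⌊v⌋ - 1) (⌊v⌋ + 2)) with hS
  set ind : ℤ × ℤ → ℝ := fun p => if p ∈ S then C else 0 with hind
  have sInd : Summable ind := summable_of_ne_finset_zero (s := S) (fun p hp => if_neg hp)
  have tInd : (∑' p : ℤ × ℤ, ind p) ≤ 16 * C := by
    rw [tsum_eq_sum (s := S) (fun p hp => if_neg hp)]
    have : ∀ p ∈ S, ind p = C := fun p hp => if_pos hp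
    rw [Finset.sum_congr rfl this, Finset.sum_const, nsmul_eq_mul]
    have hcard : (S.card : ℝ) ≤ 16 := by
      have : S.card = 16 := by
        rw [hS, Finset.card_product, Int.card_Icc, Int.card_Icc]
        have e1 : (⌊u⌋ + 2 + 1 - (⌊u⌋ - 1)) = 4 := by ring
        have e2 : (⌊v⌋ + 2 + 1 - (⌊v⌋ - 1)) = 4 := by ring
        rw [e1, e2]; rfl
      rw [this]; norm_num
    nlinarith
  have key : ∀ p : ℤ × ℤ,
      |χ (u - (p.1 : ℝ), v - (p.2 : ℝ))| * (1 + |u - (p.1 : ℝ)| + |v - (p.2 : ℝ)|) ^ 2 ≤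
      6 * (|χ (u - (p.1 : ℝ), v - (p.2 : ℝ))| * |u - (p.1 : ℝ)| ^ 2) +
      6 * (|χ (u - (p.1 : ℝ), v - (p.2 : ℝ))| * |v - (p.2 : ℝ)| ^ 2) + 3 * ind p := by
    intro p
    set X := |χ (u - (p.1 : ℝ), v - (p.2 : ℝ))| with hX
    set a := |u - (p.1 : ℝ)| with ha
    set b := |v - (p.2 : ℝ)| with hb
    have hX0 : 0 ≤ X := abs_nonneg _
    have ha0 : 0 ≤ a := abs_nonneg _
    have hb0 : 0 ≤ b := abs_nonneg _
    have hbase : X ≤ X * a ^ 2 + X * b ^ 2 + ind p := by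
      by_cases hp : p ∈ S
      · have : ind p = C := if_pos hp
        rw [this]
        nlinarith [hC (u - (p.1 : ℝ), v - (p.2 : ℝ)), mul_nonneg hX0 (sq_nonneg a),
          mul_nonneg hX0 (sq_nonneg b)]
      · have hip : ind p = 0 := if_neg hp
        rw [hS, Finset.mem_product, not_and_or] at hp
        rcases hp with hp | hp
        · have h1 : 1 ≤ a := far_of_not_mem u p.1 hp
          have h2 : (1:ℝ) ≤ a ^ 2 := by nlinarith
          nlinarith [hip, mul_nonneg hX0 (sq_nonneg b), mul_le_mul_of_nonneg_left h2 hX0]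
        · have h1 : 1 ≤ b := far_of_not_mem v p.2 hp
          have h2 : (1:ℝ) ≤ b ^ 2 := by nlinarith
          nlinarith [hip, mul_nonneg hX0 (sq_nonneg a), mul_le_mul_of_nonneg_left h2 hX0]
    nlinarith [mul_nonneg hX0 (sq_nonneg (a - b)), mul_nonneg hX0 (sq_nonneg (1 - a)),
      mul_nonneg hX0 (sq_nonneg (1 - b)), mul_nonneg hX0 (sq_nonneg (a + b)),
      mul_nonneg hX0 ha0, mul_nonneg hX0 hb0]
  have sg : Summable (fun p : ℤ × ℤ =>
      6 * (|χ (u - (p.1 : ℝ), v - (p.2 : ℝ))| * |u - (p.1 : ℝ)| ^ 2) +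
      6 * (|χ (u - (p.1 : ℝ), v - (p.2 : ℝ))| * |v - (p.2 : ℝ)| ^ 2) + 3 * ind p) :=
    ((s20'.mul_left 6).add (s02'.mul_left 6)).add (sInd.mul_left 3)
  have sψ : Summable (fun p : ℤ × ℤ =>
      |χ (u - (p.1 : ℝ), v - (p.2 : ℝ))| * (1 + |u - (p.1 : ℝ)| + |v - (p.2 : ℝ)|) ^ 2) :=
    Summable.of_nonneg_of_le (fun p => by positivity) key sg
  refine ⟨sψ, ?_⟩
  calc (∑' p : ℤ × ℤ, |χ (u - (p.1 : ℝ), v - (p.2 : ℝ))| * (1 + |u - (p.1 : ℝ)| + |v - (p.2 : ℝ)|) ^ 2)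
      ≤ ∑' p : ℤ × ℤ, (6 * (|χ (u - (p.1 : ℝ), v - (p.2 : ℝ))| * |u - (p.1 : ℝ)| ^ 2) +
          6 * (|χ (u - (p.1 : ℝ), v - (p.2 : ℝ))| * |v - (p.2 : ℝ)| ^ 2) + 3 * ind p) :=
        Summable.tsum_le_tsum key sψ sg
    _ = 6 * (∑' p : ℤ × ℤ, |χ (u - (p.1 : ℝ), v - (p.2 : ℝ))| * |u - (p.1 : ℝ)| ^ 2) +
        6 * (∑' p : ℤ × ℤ, |χ (u - (p.1 : ℝ), v - (p.2 : ℝ))| * |v - (p.2 : ℝ)| ^ 2) +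
        3 * (∑' p : ℤ × ℤ, ind p) := by
        rw [Summable.tsum_add ((s20'.mul_left 6).add (s02'.mul_left 6)) (sInd.mul_left 3),
          Summable.tsum_add (s20'.mul_left 6) (s02'.mul_left 6), tsum_mul_left, tsum_mul_left, tsum_mul_left]
    _ ≤ 6 * m20 + 6 * m02 + 48 * C := by
        have t20 : 0 ≤ (6:ℝ) := by norm_num
        nlinarith [b20', b02', tInd]

lemma lip1 (g g'' : ℝ → ℝ) (C : ℝ) (h2 : ∀ t, HasDerivAt g (g'' t) t) (hC : ∀ t, |g'' t| ≤ C)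
    (s t : ℝ) : |g s - g t| ≤ C * |s - t| := by
  have := Convex.norm_image_sub_le_of_norm_hasDerivWithin_le
    (f := g) (f' := g'') (C := C) (s := Set.univ)
    (fun x _ => (h2 x).hasDerivWithinAt) (fun x _ => by simpa [Real.norm_eq_abs] using hC x)
    convex_univ (Set.mem_univ t) (Set.mem_univ s)
  simpa [Real.norm_eq_abs] using this

lemma taylor1 (g g' : ℝ → ℝ) (C : ℝ) (hC : 0 ≤ C) (h1 : ∀ t, HasDerivAt g (g' t) t)
    (hLip : ∀ s t : ℝ, |g' s - g' t| ≤ C * |s - t|) (x u : ℝ) :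
    |g u - g x - g' x * (u - x)| ≤ C * |u - x| ^ 2 := by
  set h : ℝ → ℝ := fun t => g t - g x - g' x * (t - x) with hh
  have hd : ∀ t, HasDerivAt h (g' t - g' x) t := by
    intro t
    have h2 : HasDerivAt (fun t : ℝ => g' x * (t - x)) (g' x) t := by
      simpa using ((hasDerivAt_id t).sub_const x).const_mul (g' x)
    exact ((h1 t).sub_const (g x)).sub h2
  have hb : ∀ t ∈ Set.uIcc x u, ‖g' t - g' x‖ ≤ C * |u - x| := by
    intro t ht
    rw [Real.norm_eq_abs]
    refine le_trans (hLip t x) (mul_le_mul_of_nonneg_left ?_ hC)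
    rw [Set.uIcc_eq_union] at ht
    have h1 := le_abs_self (u - x)
    have h2 := neg_abs_le (u - x)
    have h3 := neg_le_abs (u - x)
    rcases ht with ht | ht <;> rw [Set.mem_Icc] at ht <;> rw [abs_le] <;>
      constructor <;> linarith [ht.1, ht.2]
  have := Convex.norm_image_sub_le_of_norm_hasDerivWithin_le
    (f := h) (f' := fun t => g' t - g' x) (C := C * |u - x|) (s := Set.uIcc x u)
    (fun t _ => (hd t).hasDerivWithinAt) hb (convex_uIcc x u) Set.left_mem_uIcc Set.right_mem_uIcc
  have hhx : h x = 0 := by simp [hh]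
  have hhu : h u = g u - g x - g' x * (u - x) := rfl
  rw [hhx, sub_zero, hhu, Real.norm_eq_abs] at this
  calc |g u - g x - g' x * (u - x)| ≤ C * |u - x| * ‖u - x‖ := this
    _ = C * |u - x| ^ 2 := by rw [Real.norm_eq_abs]; ring

section Derivs
variable {f : ℝ × ℝ → ℝ}

lemma curveX_hasDerivAt (t y : ℝ) : HasDerivAt (fun s : ℝ => (s, y)) ((1:ℝ), (0:ℝ)) t :=
  (hasDerivAt_id t).prodMk (hasDerivAt_const t y)

lemma curveY_hasDerivAt (x t : ℝ) : HasDerivAt (fun s : ℝ => (x, s)) ((0:ℝ), (1:ℝ)) t :=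
  (hasDerivAt_const t x).prodMk (hasDerivAt_id t)

lemma pX_eq_fderiv_s3 (hf : Differentiable ℝ f) (z : ℝ × ℝ) : pX f z = fderiv ℝ f z (1, 0) := by
  have h := (hf z).hasFDerivAt.comp_hasDerivAt z.1 (curveX_hasDerivAt z.1 z.2)
  exact h.deriv

lemma pY_eq_fderiv_s3 (hf : Differentiable ℝ f) (z : ℝ × ℝ) : pY f z = fderiv ℝ f z (0, 1) := by
  have h := (hf z).hasFDerivAt.comp_hasDerivAt z.2 (curveY_hasDerivAt z.1 z.2)
  exact h.deriv

lemma sliceX_hasDerivAt (hf : Differentiable ℝ f) (t y : ℝ) :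
    HasDerivAt (fun s => f (s, y)) (pX f (t, y)) t := by
  have h := (hf (t, y)).hasFDerivAt.comp_hasDerivAt t (curveX_hasDerivAt t y)
  rwa [← pX_eq_fderiv_s3 hf (t, y)] at h

lemma sliceY_hasDerivAt (hf : Differentiable ℝ f) (x t : ℝ) :
    HasDerivAt (fun s => f (x, s)) (pY f (x, t)) t := by
  have h := (hf (x, t)).hasFDerivAt.comp_hasDerivAt t (curveY_hasDerivAt x t)
  rwa [← pY_eq_fderiv_s3 hf (x, t)] at h

lemma pX_contDiff (hf : ContDiff ℝ 2 f) : ContDiff ℝ 1 (pX f) := by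
  have h1 : ContDiff ℝ 1 (fderiv ℝ f) := hf.fderiv_right (by norm_num)
  have h2 : ContDiff ℝ 1 (fun z : ℝ × ℝ => fderiv ℝ f z (1, 0)) := h1.clm_apply contDiff_const
  have : pX f = fun z : ℝ × ℝ => fderiv ℝ f z (1, 0) :=
    funext fun z => pX_eq_fderiv_s3 (hf.differentiable (by norm_num)) z
  rw [this]; exact h2

lemma pY_contDiff (hf : ContDiff ℝ 2 f) : ContDiff ℝ 1 (pY f) := by
  have h1 : ContDiff ℝ 1 (fderiv ℝ f) := hf.fderiv_right (by norm_num)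
  have h2 : ContDiff ℝ 1 (fun z : ℝ × ℝ => fderiv ℝ f z (0, 1)) := h1.clm_apply contDiff_const
  have : pY f = fun z : ℝ × ℝ => fderiv ℝ f z (0, 1) :=
    funext fun z => pY_eq_fderiv_s3 (hf.differentiable (by norm_num)) z
  rw [this]; exact h2

lemma sliceXX_hasDerivAt (hf : ContDiff ℝ 2 f) (t y : ℝ) :
    HasDerivAt (fun s => pX f (s, y)) (pd f 2 0 (t, y)) t := by
  have hd : DifferentiableAt ℝ (fun s : ℝ => pX f (s, y)) t :=
    ((pX_contDiff hf).differentiable one_ne_zero (t, y)).comp (f := fun s : ℝ => (s, y)) t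
      ((differentiableAt_id).prodMk (differentiableAt_const y))
  have := hd.hasDerivAt
  have hpd : pd f 2 0 (t, y) = deriv (fun s => pX f (s, y)) t := by
    simp only [pd, Function.iterate_succ, Function.iterate_zero, Function.comp_apply, id_eq,
      Function.iterate_one]
    rfl
  rwa [← hpd] at this

lemma sliceYY_hasDerivAt (hf : ContDiff ℝ 2 f) (x t : ℝ) :
    HasDerivAt (fun s => pY f (x, s)) (pd f 0 2 (x, t)) t := by
  have hd : DifferentiableAt ℝ (fun s : ℝ => pY f (x, s)) t :=
    ((pY_contDiff hf).differentiable one_ne_zero (x, t)).comp t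
      ((differentiableAt_const x).prodMk differentiableAt_id)
  have := hd.hasDerivAt
  have hpd : pd f 0 2 (x, t) = deriv (fun s => pY f (x, s)) t := by
    simp only [pd, Function.iterate_succ, Function.iterate_zero, Function.comp_apply, id_eq,
      Function.iterate_one]
    rfl
  rwa [← hpd] at this

lemma sliceXY_hasDerivAt (hf : ContDiff ℝ 2 f) (t y : ℝ) :
    HasDerivAt (fun s => pY f (s, y)) (pd f 1 1 (t, y)) t := by
  have hd : DifferentiableAt ℝ (fun s : ℝ => pY f (s, y)) t :=
    ((pY_contDiff hf).differentiable one_ne_zero (t, y)).comp (f := fun s : ℝ => (s, y)) t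
      ((differentiableAt_id).prodMk (differentiableAt_const y))
  have := hd.hasDerivAt
  have hpd : pd f 1 1 (t, y) = deriv (fun s => pY f (s, y)) t := by
    simp only [pd, Function.iterate_one]
    rfl
  rwa [← hpd] at this

lemma pd10 : pd f 1 0 = pX f := by simp [pd]
lemma pd01 : pd f 0 1 = pY f := by simp [pd]
lemma pd00 : pd f 0 0 = f := by simp [pd]

end Derivs

lemma taylor2 (f : ℝ × ℝ → ℝ) (hf : ContDiff ℝ 2 f)
    (hbd : ∀ i j : ℕ, i + j ≤ 2 → ∃ C : ℝ, ∀ z, |pd f i j z| ≤ C) :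
    ∃ C : ℝ, 0 ≤ C ∧ ∀ x y u v : ℝ,
      |f (u, v) - f (x, y) - pd f 1 0 (x, y) * (u - x) - pd f 0 1 (x, y) * (v - y)| ≤
        C * (|u - x| + |v - y|) ^ 2 := by
  have hdiff : Differentiable ℝ f := hf.differentiable (by norm_num)
  obtain ⟨C20, hC20⟩ := hbd 2 0 (by norm_num)
  obtain ⟨C02, hC02⟩ := hbd 0 2 (by norm_num)
  obtain ⟨C11, hC11⟩ := hbd 1 1 (by norm_num)
  have h20 : 0 ≤ C20 := le_trans (abs_nonneg _) (hC20 (0, 0))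
  have h02 : 0 ≤ C02 := le_trans (abs_nonneg _) (hC02 (0, 0))
  have h11 : 0 ≤ C11 := le_trans (abs_nonneg _) (hC11 (0, 0))
  refine ⟨C20 + C02 + C11, by positivity, fun x y u v => ?_⟩
  -- estimate 1 : vertical Taylor at u
  have e1 : |f (u, v) - f (u, y) - pY f (u, y) * (v - y)| ≤ C02 * |v - y| ^ 2 := by
    refine taylor1 (fun s => f (u, s)) (fun s => pY f (u, s)) C02 h02
      (fun t => sliceY_hasDerivAt hdiff u t) (fun s t => ?_) y v
    exact lip1 (fun s => pY f (u, s)) (fun s => pd f 0 2 (u, s)) C02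
      (fun t => sliceYY_hasDerivAt hf u t) (fun t => hC02 _) s t
  -- estimate 2 : Lipschitz of pY in first variable
  have e2 : |pY f (u, y) - pY f (x, y)| ≤ C11 * |u - x| :=
    lip1 (fun s => pY f (s, y)) (fun s => pd f 1 1 (s, y)) C11
      (fun t => sliceXY_hasDerivAt hf t y) (fun t => hC11 _) u x
  -- estimate 3 : horizontal Taylor at y
  have e3 : |f (u, y) - f (x, y) - pX f (x, y) * (u - x)| ≤ C20 * |u - x| ^ 2 := by
    refine taylor1 (fun s => f (s, y)) (fun s => pX f (s, y)) C20 h20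
      (fun t => sliceX_hasDerivAt hdiff t y) (fun s t => ?_) x u
    exact lip1 (fun s => pX f (s, y)) (fun s => pd f 2 0 (s, y)) C20
      (fun t => sliceXX_hasDerivAt hf t y) (fun t => hC20 _) s t
  rw [pd10, pd01]
  have hsplit : f (u, v) - f (x, y) - pX f (x, y) * (u - x) - pY f (x, y) * (v - y) =
      (f (u, v) - f (u, y) - pY f (u, y) * (v - y)) +
      (pY f (u, y) - pY f (x, y)) * (v - y) +
      (f (u, y) - f (x, y) - pX f (x, y) * (u - x)) := by ring
  rw [hsplit]
  have habs : |(pY f (u, y) - pY f (x, y)) * (v - y)| ≤ C11 * |u - x| * |v - y| := by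
    rw [abs_mul]
    exact mul_le_mul_of_nonneg_right e2 (abs_nonneg _)
  have ha0 : 0 ≤ |u - x| := abs_nonneg _
  have hb0 : 0 ≤ |v - y| := abs_nonneg _
  calc |(f (u, v) - f (u, y) - pY f (u, y) * (v - y)) + (pY f (u, y) - pY f (x, y)) * (v - y) +
        (f (u, y) - f (x, y) - pX f (x, y) * (u - x))|
      ≤ C02 * |v - y| ^ 2 + C11 * |u - x| * |v - y| + C20 * |u - x| ^ 2 := by
        refine le_trans (abs_add_le _ _) ?_
        refine add_le_add (le_trans (abs_add_le _ _) (add_le_add e1 habs)) e3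
    _ ≤ (C20 + C02 + C11) * (|u - x| + |v - y|) ^ 2 := by
        nlinarith [mul_nonneg (mul_nonneg h11 ha0) hb0, mul_nonneg h20 (mul_nonneg ha0 hb0),
          mul_nonneg h02 (mul_nonneg ha0 hb0), mul_nonneg h20 (sq_nonneg (|u - x| + |v - y|)),
          mul_nonneg h02 (sq_nonneg (|u - x| + |v - y|)), mul_nonneg h11 (sq_nonneg (|u - x| - |v - y|)),
          mul_nonneg h20 (sq_nonneg (|v - y|)), mul_nonneg h02 (sq_nonneg (|u - x|))]

open intervalIntegral in
lemma intlin (w : ℝ) (hw : 0 < w) (j : ℤ) (y : ℝ) :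
    ∫ v in ((j : ℝ)/w)..(((j : ℝ) + 1)/w), (v - y) = (1/2 - (w * y - j)) / w ^ 2 := by
  have hid : ∫ v in ((j : ℝ)/w)..(((j : ℝ) + 1)/w), v = ((((j : ℝ) + 1)/w) ^ 2 - ((j : ℝ)/w) ^ 2) / 2 := by
    exact integral_id
  rw [intervalIntegral.integral_sub ((by fun_prop : Continuous fun v : ℝ => v).intervalIntegrable _ _)
    intervalIntegrable_const, hid, intervalIntegral.integral_const]
  have hw' : w ≠ 0 := hw.ne'
  field_simp
  ring_nf
  field_simp

lemma cell (f : ℝ × ℝ → ℝ) (cont : Continuous f) (x y F₁ F₂ C : ℝ) (hC : 0 ≤ C)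
    (hρ : ∀ u v : ℝ, |f (u, v) - f (x, y) - F₁ * (u - x) - F₂ * (v - y)| ≤
      C * (|u - x| + |v - y|) ^ 2)
    (w : ℝ) (hw : 0 < w) (k j : ℤ) :
    |w ^ 2 * (∫ u in ((k : ℝ)/w)..(((k : ℝ) + 1)/w),
        ∫ v in ((j : ℝ)/w)..(((j : ℝ) + 1)/w), f (u, v))
      - f (x, y) - (F₁ * (1/2 - (w * x - k)) + F₂ * (1/2 - (w * y - j))) / w|
    ≤ 4 * C * (1 + |w * x - k| + |w * y - j|) ^ 2 / w ^ 2 := by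
  have hw' : w ≠ 0 := hw.ne'
  set A := |w * x - (k : ℝ)| with hA
  set B := |w * y - (j : ℝ)| with hB
  have hA0 : 0 ≤ A := abs_nonneg _
  have hB0 : 0 ≤ B := abs_nonneg _
  set ρ : ℝ → ℝ → ℝ := fun u v => f (u, v) - f (x, y) - F₁ * (u - x) - F₂ * (v - y) with hρdef
  have contρ : Continuous (Function.uncurry ρ) := by
    have : Function.uncurry ρ = fun p : ℝ × ℝ =>
        f p - f (x, y) - F₁ * (p.1 - x) - F₂ * (p.2 - y) := rfl
    rw [this]; fun_prop
  have contρ1 : ∀ u, Continuous (ρ u) := fun u => contρ.comp (Continuous.prodMk_right u)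
  -- inner integral identity
  have inner : ∀ u : ℝ, (∫ v in ((j : ℝ)/w)..(((j : ℝ) + 1)/w), f (u, v)) =
      (f (x, y) + F₁ * (u - x)) / w + F₂ * ((1/2 - (w * y - j)) / w ^ 2) +
      ∫ v in ((j : ℝ)/w)..(((j : ℝ) + 1)/w), ρ u v := by
    intro u
    have hfv : ∀ v : ℝ, f (u, v) = (f (x, y) + F₁ * (u - x)) + F₂ * (v - y) + ρ u v := by
      intro v; simp only [hρdef]; ring
    rw [intervalIntegral.integral_congr (g := fun v =>
      (f (x, y) + F₁ * (u - x)) + F₂ * (v - y) + ρ u v) (fun v _ => hfv v)]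
    rw [intervalIntegral.integral_add (intervalIntegrable_const.add
        ((by fun_prop : Continuous fun v : ℝ => F₂ * (v - y)).intervalIntegrable _ _))
      ((contρ1 u).intervalIntegrable _ _),
      intervalIntegral.integral_add intervalIntegrable_const
        ((by fun_prop : Continuous fun v : ℝ => F₂ * (v - y)).intervalIntegrable _ _),
      intervalIntegral.integral_const, intervalIntegral.integral_const_mul, intlin w hw j y]
    have h1 : ((j : ℝ) + 1)/w - (j : ℝ)/w = 1/w := by field_simp; ring
    rw [h1]
    have : (1/w) • (f (x, y) + F₁ * (u - x)) = (f (x, y) + F₁ * (u - x)) / w := by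
      rw [smul_eq_mul]; ring
    rw [this]
  set G : ℝ → ℝ := fun u => ∫ v in ((j : ℝ)/w)..(((j : ℝ) + 1)/w), ρ u v with hG
  have contG : Continuous G :=
    intervalIntegral.continuous_parametric_intervalIntegral_of_continuous' contρ _ _
  -- outer integral identity
  have outer : (∫ u in ((k : ℝ)/w)..(((k : ℝ) + 1)/w),
      ∫ v in ((j : ℝ)/w)..(((j : ℝ) + 1)/w), f (u, v)) =
      f (x, y) / w ^ 2 + F₁ * ((1/2 - (w * x - k)) / w ^ 2) / w +
      F₂ * ((1/2 - (w * y - j)) / w ^ 2) / w +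
      ∫ u in ((k : ℝ)/w)..(((k : ℝ) + 1)/w), G u := by
    rw [intervalIntegral.integral_congr (g := fun u =>
      ((f (x, y) + F₁ * (u - x)) / w + F₂ * ((1/2 - (w * y - j)) / w ^ 2)) + G u)
      (fun u _ => inner u)]
    rw [intervalIntegral.integral_add
      ((by fun_prop : Continuous fun u : ℝ =>
        (f (x, y) + F₁ * (u - x)) / w + F₂ * ((1/2 - (w * y - j)) / w ^ 2)).intervalIntegrable _ _)
      (contG.intervalIntegrable _ _)]
    have hsplit : ∀ u : ℝ, (f (x, y) + F₁ * (u - x)) / w + F₂ * ((1/2 - (w * y - j)) / w ^ 2) =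
        (f (x, y) / w + F₂ * ((1/2 - (w * y - j)) / w ^ 2)) + (F₁ / w) * (u - x) := by
      intro u; field_simp; ring
    rw [intervalIntegral.integral_congr (g := fun u =>
      (f (x, y) / w + F₂ * ((1/2 - (w * y - j)) / w ^ 2)) + (F₁ / w) * (u - x))
      (fun u _ => hsplit u)]
    rw [intervalIntegral.integral_add intervalIntegrable_const
      ((by fun_prop : Continuous fun u : ℝ => (F₁ / w) * (u - x)).intervalIntegrable _ _),
      intervalIntegral.integral_const, intervalIntegral.integral_const_mul, intlin w hw k x]
    have h1 : ((k : ℝ) + 1)/w - (k : ℝ)/w = 1/w := by field_simp; ring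
    rw [h1, smul_eq_mul]
    field_simp
    ring
  -- bound on G
  have hle : ∀ (m : ℤ), ((m : ℝ))/w ≤ ((m : ℝ) + 1)/w :=
    fun m => (div_le_div_iff_of_pos_right hw).mpr (by linarith)
  have hGb : ∀ u ∈ Set.uIoc ((k : ℝ)/w) (((k : ℝ) + 1)/w),
      ‖G u‖ ≤ (C * (2 * (1 + A + B) / w) ^ 2) * (1/w) := by
    intro u hu
    rw [Set.uIoc_of_le (hle k)] at hu
    have hux : |u - x| ≤ (1 + A) / w := by
      have h1 : |u - (k : ℝ)/w| ≤ 1/w := by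
        have h2 : ((k:ℝ)+1)/w - (k:ℝ)/w = 1/w := by field_simp; ring
        rw [abs_le]
        constructor
        · have h3 : (0:ℝ) ≤ 1/w := by positivity
          linarith [hu.1]
        · linarith [hu.2, h2]
      have h2 : |(k : ℝ)/w - x| = A / w := by
        rw [hA, show (k : ℝ)/w - x = -((w * x - k) / w) by field_simp; ring,
          abs_neg, abs_div, abs_of_pos hw]
      calc |u - x| ≤ |u - (k : ℝ)/w| + |(k : ℝ)/w - x| := abs_sub_le _ _ _
        _ ≤ 1/w + A/w := by rw [h2]; linarith
        _ = (1 + A)/w := by field_simp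
    have hGu : ∀ v ∈ Set.uIoc ((j : ℝ)/w) (((j : ℝ) + 1)/w),
        ‖ρ u v‖ ≤ C * (2 * (1 + A + B) / w) ^ 2 := by
      intro v hv
      rw [Set.uIoc_of_le (hle j)] at hv
      have hvy : |v - y| ≤ (1 + B) / w := by
        have h1 : |v - (j : ℝ)/w| ≤ 1/w := by
          have h2 : ((j:ℝ)+1)/w - (j:ℝ)/w = 1/w := by field_simp; ring
          rw [abs_le]
          constructor
          · have h3 : (0:ℝ) ≤ 1/w := by positivity
            linarith [hv.1]
          · linarith [hv.2, h2]
        have h2 : |(j : ℝ)/w - y| = B / w := by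
          rw [hB, show (j : ℝ)/w - y = -((w * y - j) / w) by field_simp; ring,
            abs_neg, abs_div, abs_of_pos hw]
        calc |v - y| ≤ |v - (j : ℝ)/w| + |(j : ℝ)/w - y| := abs_sub_le _ _ _
          _ ≤ 1/w + B/w := by rw [h2]; linarith
          _ = (1 + B)/w := by field_simp
      rw [Real.norm_eq_abs]
      refine le_trans (hρ u v) ?_
      have hsum : |u - x| + |v - y| ≤ 2 * (1 + A + B) / w := by
        have he : (1 + A)/w + (1 + B)/w = (2 + A + B)/w := by field_simp; ring
        have h3 : (2 + A + B)/w ≤ 2 * (1 + A + B)/w := (div_le_div_iff_of_pos_right hw).mpr (by linarith)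
        linarith [hux, hvy, he, h3]
      have h4 : (0:ℝ) ≤ |u - x| + |v - y| := by positivity
      have h5 : (|u - x| + |v - y|) ^ 2 ≤ (2 * (1 + A + B) / w) ^ 2 := by nlinarith
      exact mul_le_mul_of_nonneg_left h5 hC
    calc ‖G u‖ ≤ (C * (2 * (1 + A + B) / w) ^ 2) * |((j : ℝ) + 1)/w - (j : ℝ)/w| :=
          intervalIntegral.norm_integral_le_of_norm_le_const hGu
      _ = (C * (2 * (1 + A + B) / w) ^ 2) * (1/w) := by
          rw [show ((j : ℝ) + 1)/w - (j : ℝ)/w = 1/w by field_simp; ring, abs_of_pos (by positivity)]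
  have hIG : |∫ u in ((k : ℝ)/w)..(((k : ℝ) + 1)/w), G u| ≤
      (C * (2 * (1 + A + B) / w) ^ 2) * (1/w) * (1/w) := by
    have := intervalIntegral.norm_integral_le_of_norm_le_const hGb
    rw [Real.norm_eq_abs] at this
    calc |∫ u in ((k : ℝ)/w)..(((k : ℝ) + 1)/w), G u|
        ≤ (C * (2 * (1 + A + B) / w) ^ 2) * (1/w) * |((k : ℝ) + 1)/w - (k : ℝ)/w| := this
      _ = (C * (2 * (1 + A + B) / w) ^ 2) * (1/w) * (1/w) := by
          rw [show ((k : ℝ) + 1)/w - (k : ℝ)/w = 1/w by field_simp; ring, abs_of_pos (by positivity)]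
  have hmain : w ^ 2 * (∫ u in ((k : ℝ)/w)..(((k : ℝ) + 1)/w),
        ∫ v in ((j : ℝ)/w)..(((j : ℝ) + 1)/w), f (u, v))
      - f (x, y) - (F₁ * (1/2 - (w * x - k)) + F₂ * (1/2 - (w * y - j))) / w =
      w ^ 2 * ∫ u in ((k : ℝ)/w)..(((k : ℝ) + 1)/w), G u := by
    rw [outer]
    field_simp
    ring
  rw [hmain, abs_mul, abs_of_pos (by positivity : (0:ℝ) < w ^ 2)]
  calc w ^ 2 * |∫ u in ((k : ℝ)/w)..(((k : ℝ) + 1)/w), G u|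
      ≤ w ^ 2 * ((C * (2 * (1 + A + B) / w) ^ 2) * (1/w) * (1/w)) :=
        mul_le_mul_of_nonneg_left hIG (by positivity)
    _ = 4 * C * (1 + A + B) ^ 2 / w ^ 2 := by field_simp; ring

lemma dom {e ψ : ℤ × ℤ → ℝ} (hψ : Summable ψ) (h : ∀ p, |e p| ≤ ψ p) : Summable e :=
  (hψ.of_nonneg_of_le (fun p => abs_nonneg _) h).of_abs

lemma key (χ : ℝ × ℝ → ℝ) (hχb : ∃ C : ℝ, ∀ p, |χ p| ≤ C) (hpart : PartitionOfUnity2 χ)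
    (c : ℝ) (hM2 : Mmoment χ 2 < ⊤) (hmom : MomentCondition χ 2 c)
    (f : ℝ × ℝ → ℝ) (hf : ContDiff ℝ 2 f)
    (hbd : ∀ i j : ℕ, i + j ≤ 2 → ∃ C : ℝ, ∀ z, |pd f i j z| ≤ C) :
    ∃ K : ℝ, 0 ≤ K ∧ ∀ w : ℝ, 1 ≤ w → ∀ x y : ℝ,
      |Sop χ w f x y - f (x, y) - (pd f 1 0 (x, y) + pd f 0 1 (x, y)) / (2 * w)| ≤ K / w ^ 2 := by
  obtain ⟨K₀, hK₀, hψ⟩ := psi_bound χ hχb hM2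
  obtain ⟨C, hC, htay⟩ := taylor2 f hf hbd
  obtain ⟨F0, hF0'⟩ := hbd 0 0 (by norm_num)
  have hFf : ∀ z, |f z| ≤ F0 := by
    intro z; have := hF0' z; rwa [pd00] at this
  have hF0 : 0 ≤ F0 := le_trans (abs_nonneg _) (hFf (0, 0))
  refine ⟨4 * C * K₀, by positivity, fun w hw x y => ?_⟩
  have hw0 : 0 < w := lt_of_lt_of_le one_pos hw
  have hw' : w ≠ 0 := hw0.ne'
  obtain ⟨sψ, bψ⟩ := hψ (w * x) (w * y)
  set F₁ := pd f 1 0 (x, y) with hF₁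
  set F₂ := pd f 0 1 (x, y) with hF₂
  set ψ : ℤ × ℤ → ℝ := fun p =>
    |χ (w * x - (p.1 : ℝ), w * y - (p.2 : ℝ))| *
      (1 + |w * x - (p.1 : ℝ)| + |w * y - (p.2 : ℝ)|) ^ 2 with hψdef
  set χ' : ℤ × ℤ → ℝ := fun p => χ (w * x - (p.1 : ℝ), w * y - (p.2 : ℝ)) with hχ'
  set I : ℤ × ℤ → ℝ := fun p =>
    w ^ 2 * ∫ u in ((p.1 : ℝ) / w)..(((p.1 : ℝ) + 1) / w),
      ∫ v in ((p.2 : ℝ) / w)..(((p.2 : ℝ) + 1) / w), f (u, v) with hI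
  have habpos : ∀ p : ℤ × ℤ, 0 ≤ |w * x - (p.1 : ℝ)| ∧ 0 ≤ |w * y - (p.2 : ℝ)| :=
    fun p => ⟨abs_nonneg _, abs_nonneg _⟩
  have hψ1 : ∀ p, |χ' p| ≤ ψ p := by
    intro p
    have ⟨ha, hb⟩ := habpos p
    have h1 : (1:ℝ) ≤ (1 + |w * x - (p.1 : ℝ)| + |w * y - (p.2 : ℝ)|) ^ 2 := by nlinarith
    simpa [hψdef, hχ'] using le_mul_of_one_le_right (abs_nonneg _) h1
  have hψa : ∀ p, |χ' p * (w * x - (p.1 : ℝ))| ≤ ψ p := by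
    intro p
    have ⟨ha, hb⟩ := habpos p
    rw [abs_mul]
    have h1 : |w * x - (p.1 : ℝ)| ≤ (1 + |w * x - (p.1 : ℝ)| + |w * y - (p.2 : ℝ)|) ^ 2 := by
      nlinarith
    exact mul_le_mul_of_nonneg_left h1 (abs_nonneg _)
  have hψb : ∀ p, |χ' p * (w * y - (p.2 : ℝ))| ≤ ψ p := by
    intro p
    have ⟨ha, hb⟩ := habpos p
    rw [abs_mul]
    have h1 : |w * y - (p.2 : ℝ)| ≤ (1 + |w * x - (p.1 : ℝ)| + |w * y - (p.2 : ℝ)|) ^ 2 := by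
      nlinarith
    exact mul_le_mul_of_nonneg_left h1 (abs_nonneg _)
  have hIbd : ∀ p : ℤ × ℤ, |I p| ≤ F0 := by
    intro p
    have hinner : ∀ u ∈ Set.uIoc ((p.1 : ℝ)/w) (((p.1 : ℝ) + 1)/w),
        ‖∫ v in ((p.2 : ℝ) / w)..(((p.2 : ℝ) + 1) / w), f (u, v)‖ ≤ F0 * (1/w) := by
      intro u _
      calc ‖∫ v in ((p.2 : ℝ) / w)..(((p.2 : ℝ) + 1) / w), f (u, v)‖
          ≤ F0 * |((p.2 : ℝ) + 1)/w - (p.2 : ℝ)/w| :=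
            intervalIntegral.norm_integral_le_of_norm_le_const
              (fun v _ => by rw [Real.norm_eq_abs]; exact hFf (u, v))
        _ = F0 * (1/w) := by
            rw [show ((p.2 : ℝ) + 1)/w - (p.2 : ℝ)/w = 1/w by field_simp; ring,
              abs_of_pos (by positivity)]
    have houter := intervalIntegral.norm_integral_le_of_norm_le_const hinner
    rw [Real.norm_eq_abs] at houter
    have h2 : |∫ u in ((p.1 : ℝ)/w)..(((p.1 : ℝ) + 1)/w),
        ∫ v in ((p.2 : ℝ) / w)..(((p.2 : ℝ) + 1) / w), f (u, v)| ≤ F0 * (1/w) * (1/w) := by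
      calc _ ≤ F0 * (1/w) * |((p.1 : ℝ) + 1)/w - (p.1 : ℝ)/w| := houter
        _ = F0 * (1/w) * (1/w) := by
            rw [show ((p.1 : ℝ) + 1)/w - (p.1 : ℝ)/w = 1/w by field_simp; ring,
              abs_of_pos (by positivity)]
    rw [hI]
    simp only [abs_mul, abs_of_pos (by positivity : (0:ℝ) < w ^ 2)]
    calc w ^ 2 * |∫ u in ((p.1 : ℝ)/w)..(((p.1 : ℝ) + 1)/w),
          ∫ v in ((p.2 : ℝ) / w)..(((p.2 : ℝ) + 1) / w), f (u, v)|
        ≤ w ^ 2 * (F0 * (1/w) * (1/w)) := mul_le_mul_of_nonneg_left h2 (by positivity)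
      _ = F0 := by field_simp
  have s1 : Summable (fun p => χ' p * I p) := by
    refine dom (sψ.mul_left F0) (fun p => ?_)
    rw [abs_mul]
    calc |χ' p| * |I p| ≤ ψ p * F0 :=
          mul_le_mul (hψ1 p) (hIbd p) (abs_nonneg _) (by positivity)
      _ = F0 * ψ p := by ring
  have s2 : Summable χ' := dom sψ hψ1
  have s3 : Summable (fun p => χ' p * (w * x - (p.1 : ℝ))) := dom sψ hψa
  have s4 : Summable (fun p => χ' p * (w * y - (p.2 : ℝ))) := dom sψ hψb
  -- identities
  have t1 : ∑' p : ℤ × ℤ, χ' p * I p = Sop χ w f x y := by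
    rw [Summable.tsum_prod s1]; rfl
  have t2 : ∑' p : ℤ × ℤ, χ' p = 1 := by
    rw [Summable.tsum_prod s2]; exact hpart (w * x) (w * y)
  have t3 : ∑' p : ℤ × ℤ, χ' p * (w * x - (p.1 : ℝ)) = 0 := by
    rw [Summable.tsum_prod s3]
    have hm := hmom.1 (w * x) (w * y) 1 0 (by norm_num) (by norm_num)
    simpa using hm
  have t4 : ∑' p : ℤ × ℤ, χ' p * (w * y - (p.2 : ℝ)) = 0 := by
    rw [Summable.tsum_prod s4]
    have hm := hmom.1 (w * x) (w * y) 0 1 (by norm_num) (by norm_num)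
    simpa using hm
  -- remainder
  set E : ℤ × ℤ → ℝ := fun p => χ' p *
    (I p - f (x, y) - (F₁ * (1/2 - (w * x - (p.1 : ℝ))) + F₂ * (1/2 - (w * y - (p.2 : ℝ)))) / w)
    with hE
  have hD : ∀ p : ℤ × ℤ,
      |I p - f (x, y) - (F₁ * (1/2 - (w * x - (p.1 : ℝ))) + F₂ * (1/2 - (w * y - (p.2 : ℝ)))) / w|
      ≤ 4 * C * (1 + |w * x - (p.1 : ℝ)| + |w * y - (p.2 : ℝ)|) ^ 2 / w ^ 2 := by
    intro p
    exact cell f hf.continuous x y F₁ F₂ C hC (fun u v => htay x y u v) w hw0 p.1 p.2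
  have hEb : ∀ p, |E p| ≤ (4 * C / w ^ 2) * ψ p := by
    intro p
    rw [hE]
    simp only []
    rw [abs_mul]
    calc |χ' p| * |I p - f (x, y) -
          (F₁ * (1/2 - (w * x - (p.1 : ℝ))) + F₂ * (1/2 - (w * y - (p.2 : ℝ)))) / w|
        ≤ |χ' p| * (4 * C * (1 + |w * x - (p.1 : ℝ)| + |w * y - (p.2 : ℝ)|) ^ 2 / w ^ 2) :=
          mul_le_mul_of_nonneg_left (hD p) (abs_nonneg _)
      _ = (4 * C / w ^ 2) * ψ p := by rw [hψdef]; ring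
  have sE : Summable E := dom (sψ.mul_left (4 * C / w ^ 2)) hEb
  have sEabs : Summable (fun p => |E p|) :=
    (sψ.mul_left (4 * C / w ^ 2)).of_nonneg_of_le (fun p => abs_nonneg _) hEb
  have tEbd : |∑' p : ℤ × ℤ, E p| ≤ (4 * C * K₀) / w ^ 2 := by
    have h1 : ‖∑' p : ℤ × ℤ, E p‖ ≤ ∑' p : ℤ × ℤ, ‖E p‖ := by
      apply norm_tsum_le_tsum_norm
      simpa [Real.norm_eq_abs] using sEabs
    rw [Real.norm_eq_abs] at h1
    calc |∑' p : ℤ × ℤ, E p| ≤ ∑' p : ℤ × ℤ, ‖E p‖ := h1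
      _ = ∑' p : ℤ × ℤ, |E p| := by simp [Real.norm_eq_abs]
      _ ≤ ∑' p : ℤ × ℤ, (4 * C / w ^ 2) * ψ p :=
          Summable.tsum_le_tsum hEb sEabs (sψ.mul_left _)
      _ = (4 * C / w ^ 2) * ∑' p : ℤ × ℤ, ψ p := tsum_mul_left
      _ ≤ (4 * C / w ^ 2) * K₀ := mul_le_mul_of_nonneg_left bψ (by positivity)
      _ = (4 * C * K₀) / w ^ 2 := by ring
  -- expansion of E
  have hexp : E = fun p => (χ' p * I p) - ((f (x, y) + (F₁ + F₂) / (2 * w)) * χ' p) +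
      ((F₁ / w) * (χ' p * (w * x - (p.1 : ℝ))) + (F₂ / w) * (χ' p * (w * y - (p.2 : ℝ)))) := by
    funext p
    rw [hE]
    field_simp
    ring
  have tE : ∑' p : ℤ × ℤ, E p =
      Sop χ w f x y - (f (x, y) + (F₁ + F₂) / (2 * w)) := by
    rw [hexp]
    rw [Summable.tsum_add (s1.sub (s2.mul_left _)) ((s3.mul_left _).add (s4.mul_left _)),
      Summable.tsum_sub s1 (s2.mul_left _), Summable.tsum_add (s3.mul_left _) (s4.mul_left _),
      tsum_mul_left, tsum_mul_left, tsum_mul_left, t1, t2, t3, t4]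
    ring
  have : Sop χ w f x y - f (x, y) - (F₁ + F₂) / (2 * w) = ∑' p : ℤ × ℤ, E p := by
    rw [tE]; ring
  rw [this]
  calc |∑' p : ℤ × ℤ, E p| ≤ (4 * C * K₀) / w ^ 2 := tEbd
    _ = 4 * C * K₀ / w ^ 2 := by ring


/-- inverse result. If ‖S_w f − f‖_∞ = o(w⁻¹) then f_x + f_y = 0 and
f(x,y) = g(y−x) with g(t) = f(0,t). -/
theorem statement3 (χ : ℝ × ℝ → ℝ) (hχc : Continuous χ) (hχb : ∃ C : ℝ, ∀ p, |χ p| ≤ C)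
    (hpart : PartitionOfUnity2 χ)
    (c : ℝ) (hM2 : Mmoment χ 2 < ⊤) (hmom : MomentCondition χ 2 c)
    (f : ℝ × ℝ → ℝ) (hf : ContDiff ℝ 2 f)
    (hbd : ∀ i j : ℕ, i + j ≤ 2 → ∃ C : ℝ, ∀ z, |pd f i j z| ≤ C)
    (hsmall : Tendsto (fun w : ℝ => w * ⨆ p : ℝ × ℝ, |Sop χ w f p.1 p.2 - f p|)
      atTop (nhds 0)) :
    (∀ x y : ℝ, pd f 1 0 (x, y) + pd f 0 1 (x, y) = 0) ∧
    (∀ x y : ℝ, f (x, y) = f (0, y - x)) := by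
  obtain ⟨K, hK, hkey⟩ := key χ hχb hpart c hM2 hmom f hf hbd

  obtain ⟨B1, hB1⟩ := hbd 1 0 (by norm_num)
  obtain ⟨B2, hB2⟩ := hbd 0 1 (by norm_num)
  have hB10 : 0 ≤ B1 := le_trans (abs_nonneg _) (hB1 (0, 0))
  have hB20 : 0 ≤ B2 := le_trans (abs_nonneg _) (hB2 (0, 0))
  have h1 : ∀ x y : ℝ, pd f 1 0 (x, y) + pd f 0 1 (x, y) = 0 := by
    intro x y
    set L := pd f 1 0 (x, y) + pd f 0 1 (x, y) with hL
    have habs : ∀ w : ℝ, 1 ≤ w →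
        |L| ≤ 2 * (w * ⨆ p : ℝ × ℝ, |Sop χ w f p.1 p.2 - f p|) + 2 * K / w := by
      intro w hw
      have hw0 : 0 < w := lt_of_lt_of_le one_pos hw
      have hbdd : BddAbove (Set.range fun p : ℝ × ℝ => |Sop χ w f p.1 p.2 - f p|) := by
        refine ⟨K / w ^ 2 + (B1 + B2) / (2 * w), ?_⟩
        rintro _ ⟨p, rfl⟩
        have hp := hkey w hw p.1 p.2
        have htr : |Sop χ w f p.1 p.2 - f (p.1, p.2)| ≤
            |Sop χ w f p.1 p.2 - f (p.1, p.2) - (pd f 1 0 (p.1, p.2) + pd f 0 1 (p.1, p.2)) / (2 * w)|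
            + |(pd f 1 0 (p.1, p.2) + pd f 0 1 (p.1, p.2)) / (2 * w)| := by
          have := abs_add_le (Sop χ w f p.1 p.2 - f (p.1, p.2) -
            (pd f 1 0 (p.1, p.2) + pd f 0 1 (p.1, p.2)) / (2 * w))
            ((pd f 1 0 (p.1, p.2) + pd f 0 1 (p.1, p.2)) / (2 * w))
          simpa using this
        have hnum : |(pd f 1 0 (p.1, p.2) + pd f 0 1 (p.1, p.2)) / (2 * w)| ≤
            (B1 + B2) / (2 * w) := by
          rw [abs_div, abs_of_pos (by positivity : (0:ℝ) < 2 * w)]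
          apply div_le_div_of_nonneg_right ?h (by positivity)
          case h => exact le_trans (abs_add_le _ _) (add_le_add (hB1 _) (hB2 _))
        calc |Sop χ w f p.1 p.2 - f p| = |Sop χ w f p.1 p.2 - f (p.1, p.2)| := rfl
          _ ≤ _ := htr
          _ ≤ K / w ^ 2 + (B1 + B2) / (2 * w) := add_le_add hp hnum
      have hle : |Sop χ w f x y - f (x, y)| ≤
          ⨆ p : ℝ × ℝ, |Sop χ w f p.1 p.2 - f p| :=
        le_ciSup hbdd ((x, y) : ℝ × ℝ)
      have hk := hkey w hw x y
      have htri : |L / (2 * w)| ≤ K / w ^ 2 + |Sop χ w f x y - f (x, y)| := by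
        have := abs_sub_abs_le_abs_sub (Sop χ w f x y - f (x, y))
          (Sop χ w f x y - f (x, y) - L / (2 * w))
        have h2 : |L / (2 * w)| ≤ |Sop χ w f x y - f (x, y)| +
            |Sop χ w f x y - f (x, y) - L / (2 * w)| := by
          have h3 : L / (2 * w) = (Sop χ w f x y - f (x, y)) -
              (Sop χ w f x y - f (x, y) - L / (2 * w)) := by ring
          exact le_trans (le_of_eq (congrArg abs h3))
            (abs_sub (Sop χ w f x y - f (x, y)) (Sop χ w f x y - f (x, y) - L / (2 * w)))
        linarith [hk]
      have heq : |L| = 2 * w * |L / (2 * w)| := by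
        rw [abs_div, abs_of_pos (by positivity : (0:ℝ) < 2 * w)]
        field_simp
      rw [heq]
      calc 2 * w * |L / (2 * w)| ≤ 2 * w * (K / w ^ 2 + |Sop χ w f x y - f (x, y)|) :=
            mul_le_mul_of_nonneg_left htri (by positivity)
        _ ≤ 2 * w * (K / w ^ 2 + ⨆ p : ℝ × ℝ, |Sop χ w f p.1 p.2 - f p|) := by
            have := add_le_add_right hle (K / w ^ 2)
            exact mul_le_mul_of_nonneg_left this (by positivity)
        _ = 2 * (w * ⨆ p : ℝ × ℝ, |Sop χ w f p.1 p.2 - f p|) + 2 * K / w := by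
            field_simp; ring
    have hT : Tendsto (fun w : ℝ =>
        2 * (w * ⨆ p : ℝ × ℝ, |Sop χ w f p.1 p.2 - f p|) + 2 * K / w) atTop (nhds 0) := by
      have ha := hsmall.const_mul 2
      have hb : Tendsto (fun w : ℝ => 2 * K / w) atTop (nhds 0) :=
        tendsto_const_nhds.div_atTop tendsto_id
      simpa using ha.add hb
    have hL0 : |L| ≤ 0 := ge_of_tendsto hT (eventually_atTop.2 ⟨1, habs⟩)
    exact abs_nonpos_iff.mp hL0
  refine ⟨h1, fun x y => ?_⟩
  -- part 2
  have hdiff : Differentiable ℝ f := hf.differentiable (by norm_num)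
  set φ : ℝ → ℝ := fun t => f (t, (y - x) + t) with hφ
  have hder : ∀ t : ℝ, HasDerivAt φ 0 t := by
    intro t
    have hcurve : HasDerivAt (fun t : ℝ => (t, (y - x) + t)) ((1:ℝ), (1:ℝ)) t :=
      (hasDerivAt_id t).prodMk ((hasDerivAt_id t).const_add (y - x))
    have hc := (hdiff (t, (y - x) + t)).hasFDerivAt.comp_hasDerivAt t hcurve
    have hval : fderiv ℝ f (t, (y - x) + t) (1, 1) = 0 := by
      have hsum : ((1:ℝ), (1:ℝ)) = ((1:ℝ), (0:ℝ)) + ((0:ℝ), (1:ℝ)) := by simp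
      rw [hsum, map_add, ← pX_eq_fderiv_s3 hdiff, ← pY_eq_fderiv_s3 hdiff, ← pd10, ← pd01]
      exact h1 t ((y - x) + t)
    rwa [hval] at hc
  have hconst : ∀ s t : ℝ, φ s = φ t :=
    is_const_of_deriv_eq_zero (fun t => (hder t).differentiableAt)
      (fun t => (hder t).deriv)
  have h2 : f (x, y) = φ x := by
    rw [hφ]
    norm_num
  have h3 : φ 0 = f (0, y - x) := by
    rw [hφ]
    norm_num
  rw [h2, hconst x 0, h3]
end
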